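/- arXiv:2512.10064 — 7 statements merged into one kernel-verified Lean document; each statement's English description precedes it below -/
import Mathlib

section
/- Let X be a connected, locally path-connected topological space with basepoint x₀, and let p : (E, e₀) → (X, x₀) and q : (F, f₀) → (X, x₀) be pointed connected coverings of (X, x₀). If p_*(π₁(E, e₀)) = q_*(π₁(F, f₀)) as subgroups of π₁(X, x₀), then there exists a homeomorphism h : E ≃ₜ F with q ∘ h = p and h(e₀) = f₀. -/
open CategoryTheory

universe u

attribute [local instance] Path.Homotopic.setoid

/-- The homomorphism `p₊ : π₁(E, e₀) →* π₁(X, p e₀)` induced on fundamental groups by a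
continuous map `p`, obtained from the fundamental groupoid functor. -/
noncomputable def piOneMap {E X : Type u} [TopologicalSpace E] [TopologicalSpace X]
    (p : E → X) (hp : Continuous p) (e₀ : E) :
    FundamentalGroup E e₀ →* FundamentalGroup X (p e₀) :=
  Functor.mapEnd
    (FundamentalGroupoid.fundamentalGroupoidFunctor.map
      (X := TopCat.of E) (Y := TopCat.of X) (TopCat.ofHom ⟨p, hp⟩))
    (X := FundamentalGroupoid.mk e₀)

/-- The element of the fundamental group determined by a loop. -/
noncomputable def loopClass {X : Type u} [TopologicalSpace X] {x : X} (γ : Path x x) :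
    FundamentalGroup X x :=
  FundamentalGroup.fromPath (X := TopCat.of X) ⟦γ⟧

/-- `piOneMap` indeed sends the homotopy class of a loop `γ` to the class of `p ∘ γ`. -/
theorem piOneMap_loopClass {E X : Type u} [TopologicalSpace E] [TopologicalSpace X]
    (p : E → X) (hp : Continuous p) (e₀ : E) (γ : Path e₀ e₀) :
    piOneMap p hp e₀ (loopClass γ) = loopClass (γ.map hp) :=
  rfl

open Set Topology

section Lift
variable {E X : Type*} [TopologicalSpace E] [TopologicalSpace X] {p : E → X}

theorem IsCoveringMap.nonempty_fiber_of_mem (hp : IsCoveringMap p) {x : X} {e : E}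
    (he : p e ∈ (hp x).2.choose) : Nonempty (p ⁻¹' {x}) :=
  ⟨(((hp x).2.choose_spec.2.2.2.choose) ⟨e, he⟩).2⟩

theorem lift_exists_real (hp : IsCoveringMap p) {γ : ℝ → X} (hγ : Continuous γ)
    (e : E) (he : p e = γ 0) :
    ∃ Γ : ℝ → E, Continuous Γ ∧ Γ 0 = e ∧ ∀ t ∈ Icc (0:ℝ) 1, p (Γ t) = γ t := by
  classical
  set T : ∀ x : X, [Nonempty (p ⁻¹' {x})] → Bundle.Trivialization (p ⁻¹' {x}) p := fun x => (hp x).toTrivialization with hT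
  have hTmem : ∀ x : X, x ∈ (hp x).2.choose := fun x => (hp x).2.choose_spec.1
  obtain ⟨δ, δpos, hδ⟩ := lebesgue_number_lemma_of_metric (isCompact_Icc (a := (0:ℝ)) (b := 1))
    (c := fun x : X => γ ⁻¹' (hp x).2.choose)
    (fun x => (hp x).2.choose_spec.2.1.preimage hγ)
    (fun t _ => mem_iUnion.2 ⟨γ t, hTmem (γ t)⟩)
  obtain ⟨n, hn⟩ := exists_nat_one_div_lt δpos
  set m : ℕ := n + 1 with hmdef
  have hm : (1 : ℝ) / m < δ := by exact_mod_cast hn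
  have hmpos : (0:ℝ) < m := by positivity
  have key : ∀ i : ℕ, i ≤ m → ∃ Γ : ℝ → E, Continuous Γ ∧ Γ 0 = e ∧
      ∀ t ∈ Icc (0:ℝ) ((i : ℝ)/m), p (Γ t) = γ t := by
    intro i hi
    induction i with
    | zero =>
      refine ⟨fun _ => e, continuous_const, rfl, ?_⟩
      rintro t ⟨h0, h1⟩
      have : t = 0 := le_antisymm (by simpa using h1) h0
      rw [this, he]
    | succ i ih =>
      obtain ⟨Γ, hΓc, hΓ0, hΓ⟩ := ih (le_trans (Nat.le_succ i) hi)
      set a : ℝ := (i : ℝ)/m with ha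
      set b : ℝ := ((i+1 : ℕ) : ℝ)/m with hb
      have hab : a ≤ b := by
        rw [ha, hb, div_le_div_iff_of_pos_right hmpos]
        exact_mod_cast Nat.le_succ i
      have hba : b - a = 1/m := by
        rw [ha, hb]; push_cast; ring
      have haI : a ∈ Icc (0:ℝ) 1 := by
        constructor
        · positivity
        · rw [ha, div_le_one hmpos]
          exact_mod_cast le_trans (Nat.le_succ i) hi
      obtain ⟨x, hx⟩ := hδ a haI
      haveI : Nonempty (p ⁻¹' {x}) := hp.nonempty_fiber_of_mem (e := Γ a)
        (by rw [hΓ a ⟨by positivity, le_refl a⟩]; exact hx (Metric.mem_ball_self δpos))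
      have hsub : ∀ t ∈ Icc a b, γ t ∈ (T x).baseSet := by
        intro t ht
        show γ t ∈ (hp x).2.choose
        apply hx
        rw [Metric.mem_ball, Real.dist_eq, abs_sub_lt_iff]
        constructor
        · linarith [ht.2, hba, hm]
        · linarith [ht.1, δpos]
      have hΓa : p (Γ a) = γ a := hΓ a ⟨by positivity, le_refl a⟩
      have hΓasrc : Γ a ∈ (T x).source := by
        rw [(T x).mem_source, hΓa]
        exact hsub a ⟨le_refl a, hab⟩
      set c := ((T x) (Γ a)).2 with hc
      set cl : ℝ → ℝ := fun t => min (max t a) b with hcl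
      have hclmem : ∀ t, cl t ∈ Icc a b := fun t =>
        ⟨le_min (le_max_right t a) hab, min_le_right _ _⟩
      have hcleq : ∀ t, a ≤ t → t ≤ b → cl t = t := by
        intro t h1 h2
        simp only [hcl, max_eq_left h1, min_eq_left h2]
      have hcla : cl a = a := by simp [hcl, hab]
      set g₂ : ℝ → E := fun t => (T x).toOpenPartialHomeomorph.symm (γ (cl t), c) with hg₂
      have hg₂c : Continuous g₂ := by
        apply (T x).toOpenPartialHomeomorph.continuousOn_symm.comp_continuous
        · exact (hγ.comp (((continuous_id.max continuous_const).min continuous_const))).prodMk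
            continuous_const
        · intro t
          rw [(T x).mem_target]
          exact hsub _ (hclmem t)
      have hbdry : g₂ a = Γ a := by
        rw [hg₂]
        simp only [hcla]
        rw [← hΓa, hc, (T x).mk_proj_snd' (by rw [hΓa]; exact hsub a ⟨le_refl a, hab⟩)]
        exact (T x).toOpenPartialHomeomorph.left_inv hΓasrc
      refine ⟨fun t => if t ≤ a then Γ t else g₂ t, ?_, ?_, ?_⟩
      · exact Continuous.if_le hΓc hg₂c continuous_id continuous_const
          (fun t ht => by rw [ht, hbdry])
      · simp only [if_pos (show (0:ℝ) ≤ a by positivity), hΓ0]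
      · intro t ht
        by_cases h : t ≤ a
        · simp only [if_pos h]
          exact hΓ t ⟨ht.1, h⟩
        · simp only [if_neg h]
          push_neg at h
          have htb : t ≤ b := ht.2
          rw [hg₂]
          simp only
          rw [(T x).proj_symm_apply' (hsub _ (hclmem t)), hcleq t h.le htb]
  obtain ⟨Γ, h1, h2, h3⟩ := key m (le_refl m)
  refine ⟨Γ, h1, h2, ?_⟩
  intro t ht
  apply h3
  rwa [div_self (ne_of_gt hmpos)]

/-- Path-level lift existence. -/
theorem pathLift (hp : IsCoveringMap p) {x y : X} (γ : Path x y) (e : E) (he : p e = x) :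
    ∃ e' : E, ∃ Γ : Path e e', ∀ t, p (Γ t) = γ t := by
  obtain ⟨Γ, hΓc, hΓ0, hΓ⟩ := lift_exists_real hp γ.continuous_extend e
    (by rwa [Path.extend_zero])
  have hlift : ∀ t : unitInterval, p (Γ t) = γ t := by
    intro t
    rw [hΓ t t.2, Path.extend_extends' γ t]
  exact ⟨Γ 1, ⟨⟨⟨fun t => Γ t, hΓc.comp continuous_subtype_val⟩, by simpa using hΓ0, rfl⟩,
    hlift⟩⟩

/-- Endpoint uniqueness of lifts. -/
theorem pathLift_unique (hp : IsCoveringMap p) {e b₁ b₂ : E}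
    (Γ₁ : Path e b₁) (Γ₂ : Path e b₂) (h : ∀ t, p (Γ₁ t) = p (Γ₂ t)) : b₁ = b₂ := by
  have := hp.eq_of_comp_eq (A := unitInterval) Γ₁.continuous Γ₂.continuous
    (funext h) 0 (by simp)
  calc b₁ = Γ₁ 1 := Γ₁.target.symm
  _ = Γ₂ 1 := by rw [this]
  _ = b₂ := Γ₂.target


/-- Monodromy: homotopic paths have lifts with the same endpoint. -/
theorem lift_homotopic (hp : IsCoveringMap p) {x y : X} {γ₀ γ₁ : Path x y}
    (h : γ₀.Homotopic γ₁) {e b₀ b₁ : E} (Γ₀ : Path e b₀) (Γ₁ : Path e b₁)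
    (h₀ : ∀ t, p (Γ₀ t) = γ₀ t) (h₁ : ∀ t, p (Γ₁ t) = γ₁ t) : b₀ = b₁ := by
  classical
  obtain ⟨H⟩ := h
  set pI : ℝ → unitInterval := Set.projIcc 0 1 zero_le_one with hpIdef
  have hpIc : Continuous pI := continuous_projIcc
  have hpI0 : pI 0 = 0 := Set.projIcc_left zero_le_one
  have hpI1 : pI 1 = 1 := Set.projIcc_right zero_le_one
  set G : ℝ → ℝ → X := fun s t => H (pI s, pI t) with hGdef
  have hGc : Continuous (fun st : ℝ × ℝ => G st.1 st.2) :=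
    H.continuous.comp ((hpIc.comp continuous_fst).prodMk (hpIc.comp continuous_snd))
  have hGsc : ∀ s, Continuous (G s) := fun s =>
    hGc.comp ((continuous_const (y := s)).prodMk continuous_id)
  have hpe : p e = x := by
    have := h₀ 0
    rwa [Γ₀.source, γ₀.source] at this
  have hG0 : ∀ s, G s 0 = x := by
    intro s
    show H (pI s, pI 0) = x
    rw [hpI0]
    exact H.source (pI s)
  have hG1 : ∀ s, G s 1 = y := by
    intro s
    show H (pI s, pI 1) = y
    rw [hpI1]
    exact H.target (pI s)
  have hex : ∀ s : ℝ, ∃ Γ : ℝ → E, Continuous Γ ∧ Γ 0 = e ∧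
      ∀ t ∈ Icc (0:ℝ) 1, p (Γ t) = G s t :=
    fun s => lift_exists_real hp (hGsc s) e (by rw [hpe, hG0 s])
  choose Λ hΛc hΛ0 hΛ using hex
  set T : ∀ x : X, [Nonempty (p ⁻¹' {x})] → Bundle.Trivialization (p ⁻¹' {x}) p := fun x => (hp x).toTrivialization with hT
  have hTmem : ∀ x : X, x ∈ (hp x).2.choose := fun x => (hp x).2.choose_spec.1
  obtain ⟨δ, δpos, hδ⟩ := lebesgue_number_lemma_of_metric
    ((isCompact_Icc (a := (0:ℝ)) (b := 1)).prod (isCompact_Icc (a := (0:ℝ)) (b := 1)))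
    (c := fun x : X => (fun st : ℝ × ℝ => G st.1 st.2) ⁻¹' (hp x).2.choose)
    (fun x => (hp x).2.choose_spec.2.1.preimage hGc)
    (fun st _ => mem_iUnion.2 ⟨G st.1 st.2, hTmem _⟩)
  obtain ⟨n, hn⟩ := exists_nat_one_div_lt δpos
  set m : ℕ := n + 1 with hmdef
  have hm : (1 : ℝ) / m < δ := by exact_mod_cast hn
  have hmpos : (0:ℝ) < m := by positivity
  have key : ∀ i : ℕ, i ≤ m → ContinuousOn (fun s => Λ s ((i : ℝ)/m)) (Icc (0:ℝ) 1) := by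
    intro i hi
    induction i with
    | zero =>
      simp only [Nat.cast_zero, zero_div]
      have : (fun s => Λ s 0) = fun _ : ℝ => e := funext hΛ0
      rw [this]
      exact continuousOn_const
    | succ i ih =>
      have ih' := ih (le_trans (Nat.le_succ i) hi)
      set a : ℝ := (i : ℝ)/m with ha
      set b : ℝ := ((i+1 : ℕ) : ℝ)/m with hb
      have hab : a ≤ b := by
        rw [ha, hb, div_le_div_iff_of_pos_right hmpos]
        exact_mod_cast Nat.le_succ i
      have hba : b - a = 1/m := by rw [ha, hb]; push_cast; ring
      have ha0 : 0 ≤ a := by positivity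
      have hb1 : b ≤ 1 := by
        rw [hb, div_le_one hmpos]; exact_mod_cast hi
      have haI : a ∈ Icc (0:ℝ) 1 := ⟨ha0, le_trans hab hb1⟩
      intro s₀ hs₀
      obtain ⟨x, hx⟩ := hδ (s₀, a) (mem_prod.2 ⟨hs₀, haI⟩)
      haveI : Nonempty (p ⁻¹' {x}) := hp.nonempty_fiber_of_mem (e := Λ s₀ a)
        (by rw [hΛ s₀ a ⟨ha0, le_trans hab hb1⟩]; exact hx (Metric.mem_ball_self δpos))
      set J : Set ℝ := Ioo (s₀ - δ) (s₀ + δ) with hJ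
      have hJnhds : J ∈ 𝓝 s₀ := Ioo_mem_nhds (by linarith) (by linarith)
      set S : Set ℝ := Icc (0:ℝ) 1 ∩ J with hS
      have hs₀S : s₀ ∈ S := ⟨hs₀, mem_Ioo.2 ⟨by linarith, by linarith⟩⟩
      have hsub : ∀ s ∈ J, ∀ t ∈ Icc a b, G s t ∈ (T x).baseSet := by
        intro s hs t ht
        have hmem : (s, t) ∈ Metric.ball (s₀, a) δ := by
          rw [Metric.mem_ball, Prod.dist_eq]
          apply max_lt
          · rw [Real.dist_eq, abs_sub_lt_iff]
            exact ⟨by linarith [hs.2], by linarith [hs.1]⟩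
          · rw [Real.dist_eq, abs_sub_lt_iff]
            exact ⟨by linarith [ht.2, hba, hm], by linarith [ht.1, δpos]⟩
        show G s t ∈ (hp x).2.choose
        exact hx hmem
      set φ : ℝ → E := fun s => Λ s a with hφ
      have hφsrc : ∀ s ∈ S, φ s ∈ (T x).source := by
        intro s hs
        rw [(T x).mem_source, hΛ s a ⟨ha0, le_trans hab hb1⟩]
        exact hsub s hs.2 a ⟨le_refl a, hab⟩
      have hkey : ∀ s ∈ S, Λ s b =
          (T x).toOpenPartialHomeomorph.symm (G s b, ((T x) (φ s)).2) := by
        intro s hs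
        have heqon := hp.eqOn_of_comp_eqOn (s := Icc a b) isPreconnected_Icc
          (g₁ := Λ s)
          (g₂ := fun t => (T x).toOpenPartialHomeomorph.symm (G s t, ((T x) (φ s)).2))
          ((hΛc s).continuousOn)
          ?_ ?_ (a := a) ⟨le_refl a, hab⟩ ?_
        · exact heqon ⟨hab, le_refl b⟩
        · apply (T x).toOpenPartialHomeomorph.continuousOn_symm.comp
            ((hGsc s).continuousOn.prodMk continuousOn_const)
          intro t ht
          exact (T x).mem_target.2 (hsub s hs.2 t ht)
        · intro t ht
          have h1 : p (Λ s t) = G s t := hΛ s t ⟨le_trans ha0 ht.1, le_trans ht.2 hb1⟩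
          have h2 : p ((T x).toOpenPartialHomeomorph.symm (G s t, ((T x) (φ s)).2)) = G s t :=
            (T x).proj_symm_apply' (hsub s hs.2 t ht)
          simp only [Function.comp_apply, h1, h2]
        · show Λ s a = (T x).toOpenPartialHomeomorph.symm (G s a, ((T x) (φ s)).2)
          have hGa : G s a = p (φ s) := (hΛ s a ⟨ha0, le_trans hab hb1⟩).symm
          rw [hGa, (T x).mk_proj_snd' ((T x).mem_source.1 (hφsrc s hs))]
          exact ((T x).toOpenPartialHomeomorph.left_inv (hφsrc s hs)).symm
      have hψ : ContinuousWithinAt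
          (fun s => (T x).toOpenPartialHomeomorph.symm (G s b, ((T x) (φ s)).2)) S s₀ := by
        have hφw : ContinuousWithinAt φ S s₀ :=
          (ih' s₀ hs₀).mono inter_subset_left
        have hTφ : ContinuousWithinAt (fun s => ((T x) (φ s)).2) S s₀ := by
          apply ContinuousWithinAt.snd
          exact ContinuousWithinAt.comp
            ((T x).toOpenPartialHomeomorph.continuousOn (φ s₀) (hφsrc s₀ hs₀S)) hφw hφsrc
        have hGb : ContinuousWithinAt (fun s => G s b) S s₀ :=
          ((hGc.comp (continuous_id.prodMk continuous_const)).continuousWithinAt)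
        apply ContinuousWithinAt.comp
          ((T x).toOpenPartialHomeomorph.continuousOn_symm.continuousWithinAt ?_)
          (hGb.prodMk hTφ) ?_
        · rw [(T x).mem_target]
          exact hsub s₀ hs₀S.2 b ⟨hab, le_refl b⟩
        · intro s hs
          exact (T x).mem_target.2 (hsub s hs.2 b ⟨hab, le_refl b⟩)
      have hfin : ContinuousWithinAt (fun s => Λ s b) S s₀ :=
        hψ.congr hkey (hkey s₀ hs₀S)
      exact (continuousWithinAt_inter hJnhds).1 hfin
  have hend : ContinuousOn (fun s => Λ s 1) (Icc (0:ℝ) 1) := by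
    have := key m (le_refl m)
    rwa [div_self (ne_of_gt hmpos)] at this
  have hconst : Λ 0 1 = Λ 1 1 := by
    apply hp.constOn_of_comp isPreconnected_Icc hend ?_
      (left_mem_Icc.2 zero_le_one) (right_mem_Icc.2 zero_le_one)
    intro s hs s' hs'
    rw [hΛ s 1 (right_mem_Icc.2 zero_le_one), hΛ s' 1 (right_mem_Icc.2 zero_le_one),
      hG1, hG1]
  have cmp : ∀ (s : ℝ) {γs : Path x y} {bs : E} (Γs : Path e bs),
      (∀ t, p (Γs t) = γs t) → (∀ t : unitInterval, H (pI s, t) = γs t) → bs = Λ s 1 := by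
    intro s γs bs Γs hΓs hGs
    have heqon := hp.eqOn_of_comp_eqOn (s := Icc (0:ℝ) 1) isPreconnected_Icc
      (g₁ := fun t => Γs (pI t)) (g₂ := Λ s)
      ((Γs.continuous.comp hpIc).continuousOn) ((hΛc s).continuousOn)
      ?_ (a := 0) (left_mem_Icc.2 zero_le_one) ?_
    · have h1 := heqon (right_mem_Icc.2 zero_le_one)
      simp only at h1
      rw [hpI1] at h1
      rw [← h1, Γs.target]
    · intro t ht
      simp only [Function.comp_apply]
      rw [hΓs (pI t), hΛ s t ht]
      exact (hGs (pI t)).symm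
    · show Γs (pI 0) = Λ s 0
      rw [hpI0, Γs.source, hΛ0]
  have hb₀ : b₀ = Λ 0 1 := by
    apply cmp 0 Γ₀ h₀
    intro t
    rw [hpI0]
    exact H.apply_zero t
  have hb₁ : b₁ = Λ 1 1 := by
    apply cmp 1 Γ₁ h₁
    intro t
    rw [hpI1]
    exact H.apply_one t
  rw [hb₀, hb₁, hconst]


/-- The lifting criterion for covering maps. -/
theorem covering_lift_criterion (hp : IsCoveringMap p) {A : Type*} [TopologicalSpace A]
    [ConnectedSpace A] [LocallyPathConnectedSpace A] {f : A → X} (hf : Continuous f)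
    (a₀ : A) (e₀ : E) (he : p e₀ = f a₀)
    (hcrit : ∀ δ : Path a₀ a₀, ∃ ε : Path e₀ e₀,
      (δ.map hf).Homotopic ((ε.map hp.continuous).cast he.symm he.symm)) :
    ∃ g : A → E, Continuous g ∧ (∀ a, p (g a) = f a) ∧ g a₀ = e₀ := by
  classical
  haveI : PathConnectedSpace A := pathConnectedSpace_iff_connectedSpace.mpr inferInstance
  set α : ∀ a : A, Path a₀ a := fun a => PathConnectedSpace.somePath a₀ a with hα
  have hex : ∀ a : A, ∃ w : E, ∃ Γ : Path e₀ w, ∀ t, p (Γ t) = ((α a).map hf) t :=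
    fun a => pathLift hp ((α a).map hf) e₀ he
  choose g Γ hΓ using hex
  have hpg : ∀ a, p (g a) = f a := by
    intro a
    have h1 := hΓ a 1
    rwa [(Γ a).target, ((α a).map hf).target] at h1
  -- well-definedness: any lift of any path from a₀ to a ends at g a
  have key : ∀ (a : A) (β : Path a₀ a) (b : E) (B : Path e₀ b),
      (∀ t, p (B t) = f (β t)) → b = g a := by
    intro a β b B hB
    obtain ⟨w, C, hC⟩ := pathLift hp ((β.map hf).symm) (g a) (hpg a)
    set δ : Path a₀ a₀ := (α a).trans β.symm with hδ
    obtain ⟨ε, hhom⟩ := hcrit δ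
    have hD : ∀ t, p (((Γ a).trans C) t) = (δ.map hf) t := by
      intro t
      show p (((Γ a).trans C) t) = f (δ t)
      rw [hδ]
      simp only [Path.trans_apply]
      split_ifs with h
      · exact hΓ a _
      · exact hC _
    have hε : ∀ t, p (ε t) = ((ε.map hp.continuous).cast he.symm he.symm) t := by
      intro t
      rw [Path.cast_coe]
      rfl
    have hw : w = e₀ := lift_homotopic hp hhom ((Γ a).trans C) ε hD hε
    set C' : Path e₀ (g a) := C.symm.cast hw.symm rfl with hC'
    have hC'' : ∀ t, p (C' t) = f (β t) := by
      intro t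
      rw [hC']
      show p ((C.symm.cast hw.symm rfl) t) = f (β t)
      rw [Path.cast_coe]
      show p (C (unitInterval.symm t)) = f (β t)
      rw [hC (unitInterval.symm t)]
      show ((β.map hf).symm) (unitInterval.symm t) = f (β t)
      rw [Path.symm_apply]
      simp [unitInterval.symm_symm]
    exact pathLift_unique hp B C' (fun t => by rw [hB t, hC'' t])
  have hg0 : g a₀ = e₀ := by
    have := key a₀ (Path.refl a₀) e₀ (Path.refl e₀) (fun t => by simp [he])
    exact this.symm
  -- continuity
  have hcont : Continuous g := by
    rw [continuous_iff_continuousAt]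
    intro a
    obtain ⟨hd, Te, hTe⟩ := hp (f a)
    haveI : Nonempty (p ⁻¹' {f a}) := ⟨⟨g a, hpg a⟩⟩
    set T : Bundle.Trivialization (p ⁻¹' {f a}) p := (hp (f a)).toTrivialization with hTdef
    have hbase : f a ∈ T.baseSet := (hp (f a)).mem_toTrivialization_baseSet
    set V : Set A := f ⁻¹' T.baseSet with hV
    have hVopen : IsOpen V := T.open_baseSet.preimage hf
    have haV : a ∈ V := hbase
    set W : Set A := pathComponentIn V a with hW
    have hWopen : IsOpen W := hVopen.pathComponentIn a
    have haW : a ∈ W := mem_pathComponentIn_self haV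
    have hsrc : g a ∈ T.source := T.mem_source.2 (by rw [hpg a]; exact hbase)
    have claim : ∀ a' ∈ W, g a' = T.toOpenPartialHomeomorph.symm (f a', (T (g a)).2) := by
      intro a' ha'
      have hJ : JoinedIn V a a' := ha'
      set ω : Path a a' := hJ.somePath with hω
      have hωV : ∀ t, ω t ∈ V := hJ.somePath_mem
      have hmemT : ∀ t : unitInterval, (f (ω t), (T (g a)).2) ∈ T.target :=
        fun t => T.mem_target.2 (hωV t)
      have h2 : (f a, (T (g a)).2) = T (g a) := by
        have h3 := T.mk_proj_snd' (T.mem_source.1 hsrc)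
        rwa [hpg a] at h3
      have hsymm0 : T.toOpenPartialHomeomorph.symm (f (ω 0), (T (g a)).2) = g a := by
        rw [ω.source, h2]
        exact T.toOpenPartialHomeomorph.left_inv hsrc
      set D : Path (g a) (T.toOpenPartialHomeomorph.symm (f a', (T (g a)).2)) :=
        ⟨⟨fun t => T.toOpenPartialHomeomorph.symm (f (ω t), (T (g a)).2),
          T.toOpenPartialHomeomorph.continuousOn_symm.comp_continuous
            (((hf.comp ω.continuous).prodMk continuous_const)) hmemT⟩,
          hsymm0, by show T.toOpenPartialHomeomorph.symm (f (ω 1), (T (g a)).2) = _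
                     rw [ω.target]⟩ with hD
      have hpD : ∀ t, p (D t) = f (ω t) :=
        fun t => T.proj_symm_apply' (hωV t)
      set β : Path a₀ a' := (α a).trans ω with hβ
      have hB : ∀ t, p (((Γ a).trans D) t) = f (β t) := by
        intro t
        rw [hβ]
        simp only [Path.trans_apply]
        split_ifs with h
        · rw [hΓ a _]; rfl
        · exact hpD _
      exact (key a' β _ ((Γ a).trans D) hB).symm
    have hcw : ContinuousAt (fun a' => T.toOpenPartialHomeomorph.symm (f a', (T (g a)).2)) a := by
      apply ContinuousAt.comp
      · exact (T.toOpenPartialHomeomorph.continuousOn_symm (f a, (T (g a)).2)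
          (T.mem_target.2 hbase)).continuousAt
          (T.toOpenPartialHomeomorph.open_target.mem_nhds (T.mem_target.2 hbase))
      · exact (hf.prodMk continuous_const).continuousAt
    apply ContinuousAt.congr hcw
    exact Filter.eventuallyEq_of_mem (hWopen.mem_nhds haW) (fun a' ha' => (claim a' ha').symm)
  exact ⟨g, hcont, hpg, hg0⟩
end Lift

theorem IsLocalHomeomorph.locPathConnectedSpace {E X : Type*} [TopologicalSpace E]
    [TopologicalSpace X] {p : E → X} (h : IsLocalHomeomorph p) [LocallyPathConnectedSpace X] :
    LocallyPathConnectedSpace E := by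
  rw [locPathConnectedSpace_iff_pathComponentIn_mem_nhds]
  intro e u huopen heu
  obtain ⟨φ, heφ, hφ⟩ := h e
  subst hφ
  set u' : Set E := u ∩ φ.source with hu'
  have hu'open : IsOpen u' := huopen.inter φ.open_source
  have heu' : e ∈ u' := ⟨heu, heφ⟩
  set W : Set X := φ '' u' with hWdef
  have hWopen : IsOpen W := φ.isOpen_image_of_subset_source hu'open inter_subset_right
  have hφeW : φ e ∈ W := mem_image_of_mem φ heu'
  set P : Set X := pathComponentIn W (φ e) with hP
  have hPopen : IsOpen P := hWopen.pathComponentIn _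
  have hPW : P ⊆ W := pathComponentIn_subset
  have hPconn : IsPathConnected P := isPathConnected_pathComponentIn hφeW
  have hPtgt : P ⊆ φ.target := fun x hx => by
    obtain ⟨z, hz, rfl⟩ := hPW hx
    exact φ.map_source hz.2
  set V : Set E := φ.symm '' P with hV
  have hVopen : IsOpen V := φ.symm.isOpen_image_of_subset_source hPopen
    (by rw [φ.symm_source]; exact hPtgt)
  have hVconn : IsPathConnected V := hPconn.image' (φ.continuousOn_symm.mono hPtgt)
  have heV : e ∈ V := ⟨φ e, mem_pathComponentIn_self hφeW, φ.left_inv heφ⟩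
  have hVu : V ⊆ u := by
    rintro _ ⟨x, hx, rfl⟩
    obtain ⟨z, hz, rfl⟩ := hPW hx
    rw [φ.left_inv hz.2]
    exact hz.1
  exact Filter.mem_of_superset (hVopen.mem_nhds heV)
    (hVconn.subset_pathComponentIn heV hVu)

section Aux

variable {X : Type u} [TopologicalSpace X]

theorem path_cast_rfl {x y : X} (γ : Path x y) : γ.cast rfl rfl = γ := rfl

theorem cast_cast₁ {x y : X} (h : x = y) (γ : Path y y) :
    (γ.cast h h).cast h.symm h.symm = γ := by subst h; rfl

theorem cast_cast₂ {x y : X} (h : x = y) (γ : Path x x) :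
    (γ.cast h.symm h.symm).cast h h = γ := by subst h; rfl

theorem homotopic_cast_iff {x y x' y' : X} (hx : x' = x) (hy : y' = y) (γ σ : Path x y) :
    (γ.cast hx hy).Homotopic (σ.cast hx hy) ↔ γ.Homotopic σ := by
  subst hx; subst hy; rfl

theorem loopClass_eq_iff {x : X} (γ δ : Path x x) :
    loopClass γ = loopClass δ ↔ γ.Homotopic δ := by
  constructor
  · intro h
    have h2 : (⟦γ⟧ : Path.Homotopic.Quotient x x) = ⟦δ⟧ :=
      congrArg (FundamentalGroup.toPath (X := TopCat.of X)) h
    exact Quotient.exact h2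
  · intro h
    exact congrArg (FundamentalGroup.fromPath (X := TopCat.of X)) (Quotient.sound h)

theorem loopClass_surjective {x : X} (g : FundamentalGroup X x) :
    ∃ γ : Path x x, loopClass γ = g := by
  obtain ⟨γ, hγ⟩ := Quotient.exists_rep
    (FundamentalGroup.toPath (X := TopCat.of X) g)
  exact ⟨γ, hγ⟩

theorem mem_subgroup_transport {x y : X} (h : x = y)
    (S : Subgroup (FundamentalGroup X x)) (γ : Path y y) :
    loopClass γ ∈ (h ▸ S : Subgroup (FundamentalGroup X y)) ↔ loopClass (γ.cast h h) ∈ S := by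
  subst h; rfl

end Aux

/-- If two pointed connected coverings of a connected, locally path-connected pointed space
`(X, x₀)` have the same image subgroup of `π₁(X, x₀)`, then they are isomorphic as pointed
coverings. -/
theorem pointed_coverings_iso_of_eq_subgroup
    {X E F : Type u} [TopologicalSpace X] [TopologicalSpace E] [TopologicalSpace F]
    [ConnectedSpace X] [LocallyPathConnectedSpace X] (x₀ : X)
    {p : E → X} {q : F → X} (hp : IsCoveringMap p) (hq : IsCoveringMap q)
    [ConnectedSpace E] [ConnectedSpace F]
    (e₀ : E) (f₀ : F) (hpe : p e₀ = x₀) (hqf : q f₀ = x₀)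
    (hsub : (hpe ▸ (piOneMap p hp.continuous e₀).range :
        Subgroup (FundamentalGroup X x₀)) = hqf ▸ (piOneMap q hq.continuous f₀).range) :
    ∃ h : E ≃ₜ F, (∀ e, q (h e) = p e) ∧ h e₀ = f₀ := by
  subst hpe
  have hsub' : (piOneMap p hp.continuous e₀).range =
      hqf ▸ (piOneMap q hq.continuous f₀).range := hsub
  haveI : LocallyPathConnectedSpace E := hp.isLocalHomeomorph.locPathConnectedSpace
  haveI : LocallyPathConnectedSpace F := hq.isLocalHomeomorph.locPathConnectedSpace
  -- criterion for lifting `p` through `q`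
  have hcrit₁ : ∀ δ : Path e₀ e₀, ∃ ε : Path f₀ f₀,
      (δ.map hp.continuous).Homotopic ((ε.map hq.continuous).cast hqf.symm hqf.symm) := by
    intro δ
    have h1 : loopClass (δ.map hp.continuous) ∈ (piOneMap p hp.continuous e₀).range :=
      ⟨loopClass δ, piOneMap_loopClass p hp.continuous e₀ δ⟩
    rw [hsub', mem_subgroup_transport hqf _ _] at h1
    obtain ⟨z, hz⟩ := h1
    obtain ⟨ε, rfl⟩ := loopClass_surjective z
    rw [piOneMap_loopClass] at hz
    have hhom : (ε.map hq.continuous).Homotopic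
        ((δ.map hp.continuous).cast hqf hqf) := (loopClass_eq_iff _ _).1 hz
    have hhom2 := (homotopic_cast_iff hqf.symm hqf.symm _ _).2 hhom
    rw [cast_cast₁ hqf] at hhom2
    exact ⟨ε, hhom2.symm⟩
  -- criterion for lifting `q` through `p`
  have hcrit₂ : ∀ γ : Path f₀ f₀, ∃ δ : Path e₀ e₀,
      (γ.map hq.continuous).Homotopic ((δ.map hp.continuous).cast hqf hqf) := by
    intro γ
    have h1 : loopClass ((γ.map hq.continuous).cast hqf.symm hqf.symm) ∈
        (piOneMap p hp.continuous e₀).range := by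
      rw [hsub', mem_subgroup_transport hqf _ _, cast_cast₂ hqf]
      exact ⟨loopClass γ, piOneMap_loopClass q hq.continuous f₀ γ⟩
    obtain ⟨z, hz⟩ := h1
    obtain ⟨δ, rfl⟩ := loopClass_surjective z
    rw [piOneMap_loopClass] at hz
    have hhom : (δ.map hp.continuous).Homotopic
        ((γ.map hq.continuous).cast hqf.symm hqf.symm) := (loopClass_eq_iff _ _).1 hz
    have hhom2 := (homotopic_cast_iff hqf hqf _ _).2 hhom
    rw [cast_cast₂ hqf] at hhom2
    exact ⟨δ, hhom2.symm⟩
  obtain ⟨h, hhc, hhp, hh0⟩ :=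
    covering_lift_criterion hq hp.continuous e₀ f₀ hqf hcrit₁
  obtain ⟨k, hkc, hkp, hk0⟩ :=
    covering_lift_criterion hp hq.continuous f₀ e₀ hqf.symm hcrit₂
  have hkh : k ∘ h = id :=
    hp.eq_of_comp_eq (hkc.comp hhc) continuous_id
      (by funext e; simp only [Function.comp_apply, id_eq]; rw [hkp (h e), hhp e]) e₀
      (by simp [Function.comp_apply, hh0, hk0])
  have hhk : h ∘ k = id :=
    hq.eq_of_comp_eq (hhc.comp hkc) continuous_id
      (by funext f; simp only [Function.comp_apply, id_eq]; rw [hhp (k f), hkp f]) f₀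
      (by simp [Function.comp_apply, hh0, hk0])
  exact ⟨⟨⟨h, k, fun e => congrFun hkh e, fun f => congrFun hhk f⟩, hhc, hkc⟩, hhp, hh0⟩
end

section
/- Let X be a connected, locally path-connected, semilocally simply connected topological space with basepoint x₀. For every subgroup H of π₁(X, x₀) there exists a covering map p : E → X with E connected and a point e₀ ∈ E with p(e₀) = x₀ such that p_*(π₁(E, e₀)) = H. -/
open CategoryTheory

universe u

attribute [local instance] Path.Homotopic.setoid

/-- `X` is semilocally simply connected: every point has a neighbourhood `U` such that every
loop in `U` based at `x` is null-homotopic in `X`. -/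
def SemilocallySimplyConnected (X : Type u) [TopologicalSpace X] : Prop :=
  ∀ x : X, ∃ U ∈ nhds x, ∀ γ : Path x x, (∀ t, γ t ∈ U) → γ.Homotopic (Path.refl x)

namespace CovCons

open FundamentalGroupoid

variable {X : Type u} [TopologicalSpace X]

/-- The morphism in the fundamental groupoid determined by a path. -/
def pq {a b : X} (η : Path a b) :
    FundamentalGroupoid.mk a ⟶ FundamentalGroupoid.mk b := ⟦η⟧

lemma pq_trans {a b c : X} (η : Path a b) (η' : Path b c) :
    pq (η.trans η') = pq η ≫ pq η' := by
  show _ = Path.Homotopic.Quotient.trans _ _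
  exact Path.Homotopic.Quotient.mk_trans η η'

lemma pq_refl (a : X) : pq (Path.refl a) = 𝟙 (FundamentalGroupoid.mk a) := rfl

lemma pq_trans_symm {a b : X} (η : Path a b) :
    pq η ≫ pq η.symm = 𝟙 _ := by
  rw [← pq_trans, ← pq_refl]
  exact Quotient.sound ⟨(Path.Homotopy.reflTransSymm η).symm⟩

lemma pq_symm_trans {a b : X} (η : Path a b) :
    pq η.symm ≫ pq η = 𝟙 _ := by
  rw [← pq_trans, ← pq_refl]
  exact Quotient.sound ⟨(Path.Homotopy.reflSymmTrans η).symm⟩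

lemma pq_eq_of_homotopic {a b : X} {η η' : Path a b} (h : η.Homotopic η') :
    pq η = pq η' := Quotient.sound h

variable (x₀ : X) (H : Subgroup (FundamentalGroup X x₀))

/-- Two paths classes from `x₀` are `H`-equivalent if they differ by an element of `H`. -/
def fibSetoid (x : X) :
    Setoid (FundamentalGroupoid.mk x₀ ⟶ FundamentalGroupoid.mk x) where
  r g g' := ∃ h : FundamentalGroup X x₀, h ∈ H ∧ g' = h ≫ g
  iseqv := by
    constructor
    · exact fun g => ⟨1, H.one_mem, by
        show g = 𝟙 _ ≫ g
        simp⟩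
    · rintro g g' ⟨h, hh, rfl⟩
      refine ⟨h⁻¹, H.inv_mem hh, ?_⟩
      show _ = Groupoid.inv h ≫ _
      simp
    · rintro g g' g'' ⟨h, hh, rfl⟩ ⟨h', hh', rfl⟩
      refine ⟨h * h', H.mul_mem hh hh', ?_⟩
      show _ = (h' ≫ h) ≫ _
      simp

/-- Fiber over `x`: `H`-equivalence classes of homotopy classes of paths `x₀ → x`. -/
def Fib (x : X) : Type u := Quotient (fibSetoid x₀ H x)

/-- The class of a path class. -/
def fibMk {x : X} (g : FundamentalGroupoid.mk x₀ ⟶ FundamentalGroupoid.mk x) :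
    Fib x₀ H x := Quotient.mk _ g

lemma fibMk_eq_iff {x : X} (g g' : FundamentalGroupoid.mk x₀ ⟶ FundamentalGroupoid.mk x) :
    fibMk x₀ H g = fibMk x₀ H g' ↔ ∃ h : FundamentalGroup X x₀, h ∈ H ∧ g' = h ≫ g :=
  ⟨fun h => Quotient.exact h, fun h => Quotient.sound h⟩

/-- Pushing a fiber element forward along a path class. -/
noncomputable def push {x y : X} (v : Fib x₀ H x) (q : FundamentalGroupoid.mk x ⟶ FundamentalGroupoid.mk y) :
    Fib x₀ H y :=
  Quotient.lift (fun g => fibMk x₀ H (g ≫ q))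
    (by rintro g g' ⟨h, hh, rfl⟩
        exact Quotient.sound ⟨h, hh, by simp⟩) v

@[simp] lemma push_fibMk {x y : X} (g) (q : FundamentalGroupoid.mk x ⟶ FundamentalGroupoid.mk y) :
    push x₀ H (fibMk x₀ H g) q = fibMk x₀ H (g ≫ q) := rfl

@[simp] lemma push_id {x : X} (v : Fib x₀ H x) : push x₀ H v (𝟙 _) = v := by
  induction v using Quotient.ind
  show fibMk x₀ H _ = fibMk x₀ H _
  simp

lemma push_push {x y z : X} (v : Fib x₀ H x)
    (q : FundamentalGroupoid.mk x ⟶ FundamentalGroupoid.mk y)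
    (q' : FundamentalGroupoid.mk y ⟶ FundamentalGroupoid.mk z) :
    push x₀ H (push x₀ H v q) q' = push x₀ H v (q ≫ q') := by
  induction v using Quotient.ind
  show fibMk x₀ H _ = fibMk x₀ H _
  simp

/-- Total space of the covering associated to `H`. -/
structure Cov where
  pt : X
  cls : Fib x₀ H pt

variable {x₀ H}

lemma Cov.ext' {e e' : Cov x₀ H} (h : e.pt = e'.pt)
    (h2 : HEq e.cls e'.cls) : e = e' := by
  cases e; cases e'; cases h; cases h2; rfl

variable (x₀ H) in
/-- Basic open sets. -/
def basic (e : Cov x₀ H) (U : Set X) : Set (Cov x₀ H) :=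
  {e' | ∃ η : Path e.pt e'.pt, (∀ t, η t ∈ U) ∧ e'.cls = push x₀ H e.cls (pq η)}

variable (x₀ H) in
def covBasis : Set (Set (Cov x₀ H)) :=
  {s | ∃ e U, IsOpen U ∧ e.pt ∈ U ∧ s = basic x₀ H e U}

instance : TopologicalSpace (Cov x₀ H) :=
  TopologicalSpace.generateFrom (covBasis x₀ H)

lemma mem_basic_self {e : Cov x₀ H} {U : Set X} (hU : e.pt ∈ U) : e ∈ basic x₀ H e U :=
  ⟨Path.refl e.pt, fun _ => hU, by rw [pq_refl, push_id]⟩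

lemma basic_subset_preimage {e : Cov x₀ H} {U : Set X} :
    basic x₀ H e U ⊆ Cov.pt ⁻¹' U := by
  rintro e' ⟨η, hη, -⟩
  have := hη 1
  rwa [η.target] at this

lemma pt_mem_of_mem_basic {e e' : Cov x₀ H} {U : Set X} (h : e' ∈ basic x₀ H e U) :
    e'.pt ∈ U := basic_subset_preimage h

lemma pt_mem_of_mem_basic' {e e' : Cov x₀ H} {U : Set X} (h : e' ∈ basic x₀ H e U) :
    e.pt ∈ U := by
  obtain ⟨η, hη, -⟩ := h
  have := hη 0
  rwa [η.source] at this

lemma trans_mem {a b c : X} {U : Set X} {η : Path a b} {η' : Path b c}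
    (h : ∀ t, η t ∈ U) (h' : ∀ t, η' t ∈ U) : ∀ t, (η.trans η') t ∈ U := by
  intro t
  rw [Path.trans_apply]
  split_ifs <;> [exact h _; exact h' _]

lemma symm_mem {a b : X} {U : Set X} {η : Path a b}
    (h : ∀ t, η t ∈ U) : ∀ t, η.symm t ∈ U := fun t => h _

lemma basic_mono {e : Cov x₀ H} {U V : Set X} (hUV : U ⊆ V) :
    basic x₀ H e U ⊆ basic x₀ H e V := by
  rintro e' ⟨η, hη, he'⟩
  exact ⟨η, fun t => hUV (hη t), he'⟩

lemma basic_eq_of_mem {e e' : Cov x₀ H} {U : Set X} (h : e' ∈ basic x₀ H e U) :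
    basic x₀ H e' U = basic x₀ H e U := by
  obtain ⟨η, hη, hcls⟩ := h
  ext e''
  constructor
  · rintro ⟨μ, hμ, hc⟩
    refine ⟨η.trans μ, trans_mem hη hμ, ?_⟩
    rw [hc, hcls, push_push, ← pq_trans]
  · rintro ⟨μ, hμ, hc⟩
    have hecls : e.cls = push x₀ H e'.cls (pq η.symm) := by
      rw [hcls, push_push, pq_trans_symm, push_id]
    refine ⟨η.symm.trans μ, trans_mem (symm_mem hη) hμ, ?_⟩
    rw [hc, hecls, push_push, ← pq_trans]

lemma isOpen_basic {e : Cov x₀ H} {U : Set X} (hU : IsOpen U) (he : e.pt ∈ U) :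
    IsOpen (basic x₀ H e U) :=
  TopologicalSpace.GenerateOpen.basic _ ⟨e, U, hU, he, rfl⟩

lemma isBasis : TopologicalSpace.IsTopologicalBasis (covBasis x₀ H) := by
  refine ⟨?_, ?_, rfl⟩
  · rintro s₁ ⟨e₁, U₁, hU₁, he₁, rfl⟩ s₂ ⟨e₂, U₂, hU₂, he₂, rfl⟩ e ⟨h1, h2⟩
    refine ⟨basic x₀ H e (U₁ ∩ U₂), ⟨e, U₁ ∩ U₂, hU₁.inter hU₂,
      ⟨pt_mem_of_mem_basic h1, pt_mem_of_mem_basic h2⟩, rfl⟩,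
      mem_basic_self ⟨pt_mem_of_mem_basic h1, pt_mem_of_mem_basic h2⟩, ?_⟩
    intro e'' h''
    exact ⟨(basic_eq_of_mem h1) ▸ basic_mono Set.inter_subset_left h'',
      (basic_eq_of_mem h2) ▸ basic_mono Set.inter_subset_right h''⟩
  · apply Set.eq_univ_of_forall
    intro e
    exact Set.mem_sUnion.mpr ⟨basic x₀ H e Set.univ,
      ⟨e, Set.univ, isOpen_univ, trivial, rfl⟩, mem_basic_self trivial⟩

lemma continuous_pt : Continuous (Cov.pt : Cov x₀ H → X) := by
  rw [continuous_def]
  intro V hV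
  rw [isOpen_iff_forall_mem_open]
  intro e he
  exact ⟨basic x₀ H e V, basic_subset_preimage, isOpen_basic hV he, mem_basic_self he⟩

section Tau

open unitInterval

variable {a b : X}

/-- The truncation of `γ` up to time `t`, as a path from `a` to `γ t`. -/
noncomputable def tau (γ : Path a b) (t : I) : Path a (γ t) :=
  (γ.truncate 0 t).cast
    (by rw [min_eq_left t.2.1, γ.extend_zero])
    (γ.extend_extends' t).symm

lemma tau_apply (γ : Path a b) (t u : I) :
    tau γ t u = γ.extend (min (max u 0) t) := rfl

/-- The segment of `γ` between times `s ≤ t`. -/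
noncomputable def seg (γ : Path a b) (s t : I) (hst : s ≤ t) : Path (γ s) (γ t) :=
  (γ.truncate s t).cast
    (by rw [min_eq_left (Subtype.coe_le_coe.mpr hst), γ.extend_extends' s])
    (γ.extend_extends' t).symm

lemma seg_apply (γ : Path a b) (s t : I) (hst : s ≤ t) (u : I) :
    seg γ s t hst u = γ.extend (min (max u s) t) := rfl

lemma tau_one (γ : Path a b) : tau γ 1 = γ.cast rfl γ.target := by
  ext u
  rw [tau_apply, Path.cast_coe]
  rw [max_eq_left u.2.1]
  rw [show ((1:I):ℝ) = 1 from rfl, min_eq_left u.2.2]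
  exact γ.extend_extends' u

lemma tau_zero (γ : Path a b) : tau γ 0 = (Path.refl a).cast rfl γ.source := by
  ext u
  rw [tau_apply, Path.cast_coe]
  rw [show ((0:I):ℝ) = 0 from rfl, min_eq_right (le_max_right _ _)]
  simp [γ.extend_zero]

/-- The key homotopy identity: truncations compose. -/
lemma tau_comp (γ : Path a b) {s t : I} (hst : s ≤ t) :
    pq (tau γ t) = pq (tau γ s) ≫ pq (seg γ s t hst) := by
  rw [← pq_trans]
  refine pq_eq_of_homotopic (Path.Homotopic.symm (Nonempty.intro ?_))
  have hs0 : (0:ℝ) ≤ s := s.2.1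
  have hs1 : (s:ℝ) ≤ 1 := s.2.2
  have ht1 : (t:ℝ) ≤ 1 := t.2.2
  have hst' : (s:ℝ) ≤ t := hst
  set r₁ : I → ℝ := fun u => if (u:ℝ) ≤ 1/2 then min (2*u) s else min (max (2*u-1) s) t
    with hr₁
  set r₂ : I → ℝ := fun u => min u t with hr₂
  have cont1 : Continuous r₁ := by
    apply Continuous.if_le
    · exact (continuous_const.mul continuous_subtype_val).min continuous_const
    · exact (((continuous_const.mul continuous_subtype_val).sub
        continuous_const).max continuous_const).min continuous_const
    · exact continuous_subtype_val
    · exact continuous_const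
    · intro u hu
      rw [hu]
      norm_num
      rw [min_eq_right hs1, max_eq_right hs0, min_eq_left hst']
  have cont2 : Continuous r₂ := continuous_subtype_val.min continuous_const
  set c : I × I → ℝ := fun q => (1 - q.1) * r₁ q.2 + q.1 * r₂ q.2 with hc
  have contc : Continuous c :=
    ((continuous_const.sub (continuous_subtype_val.comp continuous_fst)).mul
      (cont1.comp continuous_snd)).add
      ((continuous_subtype_val.comp continuous_fst).mul (cont2.comp continuous_snd))
  refine ⟨⟨⟨fun q => γ.extend (c q), γ.continuous_extend.comp contc⟩, ?_, ?_⟩, ?_⟩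
  · -- map_zero_left
    intro u
    show γ.extend ((1 - ((0:I):ℝ)) * r₁ u + ((0:I):ℝ) * r₂ u)
        = ((tau γ s).trans (seg γ s t hst)) u
    rw [show ((0:I):ℝ) = 0 from rfl]
    rw [Path.trans_apply]
    split_ifs with h
    · rw [tau_apply, hr₁]
      simp only []
      rw [if_pos h]
      congr 1
      rw [max_eq_left (by linarith [u.2.1] : (0:ℝ) ≤ 2*(u:ℝ))]
      ring
    · rw [seg_apply, hr₁]
      simp only []
      rw [if_neg h]
      congr 1
      ring
  · -- map_one_left
    intro u
    show γ.extend ((1 - ((1:I):ℝ)) * r₁ u + ((1:I):ℝ) * r₂ u) = (tau γ t) u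
    rw [show ((1:I):ℝ) = 1 from rfl, tau_apply, hr₂]
    simp only []
    rw [max_eq_left u.2.1]
    congr 1
    ring
  · -- prop' rel {0, 1}
    intro lam u hu
    rcases hu with hu | hu
    · subst hu
      show γ.extend (c (lam, 0)) = ((tau γ s).trans (seg γ s t hst)) 0
      have h1 : r₁ 0 = 0 := by
        rw [hr₁]
        simp only []
        rw [if_pos (by norm_num : ((0:I):ℝ) ≤ 1/2)]
        rw [show ((0:I):ℝ) = 0 from rfl]
        rw [mul_zero, min_eq_left hs0]
      have h2 : r₂ 0 = 0 := by
        rw [hr₂]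
        simp only []
        rw [show ((0:I):ℝ) = 0 from rfl, min_eq_left t.2.1]
      show γ.extend ((1 - (lam:ℝ)) * r₁ 0 + (lam:ℝ) * r₂ 0) = _
      rw [h1, h2, mul_zero, mul_zero, add_zero, γ.extend_zero, Path.source]
    · simp only [Set.mem_singleton_iff] at hu
      subst hu
      show γ.extend (c (lam, 1)) = ((tau γ s).trans (seg γ s t hst)) 1
      have h1 : r₁ 1 = t := by
        rw [hr₁]
        simp only []
        rw [if_neg (by norm_num : ¬ ((1:I):ℝ) ≤ 1/2)]
        rw [show ((1:I):ℝ) = 1 from rfl]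
        rw [show 2*(1:ℝ) - 1 = 1 by norm_num]
        rw [max_eq_left hs1, min_eq_right ht1]
      have h2 : r₂ 1 = t := by
        rw [hr₂]
        simp only []
        rw [show ((1:I):ℝ) = 1 from rfl, min_eq_right ht1]
      show γ.extend ((1 - (lam:ℝ)) * r₁ 1 + (lam:ℝ) * r₂ 1) = _
      rw [h1, h2, Path.target]
      rw [show (1 - (lam:ℝ)) * t + (lam:ℝ) * t = t by ring]
      exact γ.extend_extends' t

end Tau

section Lift

open unitInterval

variable {a b : X} {x₀ : X} {H : Subgroup (FundamentalGroup X x₀)}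

lemma mk_push_cast {z c c' : X} (h : c' = c) (v : Fib x₀ H z) (δ : Path z c) :
    (⟨c', push x₀ H v (pq (δ.cast rfl h))⟩ : Cov x₀ H) = ⟨c, push x₀ H v (pq δ)⟩ := by
  subst h
  rfl

/-- The canonical lift of a path. -/
noncomputable def lift (γ : Path a b) (v : Fib x₀ H a) : I → Cov x₀ H :=
  fun t => ⟨γ t, push x₀ H v (pq (tau γ t))⟩

lemma lift_zero (γ : Path a b) (v : Fib x₀ H a) : lift γ v 0 = ⟨a, v⟩ := by
  show (⟨γ 0, push x₀ H v (pq (tau γ 0))⟩ : Cov x₀ H) = _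
  rw [tau_zero]
  rw [mk_push_cast γ.source v (Path.refl a)]
  rw [pq_refl, push_id]

lemma lift_one (γ : Path a b) (v : Fib x₀ H a) :
    lift γ v 1 = ⟨b, push x₀ H v (pq γ)⟩ := by
  show (⟨γ 1, push x₀ H v (pq (tau γ 1))⟩ : Cov x₀ H) = _
  rw [tau_one]
  exact mk_push_cast γ.target v γ

lemma lift_pt (γ : Path a b) (v : Fib x₀ H a) (t : I) : (lift γ v t).pt = γ t := rfl

lemma continuous_lift (γ : Path a b) (v : Fib x₀ H a) : Continuous (lift γ v) := by
  rw [(isBasis (x₀ := x₀) (H := H)).continuous_iff]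
  rintro s ⟨e, U, hU, heU, rfl⟩
  rw [Metric.isOpen_iff]
  intro t₀ ht₀
  rw [Set.mem_preimage] at ht₀
  rw [show basic x₀ H e U = basic x₀ H (lift γ v t₀) U from (basic_eq_of_mem ht₀).symm]
  have hγt₀ : γ t₀ ∈ U := pt_mem_of_mem_basic ht₀
  have : γ ⁻¹' U ∈ nhds t₀ := γ.continuous.continuousAt.preimage_mem_nhds (hU.mem_nhds hγt₀)
  obtain ⟨ε, hε, hball⟩ := Metric.mem_nhds_iff.mp this
  refine ⟨ε, hε, ?_⟩
  intro t ht
  rw [Metric.mem_ball] at ht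
  rw [Set.mem_preimage]
  -- all intermediate points are in the ball
  have hmid : ∀ u : I, (min (t₀:ℝ) t) ≤ u → (u:ℝ) ≤ max (t₀:ℝ) t → γ u ∈ U := by
    intro u h1 h2
    apply hball
    rw [Metric.mem_ball, Subtype.dist_eq, Real.dist_eq]
    rw [Subtype.dist_eq, Real.dist_eq] at ht
    rcases le_total (t₀:ℝ) t with hc | hc
    · rw [min_eq_left hc] at h1
      rw [max_eq_right hc] at h2
      rw [abs_sub_lt_iff] at ht ⊢
      constructor <;> [linarith [ht.1, ht.2]; linarith [ht.1, ht.2]]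
    · rw [min_eq_right hc] at h1
      rw [max_eq_left hc] at h2
      rw [abs_sub_lt_iff] at ht ⊢
      constructor <;> [linarith [ht.1, ht.2]; linarith [ht.1, ht.2]]
  rcases le_total t₀ t with hc | hc
  · refine ⟨seg γ t₀ t hc, ?_, ?_⟩
    · intro u
      show γ.extend (min (max (u:ℝ) t₀) t) ∈ U
      have hc' : (t₀:ℝ) ≤ t := hc
      have hw1 : (0:ℝ) ≤ min (max (u:ℝ) t₀) t := le_min (le_max_of_le_right t₀.2.1) t.2.1
      have hw2 : min (max (u:ℝ) t₀) t ≤ 1 := min_le_of_right_le t.2.2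
      rw [γ.extend_apply ⟨hw1, hw2⟩]
      apply hmid
      · rw [min_eq_left hc']
        exact le_min (le_max_right _ _) hc'
      · rw [max_eq_right hc']
        exact min_le_right _ _
    · show push x₀ H v (pq (tau γ t)) = _
      rw [tau_comp γ hc, ← push_push]
      rfl
  · refine ⟨(seg γ t t₀ hc).symm, ?_, ?_⟩
    · apply symm_mem
      intro u
      rw [seg_apply]
      have hc' : (t:ℝ) ≤ t₀ := hc
      have hw1 : (0:ℝ) ≤ min (max (u:ℝ) t) t₀ := le_min (le_max_of_le_right t.2.1) t₀.2.1
      have hw2 : min (max (u:ℝ) t) t₀ ≤ 1 := min_le_of_right_le t₀.2.2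
      rw [γ.extend_apply ⟨hw1, hw2⟩]
      apply hmid
      · rw [min_eq_right hc']
        exact le_min (le_max_right _ _) hc'
      · rw [max_eq_left hc']
        exact min_le_right _ _
    · show push x₀ H v (pq (tau γ t)) = _
      have : pq (tau γ t) = pq (tau γ t₀) ≫ pq (seg γ t t₀ hc).symm := by
        rw [← Category.comp_id (pq (tau γ t)), ← pq_trans_symm (seg γ t t₀ hc),
          ← Category.assoc, ← tau_comp γ hc]
      rw [this, ← push_push]
      rfl

end Lift

section Good

/-- A "good" open set: open, path-connected within itself, and any two paths inside it
with the same endpoints are homotopic in `X`. -/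
structure GoodSet (U : Set X) : Prop where
  isOpen : IsOpen U
  conn : ∀ z ∈ U, ∀ w ∈ U, ∃ η : Path z w, ∀ t, η t ∈ U
  simp' : ∀ (z w : X) (η η' : Path z w), (∀ t, η t ∈ U) → (∀ t, η' t ∈ U) → pq η = pq η'

lemma goodSet_nhds [LocallyPathConnectedSpace X] (hX : SemilocallySimplyConnected X)
    (x : X) {V : Set X} (hV : V ∈ nhds x) :
    ∃ U, GoodSet U ∧ x ∈ U ∧ U ⊆ V := by
  obtain ⟨U₀, hU₀, hloop⟩ := hX x
  obtain ⟨u, ⟨hu_open, hxu, hu_conn⟩, hu_sub⟩ :=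
    (isOpen_isPathConnected_basis x).mem_iff.mp (Filter.inter_mem hU₀ hV)
  have husubU₀ : u ⊆ U₀ := fun y hy => (hu_sub hy).1
  refine ⟨u, ⟨hu_open, fun z hz w hw => ?_, ?_⟩, hxu, fun y hy => (hu_sub hy).2⟩
  · obtain ⟨η, hη⟩ := hu_conn.joinedIn z hz w hw
    exact ⟨η, hη⟩
  · -- any two paths in u with same endpoints are homotopic in X
    intro z w η η' hη hη'
    -- first: any loop in u is trivial
    have loop_triv : ∀ (z' : X) (ℓ : Path z' z'), (∀ t, ℓ t ∈ u) →
        pq ℓ = 𝟙 (FundamentalGroupoid.mk z') := by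
      intro z' ℓ hℓ
      have hz'u : z' ∈ u := by have := hℓ 0; rwa [ℓ.source] at this
      obtain ⟨ρ, hρ⟩ := hu_conn.joinedIn x hxu z' hz'u
      have hbig : ∀ t, ((ρ.trans ℓ).trans ρ.symm) t ∈ U₀ :=
        fun t => husubU₀ (trans_mem (trans_mem hρ hℓ) (symm_mem hρ) t)
      have h1 : pq ((ρ.trans ℓ).trans ρ.symm) = 𝟙 _ := by
        rw [← pq_refl]
        exact pq_eq_of_homotopic (hloop _ hbig)
      rw [pq_trans, pq_trans] at h1
      calc pq ℓ = (pq ρ.symm ≫ pq ρ) ≫ pq ℓ ≫ (pq ρ.symm ≫ pq ρ) := by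
            rw [pq_symm_trans]; simp
        _ = pq ρ.symm ≫ ((pq ρ ≫ pq ℓ) ≫ pq ρ.symm) ≫ pq ρ := by simp
        _ = pq ρ.symm ≫ 𝟙 _ ≫ pq ρ := by rw [h1]
        _ = 𝟙 _ := by rw [Category.id_comp, pq_symm_trans]
    have h2 : pq (η.trans η'.symm) = 𝟙 _ :=
      loop_triv z (η.trans η'.symm) (trans_mem hη (symm_mem hη'))
    rw [pq_trans] at h2
    calc pq η = (pq η ≫ pq η'.symm) ≫ pq η' := by
          rw [Category.assoc, pq_symm_trans, Category.comp_id]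
      _ = 𝟙 _ ≫ pq η' := by rw [h2]
      _ = pq η' := Category.id_comp _

end Good

section Triv

variable {x₀ : X} {H : Subgroup (FundamentalGroup X x₀)} {x : X} {U : Set X}

/-- A constant path with a cast. -/
def reflCast {z w : X} (h : z = w) : Path z w := (Path.refl w).cast h rfl

lemma reflCast_mem {z w : X} (h : z = w) {V : Set X} (hw : w ∈ V) :
    ∀ t, reflCast h t ∈ V := fun _ => hw

lemma mk_push_reflCast {z w : X} (h : z = w) (v : Fib x₀ H z) :
    (⟨w, push x₀ H v (pq (reflCast h))⟩ : Cov x₀ H) = ⟨z, v⟩ := by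
  subst h
  rw [show reflCast (rfl : z = z) = Path.refl z from rfl, pq_refl, push_id]

/-- Chosen path in `U` from `z` to `x`. -/
noncomputable def sigPath (good : GoodSet U) {z : X} (hz : z ∈ U) (hx : x ∈ U) : Path z x :=
  (good.conn z hz x hx).choose

lemma sigPath_mem (good : GoodSet U) {z : X} (hz : z ∈ U) (hx : x ∈ U) :
    ∀ t, sigPath good hz hx t ∈ U :=
  (good.conn z hz x hx).choose_spec

/-- The subtype of fiber points over `x`. -/
abbrev FibT (x₀ : X) (H : Subgroup (FundamentalGroup X x₀)) (x : X) : Type u :=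
  ↥((Cov.pt ⁻¹' {x}) : Set (Cov x₀ H))

lemma fibT_pt (v : FibT x₀ H x) : v.1.pt = x := v.2

/-- The fiber element of `Fib x₀ H x` corresponding to a point over `x`. -/
noncomputable def fibCls (v : FibT x₀ H x) : Fib x₀ H x :=
  push x₀ H v.1.cls (pq (reflCast (fibT_pt v)))

lemma mk_fibCls (v : FibT x₀ H x) : (⟨x, fibCls v⟩ : Cov x₀ H) = v.1 :=
  mk_push_reflCast (fibT_pt v) v.1.cls

lemma fibCls_mk (w : Fib x₀ H x) (h) : fibCls (⟨⟨x, w⟩, h⟩ : FibT x₀ H x) = w := by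
  show push x₀ H w (pq (reflCast _)) = w
  rw [show reflCast (fibT_pt (⟨⟨x, w⟩, h⟩ : FibT x₀ H x)) = Path.refl x from rfl,
    pq_refl, push_id]

lemma discreteFiber (good : GoodSet U) (hxU : x ∈ U) :
    DiscreteTopology (FibT x₀ H x) := by
  rw [discreteTopology_iff_isOpen_singleton]
  intro v
  have hv : v.1.pt ∈ U := by rw [fibT_pt v]; exact hxU
  have : {v} = (Subtype.val) ⁻¹' (basic x₀ H v.1 U) := by
    ext w
    simp only [Set.mem_singleton_iff, Set.mem_preimage]
    constructor
    · rintro rfl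
      exact mem_basic_self hv
    · rintro ⟨η, hη, hc⟩
      have hpts : v.1.pt = w.1.pt := (fibT_pt v).trans (fibT_pt w).symm
      have : pq η = pq (reflCast hpts) := by
        apply good.simp'
        · exact hη
        · exact reflCast_mem hpts (by rw [fibT_pt w]; exact hxU)
      apply Subtype.ext
      have hw1 : w.1 = ⟨w.1.pt, w.1.cls⟩ := rfl
      rw [hw1, hc, this, mk_push_reflCast hpts v.1.cls]
    
  rw [this]
  exact (isOpen_basic good.isOpen hv).preimage continuous_subtype_val

open Classical in
/-- The map to the fiber. -/
noncomputable def toFib (good : GoodSet U) (hxU : x ∈ U) (v₀ : FibT x₀ H x)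
    (e : Cov x₀ H) : FibT x₀ H x :=
  if h : e.pt ∈ U then ⟨⟨x, push x₀ H e.cls (pq (sigPath good h hxU))⟩, rfl⟩ else v₀

open Classical in
lemma toFib_apply (good : GoodSet U) (hxU : x ∈ U) (v₀ : FibT x₀ H x)
    {e : Cov x₀ H} (h : e.pt ∈ U) :
    toFib good hxU v₀ e = ⟨⟨x, push x₀ H e.cls (pq (sigPath good h hxU))⟩, rfl⟩ :=
  dif_pos h

open Classical in
lemma toFib_const (good : GoodSet U) (hxU : x ∈ U) (v₀ : FibT x₀ H x)
    {e e' : Cov x₀ H} (he : e.pt ∈ U) (h : e' ∈ basic x₀ H e U) :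
    toFib good hxU v₀ e' = toFib good hxU v₀ e := by
  obtain ⟨η, hη, hc⟩ := h
  have he' : e'.pt ∈ U := by have := hη 1; rwa [η.target] at this
  rw [toFib, toFib, dif_pos he, dif_pos he']
  apply Subtype.ext
  show (⟨x, _⟩ : Cov x₀ H) = ⟨x, _⟩
  congr 1
  rw [hc, push_push, ← pq_trans]
  congr 1
  apply good.simp'
  · exact trans_mem hη (sigPath_mem good he' hxU)
  · exact sigPath_mem good he hxU

variable [LocallyPathConnectedSpace X]

open Classical in
/-- The local trivialization of the covering over a good set. -/
noncomputable def triv (good : GoodSet U) (hxU : x ∈ U) (v₀ : FibT x₀ H x) :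
    Bundle.Trivialization (FibT x₀ H x) (Cov.pt : Cov x₀ H → X) where
  toFun e := (e.pt, toFib good hxU v₀ e)
  invFun q := if h : q.1 ∈ U then
      ⟨q.1, push x₀ H (fibCls q.2) (pq (sigPath good h hxU).symm)⟩
    else q.2.1
  source := Cov.pt ⁻¹' U
  target := U ×ˢ Set.univ
  map_source' e he := ⟨he, trivial⟩
  map_target' := by
    rintro ⟨z, v⟩ ⟨hz, -⟩
    simp only [dif_pos hz]
    exact hz
  left_inv' := by
    intro e he
    have he' : e.pt ∈ U := he
    simp only [toFib_apply good hxU v₀ he', dif_pos he']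
    erw [fibCls_mk, push_push, pq_trans_symm, push_id]
  right_inv' := by
    rintro ⟨z, v⟩ ⟨hz, -⟩
    have h2 : toFib good hxU v₀ ⟨z, push x₀ H (fibCls v) (pq (sigPath good hz hxU).symm)⟩
        = v := by
      rw [toFib_apply good hxU v₀ (show (⟨z, _⟩ : Cov x₀ H).pt ∈ U from hz)]
      apply Subtype.ext
      show (⟨x, _⟩ : Cov x₀ H) = v.1
      show (⟨x, push x₀ H (push x₀ H (fibCls v) (pq (sigPath good hz hxU).symm))
        (pq (sigPath good hz hxU))⟩ : Cov x₀ H) = v.1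
      rw [push_push, pq_symm_trans, push_id]
      exact mk_fibCls v
    simp only [dif_pos hz]
    exact Prod.ext rfl h2
  open_source := continuous_pt.isOpen_preimage U good.isOpen
  open_target := good.isOpen.prod isOpen_univ
  continuousOn_toFun := by
    apply continuousOn_of_forall_continuousAt
    intro e he
    apply ContinuousAt.prodMk
    · exact continuous_pt.continuousAt
    · have h0 : ∀ᶠ e' in nhds e, toFib good hxU v₀ e' = toFib good hxU v₀ e :=
        Filter.eventually_of_mem
          ((isOpen_basic good.isOpen he).mem_nhds (mem_basic_self he))
          (fun e' h' => toFib_const good hxU v₀ he h')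
      exact Filter.EventuallyEq.continuousAt h0
  continuousOn_invFun := by
    haveI := discreteFiber (x₀ := x₀) (H := H) good hxU
    apply continuousOn_of_forall_continuousAt
    rintro ⟨z, v⟩ ⟨hz, -⟩
    rw [ContinuousAt, (isBasis.nhds_hasBasis).tendsto_right_iff]
    rintro t ⟨⟨e₁, W, hW, he₁, rfl⟩, hmem⟩
    simp only [dif_pos hz] at hmem
    set e' : Cov x₀ H := ⟨z, push x₀ H (fibCls v) (pq (sigPath good hz hxU).symm)⟩ with he'
    have hbe : basic x₀ H e' W = basic x₀ H e₁ W := basic_eq_of_mem hmem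
    have hzW : z ∈ W := pt_mem_of_mem_basic hmem
    set W' := pathComponentIn (W ∩ U) z with hW'
    have hzWU : z ∈ W ∩ U := ⟨hzW, hz⟩
    have hW'open : IsOpen W' := (hW.inter good.isOpen).pathComponentIn z
    have hzW' : z ∈ W' := mem_pathComponentIn_self hzWU
    have hW'conn : IsPathConnected W' := isPathConnected_pathComponentIn hzWU
    have hW'sub : W' ⊆ W ∩ U := pathComponentIn_subset
    have hN : (W' ×ˢ ({v} : Set (FibT x₀ H x))) ∈ nhds (z, v) :=
      prod_mem_nhds (hW'open.mem_nhds hzW') ((isOpen_discrete {v}).mem_nhds rfl)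
    refine Filter.eventually_of_mem hN ?_
    rintro ⟨z', v'⟩ ⟨hz', hv'⟩
    simp only [Set.mem_singleton_iff] at hv'
    subst hv'
    have hz'U : z' ∈ U := (hW'sub hz').2
    show (if h : z' ∈ U then _ else _) ∈ id (basic x₀ H e₁ W)
    simp only [dif_pos hz'U, id]
    rw [← hbe]
    obtain ⟨η, hη⟩ := hW'conn.joinedIn z hzW' z' hz'
    refine ⟨η, fun u => (hW'sub (hη u)).1, ?_⟩
    show push x₀ H (fibCls v') (pq (sigPath good hz'U hxU).symm)
        = push x₀ H e'.cls (pq η)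
    rw [show e'.cls = push x₀ H (fibCls v') (pq (sigPath good hz hxU).symm) from rfl,
      push_push, ← pq_trans]
    congr 1
    apply good.simp'
    · exact symm_mem (sigPath_mem good hz'U hxU)
    · exact trans_mem (symm_mem (sigPath_mem good hz hxU)) (fun u => (hW'sub (hη u)).2)
  baseSet := U
  open_baseSet := good.isOpen
  source_eq := rfl
  target_eq := rfl
  proj_toFun _ _ := rfl

end Triv

section Main

variable (x₀ : X) (H : Subgroup (FundamentalGroup X x₀))

/-- The base point of the covering space. -/
noncomputable def covBase : Cov x₀ H := ⟨x₀, fibMk x₀ H (𝟙 _)⟩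

variable [LocallyPathConnectedSpace X]

lemma isCoveringMap (hX : SemilocallySimplyConnected X) [PathConnectedSpace X] :
    IsCoveringMap (Cov.pt : Cov x₀ H → X) := by
  intro x
  obtain ⟨U, good, hxU, -⟩ := goodSet_nhds hX x (Filter.univ_mem)
  have γ0 : Path x₀ x := PathConnectedSpace.somePath x₀ x
  have v₀ : FibT x₀ H x := ⟨⟨x, fibMk x₀ H (pq γ0)⟩, rfl⟩
  exact haveI := discreteFiber (x₀ := x₀) (H := H) good hxU
    IsEvenlyCovered.of_trivialization (t := triv good hxU v₀) hxU

lemma joined_covBase (e : Cov x₀ H) : Joined (covBase x₀ H) e := by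
  obtain ⟨x, v⟩ := e
  induction v using Quotient.ind with
  | _ g =>
  obtain ⟨γ, hγ⟩ := Quotient.exists_rep g
  refine ⟨⟨⟨lift γ (fibMk x₀ H (𝟙 _)), continuous_lift γ _⟩, ?_, ?_⟩⟩
  · exact lift_zero γ _
  · show lift γ (fibMk x₀ H (𝟙 _)) 1 = _
    rw [lift_one γ _, push_fibMk, Category.id_comp]
    show (⟨x, fibMk x₀ H (pq γ)⟩ : Cov x₀ H) = ⟨x, Quotient.mk _ g⟩
    congr 1
    rw [show pq γ = g from hγ]
    rfl

lemma pathConnectedCov : PathConnectedSpace (Cov x₀ H) :=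
  ⟨⟨covBase x₀ H⟩, fun e e' => (joined_covBase x₀ H e).symm.trans (joined_covBase x₀ H e')⟩

lemma loop_proj_mem (hcov : IsCoveringMap (Cov.pt : Cov x₀ H → X))
    (δ : Path (covBase x₀ H) (covBase x₀ H)) :
    loopClass (δ.map continuous_pt) ∈ H := by
  set γ : Path x₀ x₀ := δ.map continuous_pt with hγdef
  set v : Fib x₀ H x₀ := fibMk x₀ H (𝟙 _) with hv
  have hL : lift γ v = fun t => δ t := by
    apply hcov.eq_of_comp_eq (continuous_lift γ v) δ.continuous
    · funext t
      rfl
    · show lift γ v 0 = δ 0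
      rw [lift_zero, δ.source]
      rfl
  have h1 : (⟨x₀, push x₀ H v (pq γ)⟩ : Cov x₀ H) = covBase x₀ H := by
    rw [← lift_one γ v, hL]
    exact δ.target
  have h2 : push x₀ H v (pq γ) = fibMk x₀ H (𝟙 _) := by
    injection h1 with h h'
  rw [hv, push_fibMk, Category.id_comp] at h2
  obtain ⟨h, hH, hrel⟩ := (fibMk_eq_iff x₀ H _ _).mp h2
  have hhom : pq γ = (h⁻¹) := by
    show pq γ = Groupoid.inv h
    calc pq γ = (Groupoid.inv h ≫ h) ≫ pq γ := by rw [Groupoid.inv_comp, Category.id_comp]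
      _ = Groupoid.inv h ≫ (h ≫ pq γ) := Category.assoc _ _ _
      _ = Groupoid.inv h ≫ 𝟙 _ := by rw [← hrel]
      _ = Groupoid.inv h := Category.comp_id _
  have : loopClass (δ.map continuous_pt) = h⁻¹ := hhom
  rw [this]
  exact H.inv_mem hH

lemma range_eq (hcov : IsCoveringMap (Cov.pt : Cov x₀ H → X)) :
    (piOneMap (Cov.pt : Cov x₀ H → X) continuous_pt (covBase x₀ H)).range = H := by
  ext q
  rw [MonoidHom.mem_range]
  constructor
  · rintro ⟨d, rfl⟩
    obtain ⟨δ, hδ⟩ := Quotient.exists_rep d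
    have hd : d = loopClass δ := hδ.symm
    rw [hd, piOneMap_loopClass]
    exact loop_proj_mem x₀ H hcov δ
  · intro hq
    obtain ⟨γ, hγ⟩ : ∃ γ : Path x₀ x₀, ⟦γ⟧ = q := Quotient.exists_rep q
    set v : Fib x₀ H x₀ := fibMk x₀ H (𝟙 _) with hv
    have htgt : lift γ v 1 = covBase x₀ H := by
      rw [lift_one γ v, hv, push_fibMk, Category.id_comp]
      show (⟨x₀, fibMk x₀ H (pq γ)⟩ : Cov x₀ H) = ⟨x₀, fibMk x₀ H (𝟙 _)⟩
      congr 1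
      apply Quotient.sound
      refine ⟨q⁻¹, H.inv_mem hq, ?_⟩
      show 𝟙 (FundamentalGroupoid.mk x₀) = Groupoid.inv q ≫ pq γ
      erw [show pq γ = q from hγ, Groupoid.inv_comp]
      rfl
    set δ : Path (covBase x₀ H) (covBase x₀ H) :=
      ⟨⟨lift γ v, continuous_lift γ v⟩, lift_zero γ v, htgt⟩ with hδdef
    refine ⟨loopClass δ, ?_⟩
    rw [piOneMap_loopClass]
    show (⟦δ.map continuous_pt⟧ : Path.Homotopic.Quotient x₀ x₀) = q
    have : δ.map continuous_pt = γ := by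
      ext t
      rfl
    rw [this]
    exact hγ

end Main

end CovCons

/-- Existence part of the Galois correspondence: over a connected, locally path-connected,
semilocally simply connected pointed space `(X, x₀)`, every subgroup `H` of `π₁(X, x₀)` is the
image of the fundamental group of some pointed connected covering of `(X, x₀)`. -/
theorem exists_covering_with_subgroup
    {X : Type u} [TopologicalSpace X] (x₀ : X)
    [ConnectedSpace X] [LocallyPathConnectedSpace X] (hX : SemilocallySimplyConnected X)
    (H : Subgroup (FundamentalGroup X x₀)) :
    ∃ (E : TopCat.{u}) (p : E → X) (e₀ : E) (hp : IsCoveringMap p)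
      (he : p e₀ = x₀), ConnectedSpace E ∧
        (he ▸ (piOneMap p hp.continuous e₀).range : Subgroup (FundamentalGroup X x₀)) = H := by
  haveI : PathConnectedSpace X := pathConnectedSpace_iff_connectedSpace.mpr inferInstance
  haveI : PathConnectedSpace (CovCons.Cov x₀ H) := CovCons.pathConnectedCov x₀ H
  have hcov : IsCoveringMap (CovCons.Cov.pt : CovCons.Cov x₀ H → X) :=
    CovCons.isCoveringMap x₀ H hX
  refine ⟨TopCat.of (CovCons.Cov x₀ H), CovCons.Cov.pt, CovCons.covBase x₀ H, hcov, rfl,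
    (inferInstance : ConnectedSpace (CovCons.Cov x₀ H)), ?_⟩
  show (piOneMap CovCons.Cov.pt hcov.continuous (CovCons.covBase x₀ H)).range = H
  exact CovCons.range_eq x₀ H hcov
end

section
/- If p : E → X is a covering map and e₀ ∈ E, then the induced homomorphism p_* : π₁(E, e₀) → π₁(X, p(e₀)) on fundamental groups is injective. -/
open CategoryTheory

universe u

attribute [local instance] Path.Homotopic.setoid

section Lifting

open unitInterval Set Topology

variable {E X : Type u} [TopologicalSpace E] [TopologicalSpace X] {p : E → X}

private lemma isPreconnected_Icc_I {a b : unitInterval} : _root_.IsPreconnected (Set.Icc a b) := by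
  rw [← Topology.IsInducing.subtypeVal.isPreconnected_image]
  have h : (Subtype.val '' (Set.Icc a b) : Set ℝ) = Set.Icc (a : ℝ) (b : ℝ) ∩ Set.Icc 0 1 := by
    rw [show (Set.Icc a b : Set unitInterval) = Subtype.val ⁻¹' (Set.Icc (a : ℝ) (b : ℝ)) from rfl,
      Set.image_preimage_eq_inter_range, Subtype.range_coe]
  rw [h]
  exact (Set.ordConnected_Icc.inter Set.ordConnected_Icc).isPreconnected

/-- Lifting over a single evenly-covered rectangle, given a lift of the bottom edge. -/
private lemma rect_lift (hp : IsCoveringMap p) (F : C(unitInterval × unitInterval, X))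
    {J : Set unitInterval} (hJ : _root_.IsPreconnected J) {a b : unitInterval} (hab : a ≤ b) {x : X} [Nonempty (p ⁻¹' {x})]
    (hbase : ∀ z ∈ J ×ˢ Set.Icc a b, F z ∈ (hp x).toTrivialization.baseSet)
    {g : unitInterval → E} (hg : ContinuousOn g J) (hpg : ∀ s ∈ J, p (g s) = F (s, a)) :
    ∃ G : unitInterval × unitInterval → E, ContinuousOn G (J ×ˢ Set.Icc a b) ∧
      (∀ z ∈ J ×ˢ Set.Icc a b, p (G z) = F z) ∧ ∀ s ∈ J, G (s, a) = g s := by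
  rcases J.eq_empty_or_nonempty with rfl | ⟨s₀, hs₀⟩
  · exact ⟨fun z => g z.1, by simp, by simp, by simp⟩
  set T := (hp x).toTrivialization with hT
  have hsrc : ∀ s ∈ J, g s ∈ T.source := fun s hs =>
    T.mem_source.2 (by rw [hpg s hs]; exact hbase (s, a) ⟨hs, le_rfl, hab⟩)
  have hc2 : ContinuousOn (fun s => (T (g s)).2) J :=
    continuous_snd.comp_continuousOn (T.toOpenPartialHomeomorph.continuousOn.comp hg hsrc)
  have : DiscreteTopology (p ⁻¹' {x}) := (hp x).1
  have hsub : ∀ s ∈ J, (T (g s)).2 = (T (g s₀)).2 := by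
    intro s hs
    have hpre := hJ.image _ hc2
    exact hpre.subsingleton (mem_image_of_mem _ hs) (mem_image_of_mem _ hs₀)
  set c := (T (g s₀)).2 with hc
  refine ⟨fun z => T.toOpenPartialHomeomorph.symm (F z, c), ?_, ?_, ?_⟩
  · apply T.toOpenPartialHomeomorph.continuousOn_symm.comp
      ((F.continuous.prodMk continuous_const).continuousOn)
    intro z hz
    exact T.mem_target.2 (hbase z hz)
  · intro z hz
    exact T.proj_symm_apply (T.mem_target.2 (hbase z hz))
  · intro s hs
    have h1 : T (g s) = (F (s, a), c) := by
      refine Prod.ext ?_ (hsub s hs)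
      rw [T.coe_fst (hsrc s hs), hpg s hs]
    show T.toOpenPartialHomeomorph.symm (F (s, a), c) = g s
    rw [← h1]
    exact T.toOpenPartialHomeomorph.left_inv (hsrc s hs)

/-- Lifting over a vertical strip `J × [0, t n]`, given a lift of the bottom edge. -/
private lemma strip_lift (hp : IsCoveringMap p) (F : C(unitInterval × unitInterval, X))
    {J : Set unitInterval} (hJ : _root_.IsPreconnected J) (t : ℕ → unitInterval) (ht0 : t 0 = 0)
    (hmono : Monotone t) (n : ℕ)
    (hbase : ∀ i < n, ∃ x, ∃ _ : Nonempty (p ⁻¹' {x}), ∀ z ∈ J ×ˢ Set.Icc (t i) (t (i + 1)),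
      F z ∈ (hp x).toTrivialization.baseSet)
    {g : unitInterval → E} (hg : ContinuousOn g J) (hpg : ∀ s ∈ J, p (g s) = F (s, 0)) :
    ∃ G : unitInterval × unitInterval → E, ContinuousOn G (J ×ˢ Set.Icc 0 (t n)) ∧
      (∀ z ∈ J ×ˢ Set.Icc 0 (t n), p (G z) = F z) ∧ ∀ s ∈ J, G (s, 0) = g s := by
  induction n with
  | zero =>
    refine ⟨fun z => g z.1, hg.comp continuous_fst.continuousOn (fun z hz => hz.1), ?_,
      fun s _ => rfl⟩
    rintro ⟨s, u⟩ ⟨hs, hu⟩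
    have hu0 : u = 0 := le_antisymm (ht0 ▸ hu.2) u.2.1
    rw [hu0]
    exact hpg s hs
  | succ n ih =>
    obtain ⟨G₁, hG₁c, hG₁p, hG₁0⟩ := ih (fun i hi => hbase i (Nat.lt_succ_of_lt hi))
    obtain ⟨x, hne, hx⟩ := hbase n n.lt_succ_self
    have h0tn : (0 : unitInterval) ≤ t n := ht0 ▸ hmono (Nat.zero_le n)
    have hg' : ContinuousOn (fun s => G₁ (s, t n)) J := by
      apply hG₁c.comp (Continuous.continuousOn (by fun_prop))
      intro s hs; exact ⟨hs, h0tn, le_rfl⟩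
    have hpg' : ∀ s ∈ J, p (G₁ (s, t n)) = F (s, t n) := fun s hs =>
      hG₁p (s, t n) ⟨hs, h0tn, le_rfl⟩
    obtain ⟨G₂, hG₂c, hG₂p, hG₂a⟩ := rect_lift hp F hJ (hmono n.le_succ) hx hg' hpg'
    classical
    refine ⟨fun z => if z.2 ≤ t n then G₁ z else G₂ z, ?_, ?_, ?_⟩
    · apply ContinuousOn.if
      · rintro z ⟨hz, hfr⟩
        have hz2 : z.2 = t n := frontier_le_subset_eq continuous_snd continuous_const hfr
        have hzz : z = (z.1, t n) := Prod.ext rfl hz2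
        rw [hzz, hG₂a z.1 hz.1]
      · apply hG₁c.mono
        rintro z ⟨hz, hcl⟩
        have hle : z.2 ≤ t n := by
          have hcleq := (isClosed_le continuous_snd
            (continuous_const : Continuous fun _ : unitInterval × unitInterval => t n)).closure_eq
          rw [hcleq] at hcl
          exact hcl
        exact ⟨hz.1, hz.2.1, hle⟩
      · apply hG₂c.mono
        rintro z ⟨hz, hcl⟩
        have h2 : t n ≤ z.2 := by
          have hset : {z : unitInterval × unitInterval | ¬ z.2 ≤ t n}
              = {z : unitInterval × unitInterval | t n < z.2} := by
            ext w; simp [not_le]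
          rw [hset] at hcl
          exact closure_lt_subset_le continuous_const continuous_snd hcl
        exact ⟨hz.1, h2, hz.2.2⟩
    · rintro z hz
      show p (if z.2 ≤ t n then G₁ z else G₂ z) = F z
      by_cases h : z.2 ≤ t n
      · rw [if_pos h]; exact hG₁p z ⟨hz.1, hz.2.1, h⟩
      · rw [if_neg h]; exact hG₂p z ⟨hz.1, le_of_not_ge h, hz.2.2⟩
    · intro s hs
      have hcond : ((s, (0 : unitInterval)) : unitInterval × unitInterval).2 ≤ t n := h0tn
      show (if ((s, (0 : unitInterval)) : unitInterval × unitInterval).2 ≤ t n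
        then G₁ (s, (0 : unitInterval)) else G₂ (s, (0 : unitInterval))) = g s
      rw [if_pos hcond]
      exact hG₁0 s hs

/-- Every point of `I` lies in some cell of a monotone partition. -/
private lemma exists_cell (t : ℕ → unitInterval) (hmono : Monotone t) (ht0 : t 0 = 0) {n : ℕ}
    (htn : t n = 1) (s : unitInterval) : ∃ j, j < n ∧ s ∈ Set.Icc (t j) (t (j + 1)) := by
  classical
  have hn : n ≠ 0 := by
    rintro rfl
    have h01 : (0 : unitInterval) = 1 := ht0.symm.trans htn
    exact zero_ne_one (α := ℝ) (congrArg Subtype.val h01)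
  have hP0 : t 0 ≤ s := ht0 ▸ unitInterval.nonneg' (t := s)
  set j := Nat.findGreatest (fun j => t j ≤ s) n with hj
  have hjn : j ≤ n := Nat.findGreatest_le n
  have hjs : t j ≤ s := Nat.findGreatest_spec (P := fun k => t k ≤ s) (Nat.zero_le n) hP0
  rcases Nat.lt_or_ge j n with hlt | hge
  · refine ⟨j, hlt, hjs, ?_⟩
    by_contra hcon
    exact Nat.findGreatest_is_greatest (Nat.lt_succ_self j) (Nat.succ_le_of_lt hlt)
      (not_le.1 hcon).le
  · have hje : j = n := le_antisymm hjn hge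
    have hs1 : s = 1 := le_antisymm (unitInterval.le_one' (t := s)) (htn ▸ hje ▸ hjs)
    obtain ⟨m, rfl⟩ : ∃ m, n = m + 1 := ⟨n - 1, (Nat.succ_pred_eq_of_pos
      (Nat.pos_of_ne_zero hn)).symm⟩
    exact ⟨m, Nat.lt_succ_self m, hs1 ▸ unitInterval.le_one' (t := t m),
      by rw [htn, hs1]⟩

/-- Uniqueness of path lifts. -/
private lemma lift_unique (hp : IsCoveringMap p) (f g : unitInterval → E) (hf : Continuous f)
    (hg : Continuous g) (h : ∀ u, p (f u) = p (g u)) (h0 : f 0 = g 0) : f = g :=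
  hp.eq_of_comp_eq hf hg (funext h) 0 h0

/-- Homotopy lifting: a homotopy of loops based at `p e₀` lifts to a homotopy in `E`
starting at `e₀` on the bottom edge. -/
private lemma homotopy_lift (hp : IsCoveringMap p) (e₀ : E)
    (F : C(unitInterval × unitInterval, X)) (hF0 : ∀ s, F (s, 0) = p e₀) :
    ∃ G : unitInterval × unitInterval → E, Continuous G ∧ (∀ z, p (G z) = F z) ∧
      ∀ s, G (s, 0) = e₀ := by
  have hR : IsClopen (Set.range p) := by
    constructor
    · rw [← isOpen_compl_iff, isOpen_iff_forall_mem_open]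
      intro y hy
      obtain ⟨_, U, hyU, hU, _, H, _⟩ := hp y
      refine ⟨U, ?_, hU, hyU⟩
      rintro y' hy' ⟨e, rfl⟩
      exact hy ⟨(H ⟨e, hy'⟩).2.1, (H ⟨e, hy'⟩).2.2⟩
    · rw [isOpen_iff_forall_mem_open]
      rintro _ ⟨e, rfl⟩
      haveI : Nonempty (p ⁻¹' {p e}) := ⟨⟨e, rfl⟩⟩
      set T := (hp (p e)).toTrivialization
      exact ⟨T.baseSet, fun y hy => ⟨T.toOpenPartialHomeomorph.symm (y, ⟨e, rfl⟩),
        T.proj_symm_apply (T.mem_target.2 hy)⟩, T.open_baseSet,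
        (hp (p e)).mem_toTrivialization_baseSet⟩
  have hpre : F ⁻¹' Set.range p = univ :=
    (hR.preimage F.continuous).eq_univ ⟨(0, 0), ⟨e₀, (hF0 0).symm⟩⟩
  have hrange : ∀ z, ∃ e, p e = F z := fun z =>
    (hpre.symm ▸ mem_univ z : z ∈ F ⁻¹' Set.range p)
  obtain ⟨t, ht0, hmono, ⟨N, hN⟩, hcell⟩ :=
    exists_monotone_Icc_subset_open_cover_unitInterval_prod_self
      (c := fun e : E => F ⁻¹' (haveI : Nonempty (p ⁻¹' {p e}) := ⟨⟨e, rfl⟩⟩;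
        (hp (p e)).toTrivialization.baseSet))
      (fun e => haveI : Nonempty (p ⁻¹' {p e}) := ⟨⟨e, rfl⟩⟩;
        (hp (p e)).toTrivialization.open_baseSet.preimage F.continuous)
      (fun z _ => by
        obtain ⟨e, he⟩ := hrange z
        haveI : Nonempty (p ⁻¹' {p e}) := ⟨⟨e, rfl⟩⟩
        refine mem_iUnion.2 ⟨e, ?_⟩
        show F z ∈ (hp (p e)).toTrivialization.baseSet
        rw [← he]
        exact (hp (p e)).mem_toTrivialization_baseSet)
  have ht1 : t N = 1 := hN N le_rfl
  have key : ∀ (J : Set unitInterval), _root_.IsPreconnected J →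
      (∃ j, J ⊆ Set.Icc (t j) (t (j + 1))) →
      ∃ G : unitInterval × unitInterval → E,
        ContinuousOn G (J ×ˢ (univ : Set unitInterval)) ∧
        (∀ z ∈ J ×ˢ (univ : Set unitInterval), p (G z) = F z) ∧ ∀ s ∈ J, G (s, 0) = e₀ := by
    rintro J hJ ⟨j, hjsub⟩
    have hcells : ∀ i < N, ∃ x, ∃ _ : Nonempty (p ⁻¹' {x}), ∀ z ∈ J ×ˢ Set.Icc (t i) (t (i + 1)),
        F z ∈ (hp x).toTrivialization.baseSet := by
      intro i _
      obtain ⟨x, hx⟩ := hcell j i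
      exact ⟨p x, ⟨⟨x, rfl⟩⟩, fun z hz => hx ⟨hjsub hz.1, hz.2⟩⟩
    obtain ⟨G, hGc, hGp, hG0⟩ := strip_lift hp F hJ t ht0 hmono N hcells
      (g := fun _ => e₀) continuousOn_const (fun s _ => (hF0 s).symm)
    have huniv : Set.Icc (0 : unitInterval) (t N) = univ := by
      rw [ht1]
      ext u
      simp [unitInterval.nonneg', unitInterval.le_one']
    rw [huniv] at hGc hGp
    exact ⟨G, hGc, hGp, hG0⟩
  have exL : ∀ s : unitInterval, ∃ L : unitInterval → E, Continuous L ∧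
      (∀ u, p (L u) = F (s, u)) ∧ L 0 = e₀ := by
    intro s
    obtain ⟨j, _, hs⟩ := exists_cell t hmono ht0 ht1 s
    obtain ⟨G, hGc, hGp, hG0⟩ := key {s} isPreconnected_singleton ⟨j, singleton_subset_iff.2 hs⟩
    exact ⟨fun u => G (s, u), hGc.comp_continuous (Continuous.prodMk_right s) (fun u => ⟨rfl, trivial⟩),
      fun u => hGp (s, u) ⟨rfl, trivial⟩, hG0 s rfl⟩
  choose L hLc hLp hL0 using exL
  refine ⟨fun z => L z.1 z.2, ?_, fun z => hLp z.1 z.2, fun s => hL0 s⟩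
  apply (locallyFinite_of_finite
    (fun j : Fin N => Set.Icc (t j) (t (j + 1)) ×ˢ (univ : Set unitInterval))).continuous
  · ext z
    simp only [mem_iUnion, mem_univ, iff_true]
    obtain ⟨j, hj, hz⟩ := exists_cell t hmono ht0 ht1 z.1
    exact ⟨⟨j, hj⟩, hz, trivial⟩
  · exact fun j => isClosed_Icc.prod isClosed_univ
  · intro j
    obtain ⟨G, hGc, hGp, hG0⟩ := key (Set.Icc (t j) (t (j + 1))) isPreconnected_Icc_I
      ⟨j, subset_rfl⟩
    apply ContinuousOn.congr hGc
    intro z hz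
    have hLG : L z.1 = fun u => G (z.1, u) := by
      apply lift_unique hp _ _ (hLc z.1)
        (hGc.comp_continuous (Continuous.prodMk_right z.1) fun u => ⟨hz.1, trivial⟩)
      · intro u
        show p (L z.1 u) = p (G (z.1, u))
        rw [hLp z.1 u, hGp (z.1, u) ⟨hz.1, trivial⟩]
      · show L z.1 0 = G (z.1, 0)
        rw [hL0, hG0 z.1 hz.1]
    show L z.1 z.2 = G z
    rw [hLG]

end Lifting

/-- The homomorphism induced on fundamental groups by a covering map is injective. -/
theorem coveringMap_pi1_injective {E X : Type u} [TopologicalSpace E] [TopologicalSpace X]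
    {p : E → X} (hp : IsCoveringMap p) (e₀ : E) :
    Function.Injective (piOneMap p hp.continuous e₀) := by
  intro a b hab
  obtain ⟨γ₀, hγ₀⟩ := Quotient.exists_rep a
  obtain ⟨γ₁, hγ₁⟩ := Quotient.exists_rep b
  have ha : a = loopClass γ₀ := hγ₀.symm
  have hb : b = loopClass γ₁ := hγ₁.symm
  rw [ha, hb, piOneMap_loopClass, piOneMap_loopClass] at hab
  have hom_eq : (⟦γ₀.map hp.continuous⟧ : Path.Homotopic.Quotient _ _)
      = ⟦γ₁.map hp.continuous⟧ := hab
  obtain ⟨H⟩ := Quotient.exact hom_eq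
  have hF0 : ∀ s, H.toHomotopy.toContinuousMap (s, 0) = p e₀ := by
    intro s
    have h := H.eq_fst s (show (0 : unitInterval) ∈ ({0, 1} : Set unitInterval) from .inl rfl)
    simpa [γ₀.source] using h
  obtain ⟨G, hGc, hGp, hG0⟩ := homotopy_lift hp e₀ H.toHomotopy.toContinuousMap hF0
  have hleft : (fun u => G (0, u)) = fun u => γ₀ u := by
    apply lift_unique hp _ _ (hGc.comp (by fun_prop)) γ₀.continuous
    · intro u
      show p (G (0, u)) = p (γ₀ u)
      have h := H.apply_zero u
      rw [hGp (0, u)]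
      simpa using h
    · show G (0, 0) = γ₀ 0
      rw [hG0 0]
      simp [γ₀.source]
  have hright : (fun u => G (1, u)) = fun u => γ₁ u := by
    apply lift_unique hp _ _ (hGc.comp (by fun_prop)) γ₁.continuous
    · intro u
      show p (G (1, u)) = p (γ₁ u)
      have h := H.apply_one u
      rw [hGp (1, u)]
      simpa using h
    · show G (1, 0) = γ₁ 0
      rw [hG0 1]
      simp [γ₁.source]
  have htop : ∀ s, G (s, 1) = e₀ := by
    have h := lift_unique hp (fun s => G (s, 1)) (fun _ => e₀) (hGc.comp (by fun_prop))
      continuous_const ?_ ?_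
    · exact fun s => congrFun h s
    · intro s
      show p (G (s, 1)) = p e₀
      have h1 := H.eq_fst s (show (1 : unitInterval) ∈ ({0, 1} : Set unitInterval) from .inr rfl)
      rw [hGp (s, 1)]
      simpa [γ₀.target] using h1
    · show G (0, 1) = e₀
      rw [congrFun hleft 1]
      simp [γ₀.target]
  have hK : Path.Homotopic γ₀ γ₁ := by
    refine ⟨{ toFun := G, continuous_toFun := hGc,
              map_zero_left := fun u => congrFun hleft u,
              map_one_left := fun u => congrFun hright u,
              prop' := ?_ }⟩
    intro s u hu
    rcases hu with rfl | rfl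
    · show G (s, 0) = γ₀ 0
      rw [hG0 s]
      simp [γ₀.source]
    · show G (s, 1) = γ₀ 1
      rw [htop s]
      simp [γ₀.target]
  rw [ha, hb]
  exact Quotient.sound hK
end

section
/- Let p : E → X be a covering map with E path-connected, let e₀ ∈ E and x₀ = p(e₀). The map sending the right coset p_*(π₁(E, e₀))·[γ] of a loop class [γ] ∈ π₁(X, x₀) to the endpoint γ̃(1) of the unique lift γ̃ of γ with γ̃(0) = e₀ is a well-defined bijection between the coset space π₁(X, x₀) ⧸ p_*(π₁(E, e₀)) and the fiber p⁻¹(x₀). -/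
open CategoryTheory

universe u

attribute [local instance] Path.Homotopic.setoid

/-! ### Auxiliary material: path and homotopy lifting for covering maps -/

open unitInterval Set

noncomputable section CoveringLifting

variable {E X : Type*} [TopologicalSpace E] [TopologicalSpace X] {p : E → X}

/-- The `k`-th cut point of the uniform subdivision of `[0,1]` into `n` pieces. -/
def cpt (n k : ℕ) : I := Set.projIcc 0 1 zero_le_one ((k : ℝ) / n)

theorem cpt_zero (n : ℕ) : cpt n 0 = 0 := by simp [cpt]

theorem cpt_self {n : ℕ} (hn : 0 < n) : cpt n n = 1 := by
  have : ((n : ℝ) / n) = 1 := div_self (by exact_mod_cast hn.ne')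
  simp [cpt, this]

theorem cpt_mono (n : ℕ) {k l : ℕ} (h : k ≤ l) : cpt n k ≤ cpt n l :=
  monotone_projIcc _ (by gcongr)

theorem cpt_dist {n : ℕ} (hn : 0 < n) (k : ℕ) : dist (cpt n (k + 1)) (cpt n k) ≤ 1 / n := by
  have := (LipschitzWith.projIcc (a := (0:ℝ)) (b := 1) zero_le_one).dist_le_mul
    (((k : ℝ) + 1) / n) ((k : ℝ) / n)
  calc dist (cpt n (k+1)) (cpt n k) ≤ 1 * dist (((k:ℝ)+1)/n) ((k:ℝ)/n) := by
        simpa [cpt, Nat.cast_add] using this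
    _ = 1 / n := by
        rw [one_mul, Real.dist_eq, div_sub_div_same]
        rw [add_sub_cancel_left, abs_of_nonneg (by positivity)]

/-- One-step extension of a partial lift across a trivialization. -/
theorem lift_step {Y : Type*} [TopologicalSpace Y] (H : C(I × Y, X))
    {c c' : I} (hcc : c ≤ c') {F : Type*} [TopologicalSpace F] (T : Bundle.Trivialization F p)
    (hT : ∀ (t : I) (y : Y), c ≤ t → t ≤ c' → H (t, y) ∈ T.baseSet)
    (L : C(I × Y, E)) (hL : ∀ (t : I) (y : Y), p (L (t, y)) = H (min t c, y)) :
    ∃ L' : C(I × Y, E), (∀ (t : I) (y : Y), p (L' (t, y)) = H (min t c', y)) ∧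
      ∀ (t : I) (y : Y), t ≤ c → L' (t, y) = L (t, y) := by
  set m : I → I := fun t => max (min t c') c with hm
  have hmc : ∀ t, c ≤ m t := fun t => le_max_right _ _
  have hmc' : ∀ t, m t ≤ c' := fun t => max_le (min_le_right _ _) hcc
  have hmem : ∀ (t : I) (y : Y), H (m t, y) ∈ T.baseSet := fun t y => hT _ y (hmc t) (hmc' t)
  have hsrc : ∀ y : Y, L (c, y) ∈ T.source := fun y => T.mem_source.2 (by
    rw [hL c y, min_self]; exact hT c y le_rfl hcc)
  set g : I × Y → E := fun q => T.toOpenPartialHomeomorph.symm (H (m q.1, q.2), (T (L (c, q.2))).2)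
    with hg
  have hTy : Continuous fun y : Y => (T (L (c, y))).2 := by
    have : Continuous fun y : Y => T (L (c, y)) :=
      T.continuousOn_toFun.comp_continuous
        (L.continuous.comp (continuous_const.prodMk continuous_id)) hsrc
    exact this.snd
  have hmcont : Continuous m := ((continuous_id.min continuous_const).max continuous_const)
  have hginner : Continuous fun q : I × Y => ((H (m q.1, q.2), (T (L (c, q.2))).2) : X × F) :=
    (H.continuous.comp ((hmcont.comp continuous_fst).prodMk continuous_snd)).prodMk
      (hTy.comp continuous_snd)
  have hgcont : Continuous g :=
    T.toOpenPartialHomeomorph.continuousOn_symm.comp_continuous hginner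
      fun q => T.mem_target.2 (hmem q.1 q.2)
  have hpg : ∀ (t : I) (y : Y), p (g (t, y)) = H (m t, y) := fun t y =>
    T.proj_symm_apply (T.mem_target.2 (hmem t y))
  have hbdry : ∀ y : Y, g (c, y) = L (c, y) := by
    intro y
    have h1 : m c = c := by
      rw [hm]; simp only []
      rw [min_eq_left hcc, max_self]
    have h2 : H (m c, y) = p (L (c, y)) := by rw [h1, hL c y, min_self]
    rw [hg]; simp only []
    rw [h2]
    exact T.symm_apply_mk_proj (hsrc y)
  refine ⟨⟨fun q => if (q.1 : ℝ) ≤ c then L q else g q, ?_⟩, ?_, ?_⟩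
  · apply Continuous.if_le L.continuous hgcont (continuous_subtype_val.comp continuous_fst)
      continuous_const
    rintro ⟨t, y⟩ hq
    have ht : t = c := Subtype.ext hq
    subst ht
    exact (hbdry y).symm
  · intro t y
    by_cases h : (t : ℝ) ≤ c
    · simp only [ContinuousMap.coe_mk, if_pos h]
      rw [hL t y]
      have ht : t ≤ c := h
      rw [min_eq_left ht, min_eq_left (ht.trans hcc)]
    · simp only [ContinuousMap.coe_mk, if_neg h]
      rw [hpg t y]
      have ht : c ≤ t := le_of_not_ge h
      rw [hm]; simp only []
      rw [max_eq_left (le_min ht hcc)]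
  · intro t y ht
    simp only [ContinuousMap.coe_mk, if_pos (Subtype.coe_le_coe.2 ht)]

/-- Lifting a "homotopy" given a fine enough subdivision. -/
theorem lift_of_subdivision {Y : Type*} [TopologicalSpace Y]
    (H : C(I × Y, X)) (n : ℕ) (hn : 0 < n)
    (hcov : ∀ k < n, ∃ (x : X) (T : Bundle.Trivialization (p ⁻¹' {x}) p),
      ∀ (t : I) (y : Y), cpt n k ≤ t → t ≤ cpt n (k + 1) → H (t, y) ∈ T.baseSet)
    (e : C(Y, E)) (he : ∀ y, p (e y) = H (0, y)) :
    ∃ L : C(I × Y, E), (∀ q : I × Y, p (L q) = H q) ∧ ∀ y, L (0, y) = e y := by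
  have key : ∀ k, k ≤ n → ∃ L : C(I × Y, E),
      (∀ (t : I) (y : Y), p (L (t, y)) = H (min t (cpt n k), y)) ∧ ∀ y, L (0, y) = e y := by
    intro k
    induction k with
    | zero =>
      intro _
      refine ⟨⟨fun q => e q.2, e.continuous.comp continuous_snd⟩, fun t y => ?_, fun y => rfl⟩
      rw [cpt_zero, min_eq_right (unitInterval.nonneg' : (0:I) ≤ t)]
      exact he y
    | succ k ih =>
      intro hk1
      obtain ⟨L, hL, hL0⟩ := ih (Nat.le_of_succ_le hk1)
      obtain ⟨x, T, hT⟩ := hcov k hk1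
      obtain ⟨L', hL', hLL⟩ := lift_step H (cpt_mono n k.le_succ) T (fun t y h h' => hT t y h h') L hL
      exact ⟨L', hL', fun y => by rw [hLL 0 y (cpt n k).2.1, hL0 y]⟩
  obtain ⟨L, hL, hL0⟩ := key n le_rfl
  refine ⟨L, fun q => ?_, hL0⟩
  have := hL q.1 q.2
  rwa [cpt_self hn, min_eq_left (unitInterval.le_one' : q.1 ≤ 1)] at this

/-- Local lifting of a homotopy near a point of the parameter space. -/
theorem exists_lift_nhds (hp : IsCoveringMap p) {Y : Type*} [TopologicalSpace Y]
    (H : C(I × Y, X)) (y₀ : Y) (e : E) (he : ∀ y, p e = H (0, y)) :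
    ∃ N : Set Y, IsOpen N ∧ y₀ ∈ N ∧ ∃ L : C(I × N, E),
      (∀ q : I × N, p (L q) = H (q.1, (q.2 : Y))) ∧ ∀ y : N, L (0, y) = e := by
  have hTdata : ∀ t : I, ∃ (u : Set I) (v : Set Y), IsOpen u ∧ IsOpen v ∧ t ∈ u ∧ y₀ ∈ v ∧
      ∃ (x : X) (T : Bundle.Trivialization (p ⁻¹' {x}) p), ∀ q : I × Y, q ∈ u ×ˢ v → H q ∈ T.baseSet := by
    intro t
    set x := H (t, y₀)
    haveI : Nonempty (p ⁻¹' {x}) := by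
      obtain ⟨Γ, hΓ, _⟩ := hp.exists_path_lifts ⟨fun s => H (s, y₀),
        H.continuous.comp (continuous_id.prodMk continuous_const)⟩ e (he y₀).symm
      exact ⟨⟨Γ t, congrFun hΓ t⟩⟩
    have hmem : H (t, y₀) ∈ ((hp x).toTrivialization).baseSet :=
      IsEvenlyCovered.mem_toTrivialization_baseSet (hp x)
    have hopen : IsOpen (H ⁻¹' ((hp x).toTrivialization).baseSet) :=
      ((hp x).toTrivialization).open_baseSet.preimage H.continuous
    obtain ⟨u, v, hu, hv, htu, hyv, huv⟩ := isOpen_prod_iff.1 hopen t y₀ hmem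
    exact ⟨u, v, hu, hv, htu, hyv, x, (hp x).toTrivialization, fun q hq => huv hq⟩
  choose u v hu hv htu hyv x T hT using hTdata
  obtain ⟨s, hs⟩ := isCompact_univ.elim_finite_subcover u hu
    (fun t _ => mem_iUnion.2 ⟨t, htu t⟩)
  have hsne : ∀ t : I, ∃ i ∈ s, t ∈ u i := fun t => by
    simpa using hs (mem_univ t)
  obtain ⟨δ, hδ, hleb⟩ := lebesgue_number_lemma_of_metric isCompact_univ
    (fun i : s => hu i) (by
      intro t _
      obtain ⟨i, hi, hti⟩ := hsne t
      exact mem_iUnion.2 ⟨⟨i, hi⟩, hti⟩)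
  obtain ⟨n, hn⟩ := exists_nat_one_div_lt hδ
  set N : Set Y := ⋂ i ∈ s, v i with hN
  have hNopen : IsOpen N := isOpen_biInter_finset (fun i _ => hv i)
  have hNmem : y₀ ∈ N := mem_iInter₂.2 fun i _ => hyv i
  set H' : C(I × N, X) := ⟨fun q => H (q.1, (q.2 : Y)),
    H.continuous.comp (continuous_fst.prodMk (continuous_subtype_val.comp continuous_snd))⟩
    with hH'
  have hcov : ∀ k < (n+1), ∃ (x' : X) (T' : Bundle.Trivialization (p ⁻¹' {x'}) p),
      ∀ (t : I) (y : N), cpt (n+1) k ≤ t → t ≤ cpt (n+1) (k+1) → H' (t, y) ∈ T'.baseSet := by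
    intro k _
    obtain ⟨i, hi⟩ := hleb (cpt (n+1) k) (mem_univ _)
    refine ⟨x i, T i, fun t y h h' => ?_⟩
    have ht : t ∈ u (i : I) := by
      apply hi
      rw [Metric.mem_ball]
      have h1 : dist t (cpt (n+1) k) ≤ dist (cpt (n+1) (k+1)) (cpt (n+1) k) := by
        have hh : ((cpt (n+1) k : I) : ℝ) ≤ (t : ℝ) := h
        have hh' : ((t : I) : ℝ) ≤ ((cpt (n+1) (k+1) : I) : ℝ) := h'
        rw [Subtype.dist_eq, Subtype.dist_eq, Real.dist_eq, Real.dist_eq,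
          abs_of_nonneg (sub_nonneg.2 hh), abs_of_nonneg (sub_nonneg.2 (hh.trans hh'))]
        exact sub_le_sub hh' le_rfl
      calc dist t (cpt (n+1) k) ≤ dist (cpt (n+1) (k+1)) (cpt (n+1) k) := h1
        _ ≤ 1 / (n+1) := by exact_mod_cast cpt_dist (Nat.succ_pos n) k
        _ < δ := by exact_mod_cast hn
    have hy : (y : Y) ∈ v (i : I) := by
      have hyN : (y : Y) ∈ ⋂ j ∈ s, v j := y.2
      exact mem_iInter₂.1 hyN i i.2
    exact hT i (t, (y : Y)) ⟨ht, hy⟩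
  obtain ⟨L, hL, hL0⟩ := lift_of_subdivision H' (n+1) (Nat.succ_pos n) hcov
    (ContinuousMap.const _ e) (fun y => he y)
  exact ⟨N, hNopen, hNmem, L, hL, hL0⟩

/-- Path lifting for covering maps. -/
theorem exists_path_lift (hp : IsCoveringMap p) (γ : C(I, X)) (e : E) (he : p e = γ 0) :
    ∃ Γ : C(I, E), Γ 0 = e ∧ ∀ t, p (Γ t) = γ t := by
  obtain ⟨N, _, hNmem, L, hLp, hL0⟩ := exists_lift_nhds hp
    (⟨fun q : I × Unit => γ q.1, γ.continuous.comp continuous_fst⟩ : C(I × Unit, X))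
    () e (fun _ => he.trans rfl)
  refine ⟨⟨fun t => L (t, ⟨(), hNmem⟩), L.continuous.comp
    (continuous_id.prodMk continuous_const)⟩, hL0 _, fun t => hLp (t, ⟨(), hNmem⟩)⟩

theorem path_lift_unique (hp : IsCoveringMap p) (Γ₁ Γ₂ : C(I, E))
    (h : ∀ t, p (Γ₁ t) = p (Γ₂ t)) (h0 : Γ₁ 0 = Γ₂ 0) : ∀ t, Γ₁ t = Γ₂ t := by
  have := hp.eq_of_comp_eq (A := I) Γ₁.continuous Γ₂.continuous (funext h) 0 h0
  exact fun t => congrFun this t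

/-- Monodromy: homotopic paths have lifts with the same endpoint. -/
theorem lift_homotopic_end_eq (hp : IsCoveringMap p) {x y : X} {γ₀ γ₁ : Path x y}
    (h : Path.Homotopic γ₀ γ₁) (e : E) (Γ₀ Γ₁ : C(I, E)) (h00 : Γ₀ 0 = e) (h10 : Γ₁ 0 = e)
    (hp0 : ∀ t, p (Γ₀ t) = γ₀ t) (hp1 : ∀ t, p (Γ₁ t) = γ₁ t) : Γ₀ 1 = Γ₁ 1 := by
  obtain ⟨H⟩ := h
  set Hsw : C(I × I, X) := ⟨fun q => H (q.2, q.1),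
    H.continuous.comp (continuous_snd.prodMk continuous_fst)⟩ with hHsw
  have hpe : p e = x := by rw [← h00, hp0 0, γ₀.source]
  have hsrc : ∀ s : I, p e = Hsw (0, s) := fun s => by
    rw [hpe]; exact (H.source s).symm
  have hlifts : ∀ s : I, ∃ Γ : C(I, E), Γ 0 = e ∧ ∀ t, p (Γ t) = Hsw (t, s) := fun s =>
    exists_path_lift hp ⟨fun t => Hsw (t, s),
      Hsw.continuous.comp (continuous_id.prodMk continuous_const)⟩ e (hsrc s)
  choose Γs hΓ0 hΓp using hlifts
  set ε : I → E := fun s => Γs s 1 with hε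
  have key : ∀ s₀ : I, ∀ᶠ s in nhds s₀, ε s = ε s₀ := by
    intro s₀
    obtain ⟨N, hNopen, hNmem, L, hLp, hL0⟩ := exists_lift_nhds hp Hsw s₀ e hsrc
    have hεL : ∀ sN : N, ε (sN : I) = L (1, sN) := by
      intro sN
      have := path_lift_unique hp (Γs (sN : I))
        ⟨fun t => L (t, sN), L.continuous.comp (continuous_id.prodMk continuous_const)⟩
        (fun t => by rw [hΓp (sN : I) t]; exact (hLp (t, sN)).symm)
        (by rw [hΓ0]; exact (hL0 sN).symm)
      exact this 1
    have hfib : ∀ sN : N, L (1, sN) ∈ p ⁻¹' {y} := by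
      intro sN
      have := hLp (1, sN)
      simp only [Set.mem_preimage, Set.mem_singleton_iff, this]
      exact H.target _
    haveI : DiscreteTopology ↥(p ⁻¹' {y}) := (hp y).1
    set g : N → ↥(p ⁻¹' {y}) := fun sN => ⟨L (1, sN), hfib sN⟩ with hg
    have hgc : Continuous g := Continuous.subtype_mk
      (L.continuous.comp (continuous_const.prodMk continuous_id)) _
    set s₀' : N := ⟨s₀, hNmem⟩
    have hO : IsOpen (g ⁻¹' {g s₀'}) := (isOpen_discrete _).preimage hgc
    have hOopen : IsOpen (Subtype.val '' (g ⁻¹' {g s₀'})) :=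
      hNopen.isOpenMap_subtype_val _ hO
    have hs₀O : s₀ ∈ Subtype.val '' (g ⁻¹' {g s₀'}) := ⟨s₀', rfl, rfl⟩
    filter_upwards [hOopen.mem_nhds hs₀O] with s hs
    obtain ⟨sN, hsN, rfl⟩ := hs
    have : L (1, sN) = L (1, s₀') := congrArg Subtype.val hsN
    rw [hεL sN, hεL s₀', this]
  have hlc : IsLocallyConstant ε := (IsLocallyConstant.iff_eventually_eq ε).2 key
  have h01 : ε 0 = ε 1 := hlc.apply_eq_of_preconnectedSpace 0 1
  have hε0 : ε 0 = Γ₀ 1 := by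
    have := path_lift_unique hp (Γs 0) Γ₀
      (fun t => by rw [hΓp 0 t, hp0 t]; exact H.apply_zero t)
      (by rw [hΓ0, h00])
    exact this 1
  have hε1 : ε 1 = Γ₁ 1 := by
    have := path_lift_unique hp (Γs 1) Γ₁
      (fun t => by rw [hΓp 1 t, hp1 t]; exact H.apply_one t)
      (by rw [hΓ0, h10])
    exact this 1
  rw [← hε0, ← hε1]
  exact h01

end CoveringLifting

/-! ### Auxiliary material: `loopClass` algebra -/

section LoopClass

variable {X : Type u} [TopologicalSpace X] {x : X}

theorem loopClass_mul (γ δ : Path x x) :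
    loopClass γ * loopClass δ = loopClass (δ.trans γ) :=
  rfl

theorem loopClass_inv (γ : Path x x) : (loopClass γ)⁻¹ = loopClass γ.symm :=
  rfl

theorem loopClass_sound {γ δ : Path x x} (h : Path.Homotopic γ δ) :
    loopClass γ = loopClass δ :=
  Quotient.sound h

theorem exists_loopClass (a : FundamentalGroup X x) : ∃ γ : Path x x, a = loopClass γ := by
  obtain ⟨γ, hγ⟩ := Quotient.exists_rep (FundamentalGroup.toPath (X := TopCat.of X) a)
  exact ⟨γ, hγ.symm⟩

end LoopClass

/-- For a covering map `p : E → X` with `E` path-connected, `e₀ ∈ E` and `x₀ = p e₀`, the map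
sending the coset of a loop class `[γ]` to the endpoint of the unique lift of `γ` starting
at `e₀` is a well-defined bijection from the coset space `π₁(X, x₀) ⧸ p₊(π₁(E, e₀))` to the
fiber `p⁻¹(x₀)`.  (Since multiplication in Mathlib's `FundamentalGroup` composes loops in the
order opposite to path concatenation, Mathlib's coset space `G ⧸ H` consists exactly of the
right cosets `H·[γ]` of the traditional convention.) -/
theorem coset_space_equiv_fiber {E X : Type u} [TopologicalSpace E] [TopologicalSpace X]
    {p : E → X} (hp : IsCoveringMap p) [PathConnectedSpace E] (e₀ : E) :
    ∃ f : FundamentalGroup X (p e₀) ⧸ (piOneMap p hp.continuous e₀).range ≃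
        {e : E // p e = p e₀},
      ∀ (γ : Path (p e₀) (p e₀)) (η : C(unitInterval, E)),
        η 0 = e₀ → ∀ hηγ : ∀ t, p (η t) = γ t,
          f (QuotientGroup.mk (loopClass γ)) = ⟨η 1, (hηγ 1).trans γ.target⟩ := by
  classical
  have hpc : Continuous p := hp.continuous
  -- lifts of loops at `p e₀`, starting at `e₀`
  have hlift : ∀ γ : Path (p e₀) (p e₀), ∃ Γ : C(I, E), Γ 0 = e₀ ∧ ∀ t, p (Γ t) = γ t :=
    fun γ => exists_path_lift hp γ.toContinuousMap e₀ γ.source.symm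
  choose Γf hΓ0 hΓp using hlift
  set endpt : Path (p e₀) (p e₀) → {e : E // p e = p e₀} :=
    fun γ => ⟨Γf γ 1, by rw [hΓp γ 1, γ.target]⟩ with hendpt
  have huniq : ∀ (γ : Path (p e₀) (p e₀)) (η : C(I, E)), η 0 = e₀ →
      (∀ t, p (η t) = γ t) → ∀ t, η t = Γf γ t := fun γ η h0 hη =>
    path_lift_unique hp η (Γf γ) (fun t => by rw [hη t, hΓp γ t]) (by rw [h0, hΓ0])
  have hhomo : ∀ γ δ : Path (p e₀) (p e₀), Path.Homotopic γ δ → endpt γ = endpt δ := by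
    intro γ δ h
    exact Subtype.ext
      (lift_homotopic_end_eq hp h e₀ (Γf γ) (Γf δ) (hΓ0 γ) (hΓ0 δ) (hΓp γ) (hΓp δ))
  set F0 : FundamentalGroup X (p e₀) → {e : E // p e = p e₀} := fun a =>
    Quotient.liftOn (FundamentalGroup.toPath (X := TopCat.of X) a) endpt
      (fun γ δ h => hhomo γ δ h) with hF0
  have hF0loop : ∀ γ : Path (p e₀) (p e₀), F0 (loopClass γ) = endpt γ := fun γ => rfl
  -- the endpoint of a lift of a concatenation
  have htrans : ∀ (γ δ : Path (p e₀) (p e₀)) (Γ Δ : C(I, E)) (hΓ0' : Γ 0 = e₀)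
      (hΓp' : ∀ t, p (Γ t) = γ t) (hΔ0' : Δ 0 = Γ 1) (hΔp' : ∀ t, p (Δ t) = δ t),
      (endpt (γ.trans δ) : E) = Δ 1 := by
    intro γ δ Γ Δ hΓ0' hΓp' hΔ0' hΔp'
    set PΓ : Path e₀ (Γ 1) := ⟨Γ, hΓ0', rfl⟩
    set PΔ : Path (Γ 1) (Δ 1) := ⟨Δ, hΔ0', rfl⟩
    have hlifts : ∀ t, p ((PΓ.trans PΔ) t) = (γ.trans δ) t := by
      intro t
      rw [Path.trans_apply, Path.trans_apply]
      split_ifs with h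
      · exact hΓp' _
      · exact hΔp' _
    have h1 := huniq (γ.trans δ) (PΓ.trans PΔ).toContinuousMap (PΓ.trans PΔ).source
      hlifts 1
    have h2 : (PΓ.trans PΔ).toContinuousMap 1 = Δ 1 := (PΓ.trans PΔ).target
    show Γf (γ.trans δ) 1 = Δ 1
    rw [← h1, h2]
  -- well-definedness on the coset space
  have hwd : ∀ a b : FundamentalGroup X (p e₀),
      a⁻¹ * b ∈ (piOneMap p hp.continuous e₀).range → F0 a = F0 b := by
    intro a b hab
    obtain ⟨g, hg⟩ := hab
    obtain ⟨α, rfl⟩ := exists_loopClass g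
    rw [piOneMap_loopClass] at hg
    obtain ⟨γa, rfl⟩ := exists_loopClass a
    have hb : b = loopClass ((α.map hpc).trans γa) := by
      have h1 : loopClass γa * loopClass (α.map hpc) = b := by
        rw [hg]; exact mul_inv_cancel_left _ _
      rw [loopClass_mul] at h1
      exact h1.symm
    rw [hb, hF0loop, hF0loop]
    refine Subtype.ext ?_
    have := htrans (α.map hpc) γa α.toContinuousMap (Γf γa) α.source
      (fun t => rfl) (by rw [hΓ0 γa]; exact α.target.symm) (hΓp γa)
    exact this.symm
  set F : (FundamentalGroup X (p e₀) ⧸ (piOneMap p hp.continuous e₀).range) →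
      {e : E // p e = p e₀} := fun q =>
    Quotient.liftOn' q F0 (fun a b h => hwd a b (QuotientGroup.leftRel_apply.1 h)) with hF
  have hFmk : ∀ a : FundamentalGroup X (p e₀), F (QuotientGroup.mk a) = F0 a := fun a => rfl
  -- injectivity
  have hinj : Function.Injective F := by
    intro q₁ q₂
    refine Quotient.inductionOn₂' q₁ q₂ ?_
    intro a b hab
    obtain ⟨γa, rfl⟩ := exists_loopClass a
    obtain ⟨γb, rfl⟩ := exists_loopClass b
    have hend : Γf γa 1 = Γf γb 1 := congrArg Subtype.val hab
    apply Quotient.sound'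
    rw [QuotientGroup.leftRel_apply, loopClass_inv, loopClass_mul]
    -- build the loop in `E` lifting `γb.trans γa.symm`
    set PΓa : Path e₀ (Γf γa 1) := ⟨Γf γa, hΓ0 γa, rfl⟩ with hPΓa
    set PΓb : Path e₀ (Γf γb 1) := ⟨Γf γb, hΓ0 γb, rfl⟩ with hPΓb
    set α : Path e₀ e₀ := PΓb.trans (PΓa.symm.cast hend.symm rfl) with hα
    refine ⟨loopClass α, ?_⟩
    rw [piOneMap_loopClass]
    apply loopClass_sound
    have hfun : ∀ t, (α.map hpc) t = (γb.trans γa.symm) t := by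
      intro t
      show p (α t) = (γb.trans γa.symm) t
      rw [hα]
      rw [Path.trans_apply, Path.trans_apply]
      split_ifs with h
      · exact hΓp γb _
      · show p ((PΓa.symm.cast hend.symm rfl) _) = γa.symm _
        rw [Path.cast_coe]
        show p (PΓa (unitInterval.symm _)) = γa.symm _
        exact hΓp γa _
    have : α.map hpc = γb.trans γa.symm := by
      ext t
      exact hfun t
    rw [this]
  -- surjectivity
  have hsurj : Function.Surjective F := by
    intro e
    set η : Path e₀ (e : E) := PathConnectedSpace.somePath e₀ (e : E) with hη
    set γ : Path (p e₀) (p e₀) := (η.map hpc).cast rfl e.2.symm with hγdef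
    refine ⟨QuotientGroup.mk (loopClass γ), ?_⟩
    rw [hFmk, hF0loop]
    refine Subtype.ext ?_
    have hηγ : ∀ t, p (η t) = γ t := by
      intro t
      rw [hγdef]
      show p (η t) = ((η.map hpc).cast rfl e.2.symm) t
      rw [Path.cast_coe]
      rfl
    have := huniq γ η.toContinuousMap η.source hηγ 1
    show Γf γ 1 = (e : E)
    rw [← this]
    exact η.target
  refine ⟨Equiv.ofBijective F ⟨hinj, hsurj⟩, ?_⟩
  intro γ η h0 hηγ
  show F (QuotientGroup.mk (loopClass γ)) = _
  rw [hFmk, hF0loop]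
  refine Subtype.ext ?_
  show Γf γ 1 = η 1
  exact (huniq γ η h0 hηγ 1).symm
end

section
/- Let p : E → X be a covering map with E simply connected, let e₀ ∈ E and x₀ = p(e₀). The map sending the class [γ] ∈ π₁(X, x₀) of a loop γ at x₀ to the endpoint γ̃(1) of the unique lift γ̃ of γ with γ̃(0) = e₀ is a bijection between π₁(X, x₀) and the fiber p⁻¹(x₀). -/
open CategoryTheory

universe u

attribute [local instance] Path.Homotopic.setoid

noncomputable section CoveringLiftAux

open scoped unitInterval
open Set Topology Filter

namespace CoveringLiftAux

variable {E X A : Type*} [TopologicalSpace E] [TopologicalSpace X] [TopologicalSpace A]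
  {p : E → X}

/-- Local (in the parameter) lifting of a homotopy through a covering map. -/
theorem exists_localLift (hp : IsCoveringMap p) (H : C(A × I, X)) (h₀ : A → E)
    (h₀c : Continuous h₀) (hh₀ : ∀ a, p (h₀ a) = H (a, 0)) (a : A) :
    ∃ V : Set A, IsOpen V ∧ a ∈ V ∧ ∃ L : A × I → E,
      ContinuousOn L (V ×ˢ univ) ∧ (∀ b ∈ V, L (b, 0) = h₀ b) ∧
        ∀ b ∈ V, ∀ t, p (L (b, t)) = H (b, t) := by
  classical
  set S : Set ℝ := {r | r ∈ Icc (0:ℝ) 1 ∧ ∃ V : Set A, IsOpen V ∧ a ∈ V ∧ ∃ L : A × I → E,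
    ContinuousOn L (V ×ˢ univ) ∧ (∀ b ∈ V, L (b, 0) = h₀ b) ∧
      ∀ b ∈ V, ∀ t : I, (t : ℝ) ≤ r → p (L (b, t)) = H (b, t)} with hSdef
  have hanti : ∀ r ∈ S, ∀ r' ∈ Icc (0:ℝ) 1, r' ≤ r → r' ∈ S := by
    rintro r ⟨hr, V, hV, haV, L, hL, h0, hlift⟩ r' hr' hle
    exact ⟨hr', V, hV, haV, L, hL, h0, fun b hb t ht => hlift b hb t (ht.trans hle)⟩
  have h0S : (0:ℝ) ∈ S := by
    refine ⟨⟨le_refl 0, zero_le_one⟩, univ, isOpen_univ, mem_univ a, fun z => h₀ z.1,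
      (h₀c.comp continuous_fst).continuousOn, fun b _ => rfl, fun b _ t ht => ?_⟩
    have ht0 : t = 0 := Subtype.ext (le_antisymm ht t.2.1)
    rw [ht0]; exact hh₀ b
  have key : ∀ r ∈ Icc (0:ℝ) 1, ∃ ε > 0, ∀ b ∈ S, r - ε < b → min (r + ε) 1 ∈ S := by
    rintro r hr
    set x := H (a, ⟨r, hr⟩) with hx
    rcases isEmpty_or_nonempty (p ⁻¹' {x}) with hne | hne
    · obtain ⟨_, U, hxU, hU, _, Φ, -⟩ := hp x
      have hempty : ∀ e, p e ∉ U := fun e he => hne.false (Φ ⟨e, he⟩).2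
      have hO : IsOpen (⇑H ⁻¹' U) := hU.preimage H.continuous
      have hmemO : (a, (⟨r, hr⟩ : I)) ∈ ⇑H ⁻¹' U := hxU
      obtain ⟨V', hV', J, hJ, hVJ⟩ := mem_nhds_prod_iff.mp (hO.mem_nhds hmemO)
      obtain ⟨ε', hε', hball⟩ := Metric.mem_nhds_iff.mp hJ
      refine ⟨ε' / 2, by positivity, ?_⟩
      rintro b hbS hbr
      have hmIcc : min (r + ε' / 2) 1 ∈ Icc (0:ℝ) 1 :=
        ⟨le_min (by linarith [hr.1]) zero_le_one, min_le_right _ _⟩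
      rcases le_or_gt (min (r + ε' / 2) 1) b with hmb | hbm
      · exact hanti b hbS _ hmIcc hmb
      · obtain ⟨hbI, V, _, haV, L, _, _, hLl⟩ := hbS
        exfalso
        apply hempty (L (a, ⟨b, hbI⟩))
        rw [hLl a haV ⟨b, hbI⟩ le_rfl]
        refine hVJ (Set.mk_mem_prod (mem_of_mem_nhds hV') (hball ?_))
        rw [Metric.mem_ball]
        show dist b r < ε'
        rw [Real.dist_eq, abs_sub_lt_iff]
        constructor <;> linarith [min_le_left (r + ε' / 2) 1]
    set T := (hp x).toTrivialization with hTdef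
    have hT : x ∈ T.baseSet := (hp x).mem_toTrivialization_baseSet
    have hO : IsOpen (⇑H ⁻¹' T.baseSet) := T.open_baseSet.preimage H.continuous
    have hmemO : (a, (⟨r, hr⟩ : I)) ∈ ⇑H ⁻¹' T.baseSet := hT
    obtain ⟨V', hV', J, hJ, hVJ⟩ := mem_nhds_prod_iff.mp (hO.mem_nhds hmemO)
    obtain ⟨V₀, hV₀sub, hV₀open, haV₀⟩ := mem_nhds_iff.mp hV'
    obtain ⟨ε', hε', hball⟩ := Metric.mem_nhds_iff.mp hJ
    refine ⟨ε' / 2, by positivity, ?_⟩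
    rintro b hbS hbr
    have hmIcc : min (r + ε' / 2) 1 ∈ Icc (0:ℝ) 1 :=
      ⟨le_min (by linarith [hr.1]) zero_le_one, min_le_right _ _⟩
    rcases le_or_gt (min (r + ε' / 2) 1) b with hmb | hbm
    · exact hanti b hbS _ hmIcc hmb
    · obtain ⟨hbI, V, hVopen, haV, L, hLc, hL0, hLl⟩ := hbS
      set b' : I := ⟨b, hbI⟩ with hb'def
      set m : ℝ := min (r + ε' / 2) 1 with hm
      have hbm' : b ≤ m := hbm.le
      have hm1 : m ≤ 1 := min_le_right _ _
      have hm0 : (0:ℝ) ≤ m := le_trans hbI.1 hbm'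
      have hballmem : ∀ t : I, b ≤ (t : ℝ) → (t : ℝ) ≤ m → t ∈ J := by
        intro t h1 h2
        apply hball
        rw [Metric.mem_ball, Subtype.dist_eq, Real.dist_eq, abs_sub_lt_iff]
        constructor
        · have h3 : (t : ℝ) ≤ r + ε' / 2 := h2.trans (min_le_left _ _)
          linarith
        · linarith
      have hbase : ∀ c ∈ V ∩ V₀, ∀ t : I, b ≤ (t : ℝ) → (t : ℝ) ≤ m →
          H (c, t) ∈ T.baseSet := fun c hc t h1 h2 =>
        hVJ (Set.mk_mem_prod (hV₀sub hc.2) (hballmem t h1 h2))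
      -- the clamping map into [b, m]
      set sg : I → I := fun t => ⟨min (max (t : ℝ) b) m,
        ⟨le_trans hbI.1 (le_min (le_max_right _ _) hbm'), (min_le_right _ _).trans hm1⟩⟩
        with hsgdef
      have hsgc : Continuous sg :=
        Continuous.subtype_mk ((continuous_subtype_val.max continuous_const).min
          continuous_const) _
      have hsg1 : ∀ t, b ≤ (sg t : ℝ) := fun t => le_min (le_max_right _ _) hbm'
      have hsg2 : ∀ t, (sg t : ℝ) ≤ m := fun t => min_le_right _ _
      have hsgb : sg b' = b' := by
        apply Subtype.ext
        show min (max b b) m = b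
        rw [max_self, min_eq_left hbm']
      have hsgid : ∀ t : I, b ≤ (t : ℝ) → (t : ℝ) ≤ m → sg t = t := by
        intro t h1 h2
        apply Subtype.ext
        show min (max (t : ℝ) b) m = (t : ℝ)
        rw [max_eq_left h1, min_eq_left h2]
      set c : A → (p ⁻¹' {x}) := fun z => (T (L (z, b'))).2 with hcdef
      set g : A × I → E := fun z => T.toPartialHomeomorph.symm (H (z.1, sg z.2), c z.1)
        with hgdef
      set L' : A × I → E := fun z => if (z.2 : ℝ) ≤ b then L z else g z with hL'def
      have hsrc : ∀ z ∈ V ∩ V₀, L (z, b') ∈ T.source := by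
        intro z hz
        rw [T.mem_source, hLl z hz.1 b' (le_refl b)]
        exact hbase z hz b' le_rfl hbm'
      have htgt : ∀ z ∈ V ∩ V₀, ∀ t : I, (H (z, sg t), c z) ∈ T.target := by
        intro z hz t
        rw [T.mem_target]
        exact hbase z hz (sg t) (hsg1 t) (hsg2 t)
      have hfr : ∀ z ∈ V ∩ V₀, L (z, b') = g (z, b') := by
        intro z hz
        have h1 : g (z, b') = T.toPartialHomeomorph.symm (p (L (z, b')), (T (L (z, b'))).2) := by
          simp only [hgdef, hsgb, hcdef]
          rw [hLl z hz.1 b' (le_refl b)]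
        rw [h1]
        exact (T.symm_apply_mk_proj (hsrc z hz)).symm
      -- continuity of the second piece
      have hgc : ContinuousOn g ((V ∩ V₀) ×ˢ (univ : Set I)) := by
        have hLb : ContinuousOn (fun z : A => L (z, b')) (V ∩ V₀) :=
          hLc.comp (Continuous.continuousOn (continuous_id.prodMk continuous_const))
            (fun z hz => ⟨hz.1, mem_univ _⟩)
        have hTc : ContinuousOn (fun z : A => T (L (z, b'))) (V ∩ V₀) :=
          T.toPartialHomeomorph.continuousOn.comp hLb (fun z hz => hsrc z hz)
        have hcc : ContinuousOn c (V ∩ V₀) := continuous_snd.comp_continuousOn hTc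
        have hinner : ContinuousOn (fun z : A × I => (H (z.1, sg z.2), c z.1))
            ((V ∩ V₀) ×ˢ (univ : Set I)) := by
          apply ContinuousOn.prodMk
          · exact (H.continuous.comp (continuous_fst.prodMk
              (hsgc.comp continuous_snd))).continuousOn
          · exact hcc.comp continuous_fst.continuousOn (fun z hz => hz.1)
        exact T.toPartialHomeomorph.continuousOn_symm.comp hinner
          (fun z hz => htgt z.1 hz.1 z.2)
      have hL'c : ContinuousOn L' ((V ∩ V₀) ×ˢ (univ : Set I)) := by
        apply ContinuousOn.if
        · rintro z ⟨hz, hzfr⟩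
          have : (z.2 : ℝ) = b := frontier_le_subset_eq
            (continuous_subtype_val.comp continuous_snd) continuous_const hzfr
          have hz2 : z.2 = b' := Subtype.ext this
          have hzz : z = (z.1, b') := by rw [← hz2]
          rw [hzz]
          exact hfr z.1 hz.1
        · exact hLc.mono (by rintro z ⟨⟨hz1, _⟩, _⟩; exact ⟨hz1.1, mem_univ _⟩)
        · exact hgc.mono (fun z hz => hz.1)
      refine ⟨hmIcc, V ∩ V₀, hVopen.inter hV₀open, ⟨haV, haV₀⟩, L', hL'c, ?_, ?_⟩
      · intro z hz
        have h0b : ((0 : I) : ℝ) ≤ b := hbI.1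
        simp only [hL'def, if_pos h0b]
        exact hL0 z hz.1
      · intro z hz t ht
        by_cases htb : (t : ℝ) ≤ b
        · simp only [hL'def, if_pos htb]
          exact hLl z hz.1 t htb
        · simp only [hL'def, if_neg htb]
          have h1 : b ≤ (t : ℝ) := (not_le.mp htb).le
          have h2 : p (g (z, t)) = H (z, sg t) := T.proj_symm_apply (htgt z hz t)
          rw [h2, hsgid t h1 ht]
  -- the sSup argument
  have hSne : S.Nonempty := ⟨0, h0S⟩
  have hSbdd : BddAbove S := ⟨1, fun r hr => hr.1.2⟩
  set s := sSup S with hs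
  have hs0 : 0 ≤ s := le_csSup hSbdd h0S
  have hs1 : s ≤ 1 := csSup_le hSne (fun r hr => hr.1.2)
  obtain ⟨ε, hε, hkey⟩ := key s ⟨hs0, hs1⟩
  obtain ⟨b, hbS, hbs⟩ := exists_lt_of_lt_csSup hSne (by linarith : s - ε < s)
  have hmS : min (s + ε) 1 ∈ S := hkey b hbS hbs
  have hms : min (s + ε) 1 ≤ s := le_csSup hSbdd hmS
  have hseq : s = 1 := by
    by_contra h
    have hlt : s < 1 := lt_of_le_of_ne hs1 h
    have : s < min (s + ε) 1 := lt_min (by linarith) hlt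
    linarith
  have h1S : (1:ℝ) ∈ S := by
    have : min (s + ε) 1 = 1 := by rw [hseq]; exact min_eq_right (by linarith)
    rwa [this] at hmS
  obtain ⟨_, V, hV, haV, L, hLc, hL0, hLl⟩ := h1S
  exact ⟨V, hV, haV, L, hLc, hL0, fun z hz t => hLl z hz t t.2.2⟩

/-- Global lifting of a homotopy through a covering map. -/
theorem exists_lift (hp : IsCoveringMap p) (H : C(A × I, X)) (h₀ : A → E)
    (h₀c : Continuous h₀) (hh₀ : ∀ a, p (h₀ a) = H (a, 0)) :
    ∃ L : A × I → E, Continuous L ∧ (∀ a, L (a, 0) = h₀ a) ∧ ∀ z, p (L z) = H z := by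
  classical
  choose V hVopen haV L hLc hL0 hLl using exists_localLift hp H h₀ h₀c hh₀
  have hagree : ∀ a₁ a₂ z, z ∈ V a₁ → z ∈ V a₂ → ∀ t : I, L a₁ (z, t) = L a₂ (z, t) := by
    intro a₁ a₂ z h1 h2
    have hc1 : Continuous (fun t : I => L a₁ (z, t)) :=
      (hLc a₁).comp_continuous (continuous_const.prodMk continuous_id)
        (fun t => ⟨h1, mem_univ _⟩)
    have hc2 : Continuous (fun t : I => L a₂ (z, t)) :=
      (hLc a₂).comp_continuous (continuous_const.prodMk continuous_id)
        (fun t => ⟨h2, mem_univ _⟩)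
    have heq : p ∘ (fun t : I => L a₁ (z, t)) = p ∘ (fun t : I => L a₂ (z, t)) :=
      funext fun t => (hLl a₁ z h1 t).trans (hLl a₂ z h2 t).symm
    have h00 : L a₁ (z, 0) = L a₂ (z, 0) := (hL0 a₁ z h1).trans (hL0 a₂ z h2).symm
    exact congrFun (hp.eq_of_comp_eq hc1 hc2 heq 0 h00)
  set Lg : A × I → E := fun z => L z.1 (z.1, z.2) with hLgdef
  have hLgeq : ∀ a, ∀ z ∈ (V a) ×ˢ (univ : Set I), Lg z = L a z := by
    rintro a ⟨z, t⟩ ⟨hz, -⟩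
    exact hagree z a z (haV z) hz t
  refine ⟨Lg, ?_, ?_, ?_⟩
  · rw [continuous_iff_continuousAt]
    intro z
    have hmem : (V z.1) ×ˢ (univ : Set I) ∈ 𝓝 z :=
      ((hVopen z.1).prod isOpen_univ).mem_nhds ⟨haV z.1, mem_univ _⟩
    have hca : ContinuousAt (L z.1) z := (hLc z.1).continuousAt hmem
    exact hca.congr (Filter.eventuallyEq_of_mem hmem (fun w hw => hLgeq z.1 w hw)).symm
  · intro a
    exact hL0 a a (haV a)
  · rintro ⟨z, t⟩
    exact hLl z z (haV z) t

/-- Path lifting through a covering map. -/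
theorem exists_path_lift (hp : IsCoveringMap p) (γ : C(I, X)) (e : E) (he : p e = γ 0) :
    ∃ η : C(I, E), η 0 = e ∧ ∀ t, p (η t) = γ t := by
  obtain ⟨L, hLc, hL0, hLl⟩ := exists_lift (A := Unit) hp
    (γ.comp ⟨Prod.snd, continuous_snd⟩) (fun _ => e) continuous_const (fun _ => he)
  exact ⟨⟨fun t => L ((), t), hLc.comp (continuous_const.prodMk continuous_id)⟩,
    hL0 (), fun t => hLl ((), t)⟩

/-- Monodromy: lifts of homotopic paths starting at the same point end at the same point. -/
theorem lift_end_eq (hp : IsCoveringMap p) {x₀ x₁ : X} {γ γ' : Path x₀ x₁}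
    (h : γ.Homotopic γ') {η η' : I → E} (hηc : Continuous η) (hη'c : Continuous η')
    (hη : ∀ t, p (η t) = γ t) (hη' : ∀ t, p (η' t) = γ' t) (h0 : η 0 = η' 0) :
    η 1 = η' 1 := by
  obtain ⟨F⟩ := h
  obtain ⟨L, hLc, hL0, hLl⟩ := exists_lift (A := I) hp F.toContinuousMap (fun _ => η 0)
    continuous_const (fun s => (hη 0).trans (γ.source.trans (F.source s).symm))
  have hends : L (0, 1) = L (1, 1) := by
    refine hp.const_of_comp (hLc.comp (continuous_id.prodMk continuous_const)) ?_ 0 1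
    intro s s'
    show p (L (s, 1)) = p (L (s', 1))
    rw [hLl (s, 1), hLl (s', 1)]
    show F (s, 1) = F (s', 1)
    rw [F.target, F.target]
  have hLη : (fun t : I => L (0, t)) = η := by
    refine hp.eq_of_comp_eq (hLc.comp (continuous_const.prodMk continuous_id)) hηc ?_ 0
      (hL0 0)
    funext t
    show p (L (0, t)) = p (η t)
    rw [hLl (0, t), hη t]
    exact F.apply_zero t
  have hLη' : (fun t : I => L (1, t)) = η' := by
    refine hp.eq_of_comp_eq (hLc.comp (continuous_const.prodMk continuous_id)) hη'c ?_ 0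
      ((hL0 1).trans h0)
    funext t
    show p (L (1, t)) = p (η' t)
    rw [hLl (1, t), hη' t]
    exact F.apply_one t
  calc η 1 = L (0, 1) := (congrFun hLη 1).symm
    _ = L (1, 1) := hends
    _ = η' 1 := congrFun hLη' 1

/-- Homotopy classes are preserved by `Path.cast`. -/
theorem homotopic_cast {Y : Type*} [TopologicalSpace Y] {x y x' y' : Y} (hx : x' = x)
    (hy : y' = y) {a b : Path x y} (h : a.Homotopic b) :
    (a.cast hx hy).Homotopic (b.cast hx hy) := by
  subst hx; subst hy
  exact h

end CoveringLiftAux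

end CoveringLiftAux

/-- For a covering map `p : E → X` with `E` simply connected, `e₀ ∈ E` and `x₀ = p e₀`, the map
sending the class `[γ] ∈ π₁(X, x₀)` of a loop `γ` to the endpoint of the unique lift of `γ`
starting at `e₀` is a bijection from `π₁(X, x₀)` to the fiber `p⁻¹(x₀)`. -/
theorem pi1_equiv_fiber_of_simplyConnected {E X : Type u}
    [TopologicalSpace E] [TopologicalSpace X]
    {p : E → X} (hp : IsCoveringMap p) [SimplyConnectedSpace E] (e₀ : E) :
    ∃ f : FundamentalGroup X (p e₀) ≃ {e : E // p e = p e₀},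
      ∀ (γ : Path (p e₀) (p e₀)) (η : C(unitInterval, E)),
        η 0 = e₀ → ∀ hηγ : ∀ t, p (η t) = γ t,
          f (loopClass γ) = ⟨η 1, (hηγ 1).trans γ.target⟩ := by
  classical
  have hcont : Continuous p := hp.continuous
  -- choose a lift for every loop
  have lift_ex : ∀ γ : Path (p e₀) (p e₀), ∃ η : C(unitInterval, E),
      η 0 = e₀ ∧ ∀ t, p (η t) = γ t := fun γ =>
    CoveringLiftAux.exists_path_lift hp γ.toContinuousMap e₀ γ.source.symm
  choose lft h0 hl using lift_ex
  have hfib : ∀ γ, p (lft γ 1) = p e₀ := fun γ => (hl γ 1).trans γ.target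
  have hmono : ∀ γ γ' : Path (p e₀) (p e₀), γ.Homotopic γ' → lft γ 1 = lft γ' 1 :=
    fun γ γ' h => CoveringLiftAux.lift_end_eq hp h (lft γ).continuous (lft γ').continuous
      (hl γ) (hl γ') ((h0 γ).trans (h0 γ').symm)
  set G : Path.Homotopic.Quotient (p e₀) (p e₀) → {e : E // p e = p e₀} :=
    Quotient.lift (fun γ => (⟨lft γ 1, hfib γ⟩ : {e : E // p e = p e₀}))
      (fun γ γ' h => Subtype.ext (hmono γ γ' h)) with hGdef
  set F : FundamentalGroup X (p e₀) → {e : E // p e = p e₀} :=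
    fun q => G (FundamentalGroup.toPath (X := TopCat.of X) q) with hFdef
  -- the key computation
  have hkey : ∀ (γ : Path (p e₀) (p e₀)) (η : C(unitInterval, E)) (hη0 : η 0 = e₀)
      (hηγ : ∀ t, p (η t) = γ t), F (loopClass γ) = ⟨η 1, (hηγ 1).trans γ.target⟩ := by
    intro γ η hη0 hηγ
    have hFγ : F (loopClass γ) = ⟨lft γ 1, hfib γ⟩ := rfl
    have : ⇑η = ⇑(lft γ) := by
      refine hp.eq_of_comp_eq η.continuous (lft γ).continuous ?_ 0
        (hη0.trans (h0 γ).symm)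
      funext t
      exact (hηγ t).trans (hl γ t).symm
    rw [hFγ]
    exact Subtype.ext (congrFun this 1).symm
  have hinj : Function.Injective F := by
    intro q q' hqq'
    have hG : Function.Injective G := by
      intro c c'
      refine Quotient.inductionOn₂ c c' ?_
      intro γ γ' h
      have hend : lft γ 1 = lft γ' 1 := congrArg Subtype.val h
      -- paths in E from e₀ to the common endpoint
      set pγ : Path e₀ (lft γ 1) :=
        { toContinuousMap := lft γ, source' := h0 γ, target' := rfl } with hpγ
      set pγ' : Path e₀ (lft γ 1) :=
        { toContinuousMap := lft γ', source' := h0 γ', target' := hend.symm } with hpγ'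
      have hhom : pγ.Homotopic pγ' := SimplyConnectedSpace.paths_homotopic pγ pγ'
      have hmap : (pγ.map hcont).Homotopic (pγ'.map hcont) := by
        obtain ⟨Ht⟩ := hhom
        exact ⟨Ht.map ⟨p, hcont⟩⟩
      have hcast : ((pγ.map hcont).cast rfl (hfib γ).symm).Homotopic
          ((pγ'.map hcont).cast rfl (hfib γ).symm) :=
        CoveringLiftAux.homotopic_cast rfl (hfib γ).symm hmap
      have hγeq : γ = (pγ.map hcont).cast rfl (hfib γ).symm := by
        ext t
        show γ t = p (lft γ t)
        exact (hl γ t).symm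
      have hγ'eq : γ' = (pγ'.map hcont).cast rfl (hfib γ).symm := by
        ext t
        show γ' t = p (lft γ' t)
        exact (hl γ' t).symm
      apply Quotient.sound
      rw [hγeq, hγ'eq]
      exact hcast
    have : FundamentalGroup.toPath (X := TopCat.of X) q
        = FundamentalGroup.toPath (X := TopCat.of X) q' := hG hqq'
    exact this
  have hsurj : Function.Surjective F := by
    rintro ⟨e, he⟩
    have : PathConnectedSpace E := inferInstance
    set η : Path e₀ e := PathConnectedSpace.somePath e₀ e with hη
    set γ : Path (p e₀) (p e₀) := (η.map hcont).cast rfl he.symm with hγ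
    have hηγ : ∀ t, p (η t) = γ t := fun t => rfl
    have := hkey γ η.toContinuousMap η.source hηγ
    refine ⟨loopClass γ, ?_⟩
    rw [this]
    exact Subtype.ext η.target
  refine ⟨Equiv.ofBijective F ⟨hinj, hsurj⟩, ?_⟩
  intro γ η hη0 hηγ
  have := hkey γ η hη0 hηγ
  rw [show (Equiv.ofBijective F ⟨hinj, hsurj⟩) (loopClass γ) = F (loopClass γ) from rfl, this]
end

section
/- Let X be a connected, locally path-connected topological space and p : E → X a covering map with E simply connected and locally path-connected; let e₀ ∈ E and x₀ = p(e₀). Then the deck transformation group of p is isomorphic, as a group, to the fundamental group π₁(X, x₀). -/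
open CategoryTheory

universe u

attribute [local instance] Path.Homotopic.setoid

/-- The group of self-homeomorphisms of a space, under composition
(`g * h` is "`h` first, then `g`"). -/
instance homeomorphGroup (E : Type u) [TopologicalSpace E] : Group (E ≃ₜ E) where
  one := Homeomorph.refl E
  mul g h := h.trans g
  inv := Homeomorph.symm
  mul_assoc _ _ _ := Homeomorph.ext fun _ => rfl
  one_mul _ := Homeomorph.ext fun _ => rfl
  mul_one _ := Homeomorph.ext fun _ => rfl
  inv_mul_cancel g := Homeomorph.ext g.symm_apply_apply

/-- The deck transformation group of `p : E → X`: the group of homeomorphisms `h` of `E`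
satisfying `p ∘ h = p`. -/
def deckGroup {E X : Type u} [TopologicalSpace E] [TopologicalSpace X] (p : E → X) :
    Subgroup (E ≃ₜ E) where
  carrier := {h | ∀ e, p (h e) = p e}
  mul_mem' := fun {g h} hg hh e => (hg (h e)).trans (hh e)
  one_mem' := fun _ => rfl
  inv_mem' := fun {g} hg e => (hg (g.symm e)).symm.trans (congrArg p (g.apply_symm_apply e))

/-- Deck transformations act on the total space by evaluation. -/
instance deckGroupMulAction {E X : Type u} [TopologicalSpace E] [TopologicalSpace X]
    (p : E → X) : MulAction (deckGroup p) E where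
  smul h e := h.1 e
  one_smul _ := rfl
  mul_smul _ _ _ := rfl

open unitInterval Set Topology

noncomputable section
namespace CoveringProof

variable {E X : Type*} [TopologicalSpace E] [TopologicalSpace X] {p : E → X}

lemma Icc_eq_image (a b : I) : Icc a b = projIcc 0 1 zero_le_one '' (Icc (a:ℝ) (b:ℝ)) := by
  ext x
  constructor
  · rintro ⟨h1, h2⟩
    exact ⟨x, ⟨h1, h2⟩, projIcc_val zero_le_one x⟩
  · rintro ⟨r, ⟨h1, h2⟩, rfl⟩
    refine ⟨?_, ?_⟩
    · have := monotone_projIcc (α := ℝ) zero_le_one h1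
      rwa [projIcc_val zero_le_one a] at this
    · have := monotone_projIcc (α := ℝ) zero_le_one h2
      rwa [projIcc_val zero_le_one b] at this

lemma isPreconnected_Icc_I (a b : I) : _root_.IsPreconnected (Icc a b) := by
  rw [Icc_eq_image]
  exact (isPreconnected_Icc).image _ continuous_projIcc.continuousOn

lemma isCompact_Icc_I (a b : I) : IsCompact (Icc a b) := by
  rw [Icc_eq_image]
  exact isCompact_Icc.image continuous_projIcc

end CoveringProof

namespace CoveringProof
variable {E X : Type*} [TopologicalSpace E] [TopologicalSpace X] {p : E → X}

/-- The trivialization at `x` of a covering map. -/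
def triv (hp : IsCoveringMap p) (x : X) [Nonempty (p ⁻¹' {x})] :
    Bundle.Trivialization (p ⁻¹' {x}) p :=
  (hp x).toTrivialization

lemma mem_triv_baseSet (hp : IsCoveringMap p) (x : X) [Nonempty (p ⁻¹' {x})] :
    x ∈ (triv hp x).baseSet :=
  IsEvenlyCovered.mem_toTrivialization_baseSet _

theorem exists_liftCM (hp : IsCoveringMap p) (γ : C(I, X)) (e : E) (he : p e = γ 0) :
    ∃ Γ : I → E, Continuous Γ ∧ Γ 0 = e ∧ ∀ s, p (Γ s) = γ s := by
  obtain ⟨Γ, h1, h2⟩ := hp.exists_path_lifts γ e he.symm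
  exact ⟨Γ, Γ.continuous, h2, fun s => congrFun h1 s⟩

end CoveringProof

namespace CoveringProof
variable {E X : Type*} [TopologicalSpace E] [TopologicalSpace X] {p : E → X}

/-- The lift of a path (as a continuous map) through a covering map. -/
def liftCM (hp : IsCoveringMap p) (γ : C(I, X)) (e : E) (he : p e = γ 0) : I → E :=
  (exists_liftCM hp γ e he).choose

lemma liftCM_continuous (hp : IsCoveringMap p) (γ : C(I, X)) (e : E) (he : p e = γ 0) :
    Continuous (liftCM hp γ e he) := (exists_liftCM hp γ e he).choose_spec.1

@[simp] lemma liftCM_zero (hp : IsCoveringMap p) (γ : C(I, X)) (e : E) (he : p e = γ 0) :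
    liftCM hp γ e he 0 = e := (exists_liftCM hp γ e he).choose_spec.2.1

@[simp] lemma liftCM_proj (hp : IsCoveringMap p) (γ : C(I, X)) (e : E) (he : p e = γ 0)
    (s : I) : p (liftCM hp γ e he s) = γ s := (exists_liftCM hp γ e he).choose_spec.2.2 s

/-- Uniqueness of lifts. -/
theorem liftCM_unique (hp : IsCoveringMap p) {γ : C(I, X)} {e : E} (he : p e = γ 0)
    {Γ : I → E} (hc : Continuous Γ) (h0 : Γ 0 = e) (hl : ∀ s, p (Γ s) = γ s) :
    Γ = liftCM hp γ e he :=
  hp.eq_of_comp_eq hc (liftCM_continuous hp γ e he)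
    (funext fun s => (hl s).trans (liftCM_proj hp γ e he s).symm) 0
    (h0.trans (liftCM_zero hp γ e he).symm)

/-- The lift of a `Path`. -/
def liftPath (hp : IsCoveringMap p) {x y : X} (γ : Path x y) (e : E) (he : p e = x) : I → E :=
  liftCM hp γ.toContinuousMap e (he.trans γ.source.symm)

lemma liftPath_continuous (hp : IsCoveringMap p) {x y : X} (γ : Path x y) (e : E)
    (he : p e = x) : Continuous (liftPath hp γ e he) := liftCM_continuous _ _ _ _

@[simp] lemma liftPath_zero (hp : IsCoveringMap p) {x y : X} (γ : Path x y) (e : E)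
    (he : p e = x) : liftPath hp γ e he 0 = e := liftCM_zero _ _ _ _

@[simp] lemma liftPath_proj (hp : IsCoveringMap p) {x y : X} (γ : Path x y) (e : E)
    (he : p e = x) (s : I) : p (liftPath hp γ e he s) = γ s := liftCM_proj _ _ _ _ s

lemma liftPath_proj_one (hp : IsCoveringMap p) {x y : X} (γ : Path x y) (e : E)
    (he : p e = x) : p (liftPath hp γ e he 1) = y :=
  (liftPath_proj hp γ e he 1).trans γ.target

theorem liftPath_unique (hp : IsCoveringMap p) {x y : X} {γ : Path x y} {e : E} (he : p e = x)
    {Γ : I → E} (hc : Continuous Γ) (h0 : Γ 0 = e) (hl : ∀ s, p (Γ s) = γ s) :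
    Γ = liftPath hp γ e he :=
  liftCM_unique hp _ hc h0 hl

/-- Lifts only depend on the underlying function of the path. -/
theorem liftPath_congr (hp : IsCoveringMap p) {x y x' y' : X} {γ : Path x y} {γ' : Path x' y'}
    (h : ∀ s, γ s = γ' s) {e : E} (he : p e = x) (he' : p e = x') :
    liftPath hp γ e he = liftPath hp γ' e he' :=
  liftPath_unique hp he' (liftPath_continuous hp γ e he) (liftPath_zero hp γ e he)
    (fun s => (liftPath_proj hp γ e he s).trans (h s))

/-- The lift of a path as a bundled `Path`. -/
def liftPathP (hp : IsCoveringMap p) {x y : X} (γ : Path x y) (e : E) (he : p e = x) :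
    Path e (liftPath hp γ e he 1) where
  toFun := liftPath hp γ e he
  continuous_toFun := liftPath_continuous hp γ e he
  source' := liftPath_zero hp γ e he
  target' := rfl

/-- The lift of a constant path is constant. -/
theorem liftPath_refl (hp : IsCoveringMap p) (x : X) (e : E) (he : p e = x) :
    liftPath hp (Path.refl x) e he 1 = e := by
  have : (fun _ : I => e) = liftPath hp (Path.refl x) e he :=
    liftPath_unique hp he continuous_const rfl (fun s => he)
  exact (congrFun this 1).symm

/-- Lifting a concatenation of paths. -/
theorem liftPath_trans (hp : IsCoveringMap p) {x y z : X} (γ : Path x y) (γ' : Path y z)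
    (e : E) (he : p e = x) :
    liftPath hp (γ.trans γ') e he 1
      = liftPath hp γ' (liftPath hp γ e he 1) (liftPath_proj_one hp γ e he) 1 := by
  set Γ := liftPathP hp γ e he
  set Γ' := liftPathP hp γ' (liftPath hp γ e he 1) (liftPath_proj_one hp γ e he)
  have hl : ∀ s, p ((Γ.trans Γ') s) = (γ.trans γ') s := by
    intro s
    rw [Path.trans_apply, Path.trans_apply]
    split_ifs
    · exact liftPath_proj hp γ e he _
    · exact liftPath_proj hp γ' (liftPath hp γ e he 1) (liftPath_proj_one hp γ e he) _
  have := liftPath_unique hp he (Γ.trans Γ').continuous (Γ.trans Γ').source hl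
  have h1 := congrFun this 1
  rw [← h1]
  exact (Γ.trans Γ').target

/-- A lift of a path staying inside an evenly covered set stays in one sheet. -/
theorem liftPath_mem_baseSet (hp : IsCoveringMap p) {x y : X} (γ : Path x y)
    {F : Type*} [TopologicalSpace F] {T : Bundle.Trivialization F p} (hT : ∀ s, γ s ∈ T.baseSet)
    (e : E) (he : p e = x) :
    liftPath hp γ e he 1 = T.toOpenPartialHomeomorph.symm (y, (T e).2) := by
  have hsrc : e ∈ T.source := T.mem_source.mpr (by rw [he, ← γ.source]; exact hT 0)
  have : (fun s => T.toOpenPartialHomeomorph.symm (γ s, (T e).2)) = liftPath hp γ e he := by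
    refine liftPath_unique hp he ?_ ?_ ?_
    · exact T.toOpenPartialHomeomorph.continuousOn_symm.comp_continuous
        ((γ.continuous.prodMk continuous_const)) fun s => T.mem_target.mpr (hT s)
    · have h0 : γ 0 = p e := γ.source.trans he.symm
      rw [h0]
      exact T.symm_apply_mk_proj hsrc
    · intro s
      exact T.proj_symm_apply (T.mem_target.mpr (hT s))
  rw [← congrFun this 1, γ.target]

end CoveringProof


namespace CoveringProof
variable {E X : Type*} [TopologicalSpace E] [TopologicalSpace X] {p : E → X}

theorem liftCM_congr (hp : IsCoveringMap p) {γ γ' : C(I, X)} (h : γ = γ') {e : E}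
    (he : p e = γ 0) (he' : p e = γ' 0) : liftCM hp γ e he = liftCM hp γ' e he' := by
  subst h; rfl

/-- Lifts of homotopic paths (rel endpoints) starting at the same point end
at the same point. -/
theorem liftPath_homotopic (hp : IsCoveringMap p) {x y : X} (γ₀ γ₁ : Path x y)
    (h : γ₀.Homotopic γ₁) (e : E) (he : p e = x) :
    liftPath hp γ₀ e he 1 = liftPath hp γ₁ e he 1 := by
  have h0 : liftPath hp γ₀ e he = hp.liftPath γ₀.toContinuousMap e (γ₀.source.trans he.symm) :=
    (liftPath_unique hp he (hp.liftPath _ e _).continuous (hp.liftPath_zero _ _ _)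
      (fun s => congrFun (hp.liftPath_lifts _ _ _) s)).symm
  have h1 : liftPath hp γ₁ e he = hp.liftPath γ₁.toContinuousMap e (γ₁.source.trans he.symm) :=
    (liftPath_unique hp he (hp.liftPath _ e _).continuous (hp.liftPath_zero _ _ _)
      (fun s => congrFun (hp.liftPath_lifts _ _ _) s)).symm
  rw [h0, h1]
  exact hp.liftPath_apply_one_eq_of_homotopicRel h e _ _

end CoveringProof


namespace CoveringProof
variable {E X : Type*} [TopologicalSpace E] [TopologicalSpace X] {p : E → X}

theorem path_homotopic_cast {x y x' y' : X} {A B : Path x y} (h : A.Homotopic B)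
    (hx : x' = x) (hy : y' = y) : (A.cast hx hy).Homotopic (B.cast hx hy) := by
  subst hx; subst hy
  have hA : A.cast rfl rfl = A := by ext t; rfl
  have hB : B.cast rfl rfl = B := by ext t; rfl
  rwa [hA, hB]

set_option linter.unusedSectionVars false

variable [SimplyConnectedSpace E] [LocallyPathConnectedSpace E]

/-- The candidate deck transformation sending `e₀` to `e₁`, well defined since `E` is
simply connected. -/
noncomputable def deckFun (hp : IsCoveringMap p) (e₀ e₁ : E) (h01 : p e₁ = p e₀) : E → E :=
  fun e => liftPath hp ((PathConnectedSpace.somePath e₀ e).map hp.continuous) e₁ h01 1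

theorem deckFun_eq (hp : IsCoveringMap p) (e₀ e₁ : E) (h01 : p e₁ = p e₀) (e : E)
    (β : Path e₀ e) :
    deckFun hp e₀ e₁ h01 e = liftPath hp (β.map hp.continuous) e₁ h01 1 :=
  liftPath_homotopic hp _ _
    ((SimplyConnectedSpace.paths_homotopic (PathConnectedSpace.somePath e₀ e) β).map
      ⟨p, hp.continuous⟩) e₁ h01

theorem deckFun_proj (hp : IsCoveringMap p) (e₀ e₁ : E) (h01 : p e₁ = p e₀) (e : E) :
    p (deckFun hp e₀ e₁ h01 e) = p e :=
  liftPath_proj_one hp _ e₁ h01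

theorem deckFun_apply_self (hp : IsCoveringMap p) (e₀ e₁ : E) (h01 : p e₁ = p e₀) :
    deckFun hp e₀ e₁ h01 e₀ = e₁ := by
  rw [deckFun_eq hp e₀ e₁ h01 e₀ (Path.refl e₀)]
  have hrefl : (Path.refl e₀).map hp.continuous = Path.refl (p e₀) := by ext t; rfl
  rw [hrefl]
  exact liftPath_refl hp _ e₁ h01

theorem deckFun_continuous (hp : IsCoveringMap p) (e₀ e₁ : E) (h01 : p e₁ = p e₀) :
    Continuous (deckFun hp e₀ e₁ h01) := by
  rw [continuous_iff_continuousAt]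
  intro e
  haveI : Nonempty (p ⁻¹' {p e}) := ⟨⟨e, rfl⟩⟩
  set T := triv hp (p e) with hT
  set O := p ⁻¹' T.baseSet with hO
  have hOopen : IsOpen O := T.open_baseSet.preimage hp.continuous
  have heO : e ∈ O := mem_triv_baseSet hp (p e)
  set V := pathComponentIn O e with hV
  have hVopen : IsOpen V := hOopen.pathComponentIn e
  have hVmem : e ∈ V := mem_pathComponentIn_self heO
  have hVsub : V ⊆ O := pathComponentIn_subset
  have key : ∀ e' ∈ V, deckFun hp e₀ e₁ h01 e'
      = T.toOpenPartialHomeomorph.symm (p e', (T (deckFun hp e₀ e₁ h01 e)).2) := by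
    intro e' he'
    obtain ⟨δ, hδ⟩ : JoinedIn O e e' := he'
    have h1 := deckFun_eq hp e₀ e₁ h01 e' ((PathConnectedSpace.somePath e₀ e).trans δ)
    rw [Path.map_trans _ _ hp.continuous] at h1
    rw [h1, liftPath_trans]
    exact liftPath_mem_baseSet hp (δ.map hp.continuous) (T := T) (fun s => hδ s)
      (deckFun hp e₀ e₁ h01 e) (deckFun_proj hp e₀ e₁ h01 e)
  have hcont : ContinuousOn (fun e' =>
      T.toOpenPartialHomeomorph.symm (p e', (T (deckFun hp e₀ e₁ h01 e)).2)) V := by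
    refine ContinuousOn.comp T.toOpenPartialHomeomorph.continuousOn_symm
      ((hp.continuous.prodMk continuous_const).continuousOn) ?_
    intro e' he'
    exact T.mem_target.mpr (hVsub he')
  exact ((hcont.congr key).continuousAt (hVopen.mem_nhds hVmem))

theorem deckFun_comp (hp : IsCoveringMap p) (e₀ e₁ : E) (h01 : p e₁ = p e₀) (e : E) :
    deckFun hp e₀ e₁ h01 (deckFun hp e₁ e₀ h01.symm e) = e := by
  set γ := PathConnectedSpace.somePath e₁ e with hγ
  set Λ := liftPathP hp (γ.map hp.continuous) e₀ h01.symm with hΛ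
  show deckFun hp e₀ e₁ h01 (liftPath hp (γ.map hp.continuous) e₀ h01.symm 1) = e
  rw [deckFun_eq hp e₀ e₁ h01 _ Λ]
  have hcongr : liftPath hp (Λ.map hp.continuous) e₁ h01
      = liftPath hp (γ.map hp.continuous) e₁ rfl :=
    liftPath_congr hp (fun s => liftPath_proj hp _ e₀ h01.symm s) h01 rfl
  rw [hcongr]
  have huniq : ⇑γ = liftPath hp (γ.map hp.continuous) e₁ rfl :=
    liftPath_unique hp rfl γ.continuous γ.source (fun s => rfl)
  rw [← congrFun huniq 1]
  exact γ.target

/-- The deck transformation sending `e₀` to `e₁`, as a homeomorphism. -/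
noncomputable def deckHomeo (hp : IsCoveringMap p) (e₀ e₁ : E) (h01 : p e₁ = p e₀) :
    E ≃ₜ E where
  toFun := deckFun hp e₀ e₁ h01
  invFun := deckFun hp e₁ e₀ h01.symm
  left_inv e := deckFun_comp hp e₁ e₀ h01.symm e
  right_inv e := deckFun_comp hp e₀ e₁ h01 e
  continuous_toFun := deckFun_continuous hp e₀ e₁ h01
  continuous_invFun := deckFun_continuous hp e₁ e₀ h01.symm

end CoveringProof


/-- For a covering map `p : E → X` with `X` connected and locally path-connected and `E` simply
connected and locally path-connected, the deck transformation group of `p` is isomorphic to the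
fundamental group `π₁(X, x₀)` where `x₀ = p e₀`. -/
theorem deckGroup_mulEquiv_pi1 {E X : Type u} [TopologicalSpace E] [TopologicalSpace X]
    [ConnectedSpace X] [LocallyPathConnectedSpace X]
    {p : E → X} (hp : IsCoveringMap p)
    [SimplyConnectedSpace E] [LocallyPathConnectedSpace E] (e₀ : E) :
    Nonempty (deckGroup p ≃* FundamentalGroup X (p e₀)) := by
  classical
  haveI : PreconnectedSpace E := PathConnectedSpace.connectedSpace.toPreconnectedSpace
  have hx : ∀ h : deckGroup p, p (h.1 e₀) = p e₀ := fun h => h.2 e₀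
  -- the loop in `X` attached to a deck transformation
  set loop : deckGroup p → Path (p e₀) (p e₀) := fun h =>
    ((PathConnectedSpace.somePath e₀ (h.1 e₀)).map hp.continuous).cast rfl (hx h).symm
    with hloop
  set Φ₀ : deckGroup p → FundamentalGroup X (p e₀) := fun h => loopClass (loop h) with hΦ₀
  have lift_loop : ∀ h : deckGroup p,
      CoveringProof.liftPath hp (loop h) e₀ rfl 1 = h.1 e₀ := by
    intro h
    set γ := PathConnectedSpace.somePath e₀ (h.1 e₀) with hγ
    have huniq : ⇑γ = CoveringProof.liftPath hp (loop h) e₀ rfl :=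
      CoveringProof.liftPath_unique hp rfl γ.continuous γ.source (fun s => rfl)
    rw [← congrFun huniq 1]
    exact γ.target
  have loop_spec : ∀ (h : deckGroup p) (β : Path e₀ (h.1 e₀)),
      Path.Homotopic (loop h) ((β.map hp.continuous).cast rfl (hx h).symm) := fun h β =>
    CoveringProof.path_homotopic_cast
      ((SimplyConnectedSpace.paths_homotopic _ β).map ⟨p, hp.continuous⟩) rfl (hx h).symm
  -- Φ₀ is an antihomomorphism
  have Φ₀_mul : ∀ g h : deckGroup p, Φ₀ (g * h) = Φ₀ h * Φ₀ g := by
    intro g h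
    let β : Path e₀ ((g * h).1 e₀) :=
      (PathConnectedSpace.somePath e₀ (g.1 e₀)).trans
        ((PathConnectedSpace.somePath e₀ (h.1 e₀)).map g.1.continuous)
    have hpath : ((β.map hp.continuous).cast rfl (hx (g * h)).symm)
        = (loop g).trans (loop h) := by
      apply Path.ext
      funext t
      show p (β t) = ((loop g).trans (loop h)) t
      show p (((PathConnectedSpace.somePath e₀ (g.1 e₀)).trans
        ((PathConnectedSpace.somePath e₀ (h.1 e₀)).map g.1.continuous)) t)
          = ((loop g).trans (loop h)) t
      rw [Path.trans_apply, Path.trans_apply]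
      split_ifs
      · rfl
      · exact g.2 _
    have h1 : Φ₀ (g * h) = loopClass ((loop g).trans (loop h)) := by
      show (⟦loop (g * h)⟧ : Path.Homotopic.Quotient (p e₀) (p e₀))
        = ⟦(loop g).trans (loop h)⟧
      exact (Quotient.sound (loop_spec (g * h) β)).trans (by rw [hpath])
    have h2 : Φ₀ h * Φ₀ g = loopClass ((loop g).trans (loop h)) := by
      exact (Path.Homotopic.Quotient.mk_trans (loop g) (loop h)).symm
    rw [h1, h2]
  -- Φ₀ is injective
  have Φ₀_inj : Function.Injective Φ₀ := by
    intro g h hgh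
    have hq : (⟦loop g⟧ : Path.Homotopic.Quotient (p e₀) (p e₀)) = ⟦loop h⟧ :=
      hgh
    have hhom : (loop g).Homotopic (loop h) := Quotient.exact hq
    have hee : g.1 e₀ = h.1 e₀ := by
      rw [← lift_loop g, ← lift_loop h]
      exact CoveringProof.liftPath_homotopic hp _ _ hhom e₀ rfl
    have hfun : ⇑g.1 = ⇑h.1 :=
      hp.eq_of_comp_eq g.1.continuous h.1.continuous
        (funext fun e => (g.2 e).trans (h.2 e).symm) e₀ hee
    exact Subtype.ext (Homeomorph.ext (congrFun hfun))
  -- Φ₀ is surjective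
  have Φ₀_surj : Function.Surjective Φ₀ := by
    intro q
    obtain ⟨α, hα⟩ := Quotient.exists_rep (FundamentalGroup.toPath (X := TopCat.of X) q)
    have h01 : p (CoveringProof.liftPath hp α e₀ rfl 1) = p e₀ :=
      CoveringProof.liftPath_proj_one hp α e₀ rfl
    set d : deckGroup p :=
      ⟨CoveringProof.deckHomeo hp e₀ _ h01,
        fun e => CoveringProof.deckFun_proj hp e₀ _ h01 e⟩ with hd
    refine ⟨d, ?_⟩
    have hde : d.1 e₀ = CoveringProof.liftPath hp α e₀ rfl 1 :=
      CoveringProof.deckFun_apply_self hp e₀ _ h01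
    let β : Path e₀ (d.1 e₀) :=
      (CoveringProof.liftPathP hp α e₀ rfl).cast rfl hde
    show (⟦loop d⟧ : Path.Homotopic.Quotient (p e₀) (p e₀)) = q
    have hα' : (⟦α⟧ : Path.Homotopic.Quotient (p e₀) (p e₀)) = q := hα
    rw [← hα']
    refine (Quotient.sound (loop_spec d β)).trans ?_
    refine congrArg _ ?_
    apply Path.ext
    funext t
    exact CoveringProof.liftPath_proj hp α e₀ rfl t
  refine ⟨MulEquiv.ofBijective (MonoidHom.mk' (fun h => (Φ₀ h)⁻¹) ?_) ⟨?_, ?_⟩⟩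
  · intro g h
    show (Φ₀ (g * h))⁻¹ = (Φ₀ g)⁻¹ * (Φ₀ h)⁻¹
    rw [Φ₀_mul, mul_inv_rev]
  · intro g h hgh
    exact Φ₀_inj (inv_injective hgh)
  · intro q
    obtain ⟨h, hh⟩ := Φ₀_surj q⁻¹
    exact ⟨h, by rw [MonoidHom.mk'_apply, hh, inv_inv]⟩
end
end

section
/- Let X be a connected, locally path-connected topological space, and let p : E → X and q : F → X be covering maps with E and F simply connected and locally path-connected. For any e₀ ∈ E and f₀ ∈ F with p(e₀) = q(f₀), there exists a unique homeomorphism h : E ≃ₜ F satisfying q ∘ h = p and h(e₀) = f₀. -/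
open unitInterval Set
set_option maxHeartbeats 1000000

namespace UCdev

variable {X F : Type*} [TopologicalSpace X] [TopologicalSpace F] {q : F → X}

/-- Extend a lift of `γ` defined up to time `a` across `[a, b]`, provided `γ ([a,b])` lies in
the base set of a single trivialization. -/
lemma glue_lift {Z : Type*} [TopologicalSpace Z] (T : Bundle.Trivialization Z q)
    {a b : I} (hab : a ≤ b) (γ : C(I, X))
    (hU : ∀ t, a ≤ t → t ≤ b → γ t ∈ T.baseSet)
    (Γ : C(I, F)) (hl : ∀ t, t ≤ a → q (Γ t) = γ t) :
    ∃ Γ' : C(I, F), (∀ t, t ≤ a → Γ' t = Γ t) ∧ (∀ t, q (Γ' t) = γ (min t b)) ∧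
      (∀ t, a ≤ t → t ≤ b → Γ' t = T.toPartialHomeomorph.symm (γ t, (T (Γ a)).2)) := by
  have hγa : γ a ∈ T.baseSet := hU a le_rfl hab
  have hqa : q (Γ a) = γ a := hl a le_rfl
  have hsrc : Γ a ∈ T.source := T.mem_source.2 (by rw [hqa]; exact hγa)
  set i := (T (Γ a)).2 with hi
  set S : X → F := fun y => T.toPartialHomeomorph.symm (y, i) with hS
  have hScont : ContinuousOn S T.baseSet := by
    apply T.toPartialHomeomorph.continuousOn_symm.comp (Continuous.continuousOn (by continuity))
    intro y hy
    exact T.mem_target.2 hy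
  have hqS : ∀ y ∈ T.baseSet, q (S y) = y := fun y hy => T.proj_symm_apply' hy
  have hSa : S (γ a) = Γ a := by
    rw [hS]; simp only [← hqa]
    exact T.symm_apply_mk_proj hsrc
  have hclamp : ∀ t : I, a ≤ max a (min t b) ∧ max a (min t b) ≤ b :=
    fun t => ⟨le_max_left _ _, max_le hab (min_le_right _ _)⟩
  set g : I → F := fun t => S (γ (max a (min t b))) with hg
  have hgcont : Continuous g := by
    apply hScont.comp_continuous
      (γ.continuous.comp (continuous_const.max (continuous_id.min continuous_const)))
    intro t
    exact hU _ (hclamp t).1 (hclamp t).2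
  have hga : g a = Γ a := by
    rw [hg]; simp only [min_eq_left hab, max_self]; exact hSa
  refine ⟨⟨fun t => if t ≤ a then Γ t else g t, ?_⟩, ?_, ?_, ?_⟩
  · exact Continuous.if_le Γ.continuous hgcont continuous_id continuous_const
      (fun t ht => by rw [ht, hga])
  · intro t ht
    simp [ht]
  · intro t
    by_cases ht : t ≤ a
    · simp only [ContinuousMap.coe_mk, if_pos ht]
      rw [hl t ht, min_eq_left (ht.trans hab)]
    · simp only [ContinuousMap.coe_mk, if_neg ht]
      push_neg at ht
      have h1 : a ≤ min t b := le_min ht.le hab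
      rw [hg]
      rw [hqS _ (hU _ (le_max_left _ _) (hclamp t).2), max_eq_right h1]
  · intro t h1 h2
    by_cases ht : t ≤ a
    · have : t = a := le_antisymm ht h1
      subst this
      simp only [ContinuousMap.coe_mk, if_pos le_rfl]
      exact hSa.symm
    · simp only [ContinuousMap.coe_mk, if_neg ht, hg]
      rw [min_eq_left h2, max_eq_right h1]

/-- Path lifting for covering maps. -/
theorem exists_path_lift (hq : IsCoveringMap q) (γ : C(I, X)) (f₀ : F) (h0 : q f₀ = γ 0) :
    ∃ Γ : C(I, F), Γ 0 = f₀ ∧ ∀ t, q (Γ t) = γ t := by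
  set A : Set ℝ := {x | ∃ hx : x ∈ Set.Icc (0:ℝ) 1,
    ∃ Γ : C(I, F), Γ 0 = f₀ ∧ ∀ t, q (Γ t) = γ (min t ⟨x, hx⟩)} with hA
  have h0A : (0 : ℝ) ∈ A := by
    refine ⟨⟨le_rfl, zero_le_one⟩, ContinuousMap.const I f₀, rfl, fun t => ?_⟩
    have : min t (⟨0, le_rfl, zero_le_one⟩ : I) = ⟨0, le_rfl, zero_le_one⟩ :=
      min_eq_right (show ((⟨0, le_rfl, zero_le_one⟩ : I) : ℝ) ≤ (t : ℝ) from t.2.1)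
    rw [this]
    exact h0
  have hbdd : BddAbove A := ⟨1, fun x hx => hx.1.2⟩
  have hne : A.Nonempty := ⟨0, h0A⟩
  set c : ℝ := sSup A with hc
  have hc0 : 0 ≤ c := le_csSup hbdd h0A
  have hc1 : c ≤ 1 := csSup_le hne fun x hx => hx.1.2
  set cI : I := ⟨c, hc0, hc1⟩ with hcI
  haveI : Nonempty ↑(q ⁻¹' {γ cI}) := by
    obtain ⟨Γ₁, hΓ₁, -⟩ := hq.exists_path_lifts γ f₀ h0.symm
    exact ⟨⟨Γ₁ cI, congrFun hΓ₁ cI⟩⟩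
  set T := (hq (γ cI)).toTrivialization with hT
  have hmem : γ cI ∈ T.baseSet := IsEvenlyCovered.mem_toTrivialization_baseSet _
  have hopen : IsOpen (γ ⁻¹' T.baseSet) := T.open_baseSet.preimage γ.continuous
  obtain ⟨ε, hε, hball⟩ := Metric.isOpen_iff.mp hopen cI hmem
  have hball' : ∀ t : I, |(t : ℝ) - c| < ε → γ t ∈ T.baseSet := by
    intro t ht
    exact hball (by simpa [Metric.mem_ball, Subtype.dist_eq, Real.dist_eq] using ht)
  obtain ⟨a', ha'A, ha'⟩ := exists_lt_of_lt_csSup hne (show c - ε/2 < c by linarith)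
  obtain ⟨haI, Γ, hΓ0, hΓ⟩ := ha'A
  have hac : a' ≤ c := le_csSup hbdd ⟨haI, Γ, hΓ0, hΓ⟩
  set b' : ℝ := min 1 (c + ε/2) with hb'
  have hbI : b' ∈ Set.Icc (0:ℝ) 1 := ⟨le_min zero_le_one (by linarith), min_le_left _ _⟩
  set aI : I := ⟨a', haI⟩
  set bI : I := ⟨b', hbI⟩
  have hab : aI ≤ bI := le_min haI.2 (by linarith)
  have hU : ∀ t, aI ≤ t → t ≤ bI → γ t ∈ T.baseSet := by
    intro t h1 h2
    apply hball'
    have h1' : a' ≤ (t : ℝ) := h1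
    have h2' : (t : ℝ) ≤ b' := h2
    have h2'' : (t : ℝ) ≤ c + ε/2 := h2'.trans (min_le_right _ _)
    rw [abs_lt]
    constructor <;> linarith
  have hl : ∀ t, t ≤ aI → q (Γ t) = γ t := by
    intro t ht
    rw [hΓ t, min_eq_left ht]
  obtain ⟨Γ', hΓ'a, hΓ'q, -⟩ := glue_lift T hab γ hU Γ hl
  have hΓ'0 : Γ' 0 = f₀ := by rw [hΓ'a 0 haI.1, hΓ0]
  have hbA : b' ∈ A := ⟨hbI, Γ', hΓ'0, hΓ'q⟩
  have hbc : b' ≤ c := le_csSup hbdd hbA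
  have hc1' : c = 1 := by
    by_contra hne1
    have hlt : c < 1 := lt_of_le_of_ne hc1 hne1
    have : c < b' := lt_min hlt (by linarith)
    linarith
  have hb1 : b' = 1 := by rw [hb', hc1']; exact min_eq_left (by linarith)
  refine ⟨Γ', hΓ'0, fun t => ?_⟩
  rw [hΓ'q t, min_eq_left]
  exact show (t:ℝ) ≤ b' by rw [hb1]; exact t.2.2

theorem lift_unique (hq : IsCoveringMap q) (Γ₁ Γ₂ : C(I, F))
    (h : ∀ t, q (Γ₁ t) = q (Γ₂ t)) (h0 : Γ₁ 0 = Γ₂ 0) : ∀ t, Γ₁ t = Γ₂ t :=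
  congrFun (hq.eq_of_comp_eq Γ₁.continuous Γ₂.continuous (funext h) 0 h0)

/-- The canonical lift of a path. -/
noncomputable def theLift (hq : IsCoveringMap q) (γ : C(I, X)) (f₀ : F) (h0 : q f₀ = γ 0) :
    C(I, F) := (exists_path_lift hq γ f₀ h0).choose

theorem theLift_zero (hq : IsCoveringMap q) (γ : C(I, X)) (f₀ : F) (h0 : q f₀ = γ 0) :
    theLift hq γ f₀ h0 0 = f₀ := (exists_path_lift hq γ f₀ h0).choose_spec.1

theorem theLift_proj (hq : IsCoveringMap q) (γ : C(I, X)) (f₀ : F) (h0 : q f₀ = γ 0) :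
    ∀ t, q (theLift hq γ f₀ h0 t) = γ t := (exists_path_lift hq γ f₀ h0).choose_spec.2


/-- Gluing continuity on a product of a set with two adjacent intervals. -/
lemma continuousOn_prod_split {Y Z : Type*} [TopologicalSpace Y] [TopologicalSpace Z]
    {f : Y × I → Z} {W : Set Y} {a b : I} (hab : a ≤ b)
    (h₁ : ContinuousOn f (W ×ˢ Iic a)) (h₂ : ContinuousOn f (W ×ˢ Icc a b)) :
    ContinuousOn f (W ×ˢ Iic b) := by
  have hsplit : W ×ˢ Iic b = (W ×ˢ Iic a) ∪ (W ×ˢ Icc a b) := by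
    rw [← Set.prod_union, Set.Iic_union_Icc_eq_Iic hab]
  rw [hsplit]
  intro z hz
  have hzW : z.1 ∈ W := by rcases hz with h | h <;> exact h.1
  have hzb : z.2 ≤ b := by
    rcases hz with h | h
    · exact h.2.trans hab
    · exact h.2.2
  have c₁ : ContinuousWithinAt f (W ×ˢ Iic a) z := by
    by_cases hza : z.2 ≤ a
    · exact h₁ z ⟨hzW, hza⟩
    · apply continuousWithinAt_of_notMem_closure
      intro hcl
      have : z ∈ (univ ×ˢ Iic a : Set (Y × I)) :=
        closure_minimal (Set.prod_mono (subset_univ W) le_rfl.subset)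
          (isClosed_univ.prod isClosed_Iic) hcl
      exact hza this.2
  have c₂ : ContinuousWithinAt f (W ×ˢ Icc a b) z := by
    by_cases hza : a ≤ z.2
    · exact h₂ z ⟨hzW, hza, hzb⟩
    · apply continuousWithinAt_of_notMem_closure
      intro hcl
      have : z ∈ (univ ×ˢ Icc a b : Set (Y × I)) :=
        closure_minimal (Set.prod_mono (subset_univ W) le_rfl.subset)
          (isClosed_univ.prod isClosed_Icc) hcl
      exact hza this.2.1
  exact c₁.union c₂

/-- Homotopy (square) lifting for covering maps. -/
theorem square_lift (hq : IsCoveringMap q) (H : C(I × I, X)) (f₀ : F)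
    (h0 : ∀ s, q f₀ = H (s, 0)) :
    ∃ G : C(I × I, F), (∀ s, G (s, 0) = f₀) ∧ ∀ z, q (G z) = H z := by
  classical
  set G0 : I → C(I, F) := fun s => theLift hq (H.curry s) f₀ (by simpa using h0 s) with hG0
  set G' : I × I → F := fun z => G0 z.1 z.2 with hG'
  have hproj : ∀ z : I × I, q (G' z) = H z := by
    intro z
    have := theLift_proj hq (H.curry z.1) f₀ (by simpa using h0 z.1) z.2
    simpa using this
  have hzero : ∀ s, G' (s, 0) = f₀ := fun s => theLift_zero hq _ _ _
  haveI hfib : ∀ z, Nonempty ↑(q ⁻¹' {H z}) := fun z => ⟨⟨G' z, hproj z⟩⟩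
  set A : Set ℝ := {x | ∃ hx : x ∈ Set.Icc (0:ℝ) 1,
    ContinuousOn G' (univ ×ˢ Iic (⟨x, hx⟩ : I))} with hA
  have h0A : (0 : ℝ) ∈ A := by
    refine ⟨⟨le_rfl, zero_le_one⟩, ?_⟩
    apply continuousOn_const (c := f₀) |>.congr
    rintro ⟨z1, z2⟩ hz
    have hz2 : z2 = 0 := le_antisymm hz.2 (by exact z2.2.1)
    rw [hz2]
    exact hzero z1
  have hbdd : BddAbove A := ⟨1, fun x hx => hx.1.2⟩
  have hne : A.Nonempty := ⟨0, h0A⟩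
  set c : ℝ := sSup A with hc
  have hc0 : 0 ≤ c := le_csSup hbdd h0A
  have hc1 : c ≤ 1 := csSup_le hne fun x hx => hx.1.2
  set cI : I := ⟨c, hc0, hc1⟩ with hcI
  have key : ∀ s₀ : I, ∃ (W : Set I) (ε : ℝ), IsOpen W ∧ s₀ ∈ W ∧ 0 < ε ∧
      ∀ s ∈ W, ∀ t : I, |(t : ℝ) - c| < ε →
        H (s, t) ∈ (hq (H (s₀, cI))).toTrivialization.baseSet := by
    intro s₀
    set T := (hq (H (s₀, cI))).toTrivialization
    have hmem : H (s₀, cI) ∈ T.baseSet := IsEvenlyCovered.mem_toTrivialization_baseSet _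
    have hopen : IsOpen (H ⁻¹' T.baseSet) := T.open_baseSet.preimage H.continuous
    obtain ⟨U, V, hUo, hVo, hsU, hcV, hUV⟩ := isOpen_prod_iff.mp hopen s₀ cI hmem
    obtain ⟨ε, hε, hball⟩ := Metric.isOpen_iff.mp hVo cI hcV
    refine ⟨U, ε, hUo, hsU, hε, fun s hs t ht => ?_⟩
    exact hUV (Set.mk_mem_prod hs (hball
      (by simpa [Metric.mem_ball, Subtype.dist_eq, Real.dist_eq] using ht)))
  choose W εf hWo hWs hεf hWball using key
  obtain ⟨S, hS⟩ := isCompact_univ.elim_finite_subcover W hWo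
    (fun s _ => Set.mem_iUnion.2 ⟨s, hWs s⟩)
  have hSne : S.Nonempty := by
    by_contra hS0
    rw [Finset.not_nonempty_iff_eq_empty] at hS0
    have := hS (mem_univ (0 : I))
    simp [hS0] at this
  set ε : ℝ := S.inf' hSne εf with hε
  have hεpos : 0 < ε := (Finset.lt_inf'_iff hSne).2 fun s _ => hεf s
  obtain ⟨a', ha'A, ha'⟩ := exists_lt_of_lt_csSup hne (show c - ε/2 < c by linarith)
  obtain ⟨haI, haCont⟩ := ha'A
  have hac : a' ≤ c := le_csSup hbdd ⟨haI, haCont⟩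
  set b' : ℝ := min 1 (c + ε/2) with hb'
  have hbI : b' ∈ Set.Icc (0:ℝ) 1 := ⟨le_min zero_le_one (by linarith), min_le_left _ _⟩
  set aI : I := ⟨a', haI⟩
  set bI : I := ⟨b', hbI⟩
  have hab : aI ≤ bI := le_min haI.2 (by linarith)
  have htba : ∀ t : I, aI ≤ t → t ≤ bI → |(t : ℝ) - c| < ε := by
    intro t h1 h2
    have h1' : a' ≤ (t : ℝ) := h1
    have h2' : (t : ℝ) ≤ b' := h2
    have h2'' : (t : ℝ) ≤ c + ε/2 := h2'.trans (min_le_right _ _)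
    rw [abs_lt]; constructor <;> linarith
  have hga : Continuous (fun s => G' (s, aI)) := by
    apply haCont.comp_continuous (Continuous.prodMk_left aI)
    intro s
    exact ⟨mem_univ _, mem_Iic.2 le_rfl⟩
  have h0a : (0 : I) ≤ aI := by exact haI.1
  have hlocal : ∀ s₁ : I, ∃ W' : Set I, IsOpen W' ∧ s₁ ∈ W' ∧
      ContinuousOn G' (W' ×ˢ Iic bI) := by
    intro s₁
    obtain ⟨s₀, hs₀S, hs₁W⟩ : ∃ s₀ ∈ S, s₁ ∈ W s₀ := by
      have := hS (mem_univ s₁)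
      simpa using this
    set T := (hq (H (s₀, cI))).toTrivialization with hT
    have hU : ∀ s ∈ W s₀, ∀ t, aI ≤ t → t ≤ bI → H (s, t) ∈ T.baseSet := by
      intro s hs t h1 h2
      apply hWball s₀ s hs t
      calc |(t:ℝ) - c| < ε := htba t h1 h2
        _ ≤ εf s₀ := Finset.inf'_le _ hs₀S
    have hsrc : Set.MapsTo (fun s => G' (s, aI)) (W s₀) T.source := fun s hs =>
      T.mem_source.2 (by rw [hproj (s, aI)]; exact hU s hs aI le_rfl hab)
    set j : I → ↥(q ⁻¹' {H (s₀, cI)}) := fun s => (T (G' (s, aI))).2 with hj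
    haveI hdisc : DiscreteTopology ↥(q ⁻¹' {H (s₀, cI)}) := (hq (H (s₀, cI))).1
    have hjcont : ContinuousOn j (W s₀) := by
      have h1 : ContinuousOn (⇑T ∘ fun s => G' (s, aI)) (W s₀) :=
        T.continuousOn_toFun.comp hga.continuousOn hsrc
      exact continuous_snd.comp_continuousOn h1
    set W'' := W s₀ ∩ j ⁻¹' {j s₁} with hW''def
    have hW''o : IsOpen W'' := hjcont.isOpen_inter_preimage (hWo s₀) (isOpen_discrete _)
    have hs₁W'' : s₁ ∈ W'' := ⟨hs₁W, rfl⟩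
    have hformula : ∀ s ∈ W'', ∀ t : I, aI ≤ t → t ≤ bI →
        G' (s, t) = T.toPartialHomeomorph.symm (H (s, t), j s₁) := by
      intro s hs t h1 h2
      obtain ⟨Γ', hΓ'a, hΓ'q, hΓ'f⟩ := glue_lift T hab (H.curry s)
        (fun u hu1 hu2 => by simpa using hU s hs.1 u hu1 hu2) (G0 s)
        (fun u _ => by simpa using hproj (s, u))
      have hstop : ∀ u, Γ' u = (G0 s).comp ⟨fun v : I => min v bI, continuous_id.min continuous_const⟩ u := by
        apply lift_unique hq Γ' ((G0 s).comp ⟨fun v : I => min v bI, continuous_id.min continuous_const⟩)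
        · intro u
          rw [hΓ'q u]
          simp only [ContinuousMap.comp_apply, ContinuousMap.coe_mk]
          rw [show q ((G0 s) (min u bI)) = H (s, min u bI) from hproj (s, min u bI)]
          simp
        · rw [hΓ'a 0 h0a]
          simp only [ContinuousMap.comp_apply, ContinuousMap.coe_mk]
          congr 1
          exact (min_eq_left (show ((0:I)) ≤ bI by exact hbI.1)).symm
      have hGt : G' (s, t) = Γ' t := by
        rw [hstop t]
        simp only [ContinuousMap.comp_apply, ContinuousMap.coe_mk]
        rw [min_eq_left h2]
      have hjs : (T ((G0 s) aI)).2 = j s₁ := Set.mem_singleton_iff.mp hs.2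
      rw [hGt, hΓ'f t h1 h2, hjs]
      simp
    refine ⟨W'', hW''o, hs₁W'', ?_⟩
    apply continuousOn_prod_split hab
    · exact haCont.mono (Set.prod_mono (subset_univ _) subset_rfl)
    · have hsec : ContinuousOn (fun z : I × I => T.toPartialHomeomorph.symm (H z, j s₁))
          (W'' ×ˢ Icc aI bI) := by
        apply T.toPartialHomeomorph.continuousOn_symm.comp
          ((H.continuous.prodMk continuous_const).continuousOn)
        intro z hz
        exact T.mem_target.2 (hU z.1 hz.1.1 z.2 hz.2.1 hz.2.2)
      exact hsec.congr (fun z hz => hformula z.1 hz.1 z.2 hz.2.1 hz.2.2)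
  have hbA : b' ∈ A := by
    refine ⟨hbI, ?_⟩
    apply continuousOn_of_locally_continuousOn
    intro z hz
    obtain ⟨W', hW'o, hzW', hcont⟩ := hlocal z.1
    refine ⟨W' ×ˢ univ, hW'o.prod isOpen_univ, ⟨hzW', mem_univ _⟩, ?_⟩
    have heq : (univ ×ˢ Iic bI : Set (I × I)) ∩ (W' ×ˢ univ) = W' ×ˢ Iic bI := by
      ext w
      simp only [Set.mem_inter_iff, Set.mem_prod, mem_univ, true_and, and_true]
      exact and_comm
    rw [heq]; exact hcont
  have hbc : b' ≤ c := le_csSup hbdd hbA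
  have hceq1 : c = 1 := by
    by_contra hne1
    have hlt : c < 1 := lt_of_le_of_ne hc1 hne1
    have : c < b' := lt_min hlt (by linarith)
    linarith
  have hb1 : b' = 1 := by rw [hb', hceq1]; exact min_eq_left (by linarith)
  have hIic : (univ ×ˢ Iic bI : Set (I × I)) = univ := by
    ext z
    simp only [Set.mem_prod, mem_univ, true_and, mem_Iic, iff_true]
    exact show (z.2 : ℝ) ≤ b' by rw [hb1]; exact z.2.2.2
  have hcontG : Continuous G' := by
    rw [← continuousOn_univ, ← hIic]
    exact hbA.2
  exact ⟨⟨G', hcontG⟩, hzero, hproj⟩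


/-- Monodromy: lifts of homotopic paths starting at the same point end at the same point. -/
theorem monodromy (hq : IsCoveringMap q) {x y : X} {γ₀ γ₁ : Path x y}
    (h : γ₀.Homotopic γ₁) (f₀ : F) (hf : q f₀ = x)
    (Γ₀ Γ₁ : C(I, F)) (h₀0 : Γ₀ 0 = f₀) (h₁0 : Γ₁ 0 = f₀)
    (hp₀ : ∀ t, q (Γ₀ t) = γ₀ t) (hp₁ : ∀ t, q (Γ₁ t) = γ₁ t) : Γ₀ 1 = Γ₁ 1 := by
  obtain ⟨H⟩ := h
  have h00 : (0 : I) ∈ ({0, 1} : Set I) := Set.mem_insert _ _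
  have h11 : (1 : I) ∈ ({0, 1} : Set I) := Set.mem_insert_of_mem _ rfl
  obtain ⟨G, hG0, hGp⟩ := square_lift hq H.toContinuousMap f₀ (fun s => by
    have h1 : (H.toContinuousMap) (s, 0) = γ₀ 0 := H.eq_fst s h00
    rw [h1, γ₀.source, hf])
  have hgconst : G (0, 1) = G (1, 1) := by
    refine hq.const_of_comp (G.continuous.comp (continuous_id.prodMk continuous_const))
      (fun a a' => ?_) 0 1
    have ha : q (G (a, 1)) = γ₀ 1 := by rw [hGp (a, 1)]; exact H.eq_fst a h11
    have ha' : q (G (a', 1)) = γ₀ 1 := by rw [hGp (a', 1)]; exact H.eq_fst a' h11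
    show q (G (a, 1)) = q (G (a', 1))
    rw [ha, ha']
  have h0slice : ∀ t, G.comp ⟨fun t => ((0 : I), t), Continuous.prodMk_right 0⟩ t = Γ₀ t := by
    apply lift_unique hq
    · intro t
      simp only [ContinuousMap.comp_apply, ContinuousMap.coe_mk]
      rw [hGp ((0 : I), t), hp₀ t]
      exact H.apply_zero t
    · simp only [ContinuousMap.comp_apply, ContinuousMap.coe_mk]
      rw [hG0 0, h₀0]
  have h1slice : ∀ t, G.comp ⟨fun t => ((1 : I), t), Continuous.prodMk_right 1⟩ t = Γ₁ t := by
    apply lift_unique hq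
    · intro t
      simp only [ContinuousMap.comp_apply, ContinuousMap.coe_mk]
      rw [hGp ((1 : I), t), hp₁ t]
      exact H.apply_one t
    · simp only [ContinuousMap.comp_apply, ContinuousMap.coe_mk]
      rw [hG0 1, h₁0]
  have e0 := h0slice 1
  have e1 := h1slice 1
  simp only [ContinuousMap.comp_apply, ContinuousMap.coe_mk] at e0 e1
  rw [← e0, ← e1, hgconst]

/-- The lifting criterion (special case): a continuous map from a simply connected, locally
path-connected space lifts through a covering map, with a prescribed basepoint. -/
theorem exists_lift_of_simplyConnected {E : Type*} [TopologicalSpace E]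
    [SimplyConnectedSpace E] [LocallyPathConnectedSpace E]
    (hq : IsCoveringMap q) {p : E → X} (hp : Continuous p)
    (e₀ : E) (f₀ : F) (hb : p e₀ = q f₀) :
    ∃ h : E → F, Continuous h ∧ (∀ e, q (h e) = p e) ∧ h e₀ = f₀ := by
  set α : ∀ e : E, Path e₀ e := fun e => (PathConnectedSpace.joined e₀ e).somePath with hα
  set pm : E → C(I, X) := fun e => ((α e).map hp).toContinuousMap with hpmdef
  have hpm : ∀ e t, pm e t = p (α e t) := fun e t => rfl
  have h0 : ∀ e, q f₀ = pm e 0 := fun e => by rw [hpm e 0, (α e).source, hb]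
  set hmap : E → F := fun e => theLift hq (pm e) f₀ (h0 e) 1 with hhmap
  have wellDef : ∀ (e : E) (β : Path e₀ e) (Γ : C(I, F)), Γ 0 = f₀ →
      (∀ t, q (Γ t) = p (β t)) → Γ 1 = hmap e := by
    intro e β Γ hΓ0 hΓ
    have hδ : (β.map hp).Homotopic ((α e).map hp) :=
      Path.Homotopic.map (SimplyConnectedSpace.paths_homotopic β (α e)) ⟨p, hp⟩
    exact monodromy hq hδ f₀ hb.symm Γ (theLift hq (pm e) f₀ (h0 e)) hΓ0
      (theLift_zero hq (pm e) f₀ (h0 e)) (fun t => hΓ t)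
      (fun t => theLift_proj hq (pm e) f₀ (h0 e) t)
  have hproj : ∀ e, q (hmap e) = p e := by
    intro e
    rw [hhmap]
    simp only
    rw [theLift_proj hq (pm e) f₀ (h0 e) 1, hpm e 1, (α e).target]
  have hbase : hmap e₀ = f₀ := by
    have := wellDef e₀ (Path.refl e₀) (ContinuousMap.const I f₀)
      rfl (fun t => by simp [hb])
    exact this.symm
  have hcont : Continuous hmap := by
    rw [continuous_iff_continuousAt]
    intro e₁
    haveI : Nonempty ↑(q ⁻¹' {p e₁}) := ⟨⟨hmap e₁, hproj e₁⟩⟩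
    set T := (hq (p e₁)).toTrivialization with hT
    have hm : p e₁ ∈ T.baseSet := IsEvenlyCovered.mem_toTrivialization_baseSet _
    have hU₀ : p ⁻¹' T.baseSet ∈ nhds e₁ := (T.open_baseSet.preimage hp).mem_nhds hm
    obtain ⟨V, ⟨hV𝓝, hVpc⟩, hVsub⟩ := (path_connected_basis e₁).mem_iff.mp hU₀
    set i := (T (hmap e₁)).2 with hi
    have hsrc : hmap e₁ ∈ T.source := T.mem_source.2 (by rw [hproj e₁]; exact hm)
    have hsa : T.toPartialHomeomorph.symm (p e₁, i) = hmap e₁ := by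
      have h2 := T.symm_apply_mk_proj hsrc
      rw [hproj e₁] at h2
      exact h2
    have hclaim : ∀ e ∈ V, hmap e = T.toPartialHomeomorph.symm (p e, i) := by
      intro e he
      set J := hVpc.joinedIn e₁ (mem_of_mem_nhds hV𝓝) e he with hJ
      set β := J.somePath with hβ
      have hsec : ∀ t, p (β t) ∈ T.baseSet := fun t => hVsub (J.somePath_mem t)
      set Pβ : Path (hmap e₁) (T.toPartialHomeomorph.symm (p e, i)) :=
        { toFun := fun t => T.toPartialHomeomorph.symm (p (β t), i)
          continuous_toFun := T.toPartialHomeomorph.continuousOn_symm.comp_continuous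
            (((hp.comp β.continuous).prodMk continuous_const))
            (fun t => T.mem_target.2 (hsec t))
          source' := by
            show T.toPartialHomeomorph.symm (p (β 0), i) = hmap e₁
            rw [β.source]; exact hsa
          target' := by
            show T.toPartialHomeomorph.symm (p (β 1), i) = T.toPartialHomeomorph.symm (p e, i)
            rw [β.target] } with hPβ
      set P₁ : Path f₀ (hmap e₁) :=
        { toFun := theLift hq (pm e₁) f₀ (h0 e₁)
          continuous_toFun := (theLift hq (pm e₁) f₀ (h0 e₁)).continuous
          source' := theLift_zero hq (pm e₁) f₀ (h0 e₁)
          target' := rfl } with hP₁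
      set Γp := P₁.trans Pβ with hΓp
      have hΓq : ∀ t, q (Γp t) = p (((α e₁).trans β) t) := by
        intro t
        rw [hΓp, Path.trans_apply, Path.trans_apply]
        split_ifs with ht
        · exact (theLift_proj hq (pm e₁) f₀ (h0 e₁) _).trans (hpm e₁ _)
        · exact T.proj_symm_apply' (hsec _)
      have hwd := wellDef e ((α e₁).trans β) ⟨Γp, Γp.continuous⟩ Γp.source hΓq
      have : Γp 1 = hmap e := hwd
      rw [← this, Γp.target]
    have hev : hmap =ᶠ[nhds e₁] fun e => T.toPartialHomeomorph.symm (p e, i) :=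
      Filter.eventuallyEq_of_mem hV𝓝 hclaim
    have hsc : ContinuousAt (fun e => T.toPartialHomeomorph.symm (p e, i)) e₁ := by
      have hco : ContinuousOn (fun e => T.toPartialHomeomorph.symm (p e, i))
          (p ⁻¹' T.baseSet) :=
        T.toPartialHomeomorph.continuousOn_symm.comp
          ((hp.prodMk continuous_const).continuousOn)
          (fun e he => T.mem_target.2 he)
      exact hco.continuousAt hU₀
    exact hsc.congr hev.symm
  exact ⟨hmap, hcont, hproj, hbase⟩

end UCdev

universe u

/-- Any two pointed universal coverings of a connected, locally path-connected space are
uniquely isomorphic: given covering maps `p : E → X` and `q : F → X` with `E`, `F` simply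
connected and locally path-connected, and points `e₀`, `f₀` over the same point of `X`, there
is a unique homeomorphism `h : E ≃ₜ F` with `q ∘ h = p` and `h e₀ = f₀`. -/
theorem universal_coverings_unique_iso {X E F : Type u}
    [TopologicalSpace X] [TopologicalSpace E] [TopologicalSpace F]
    [ConnectedSpace X] [LocallyPathConnectedSpace X]
    {p : E → X} {q : F → X} (hp : IsCoveringMap p) (hq : IsCoveringMap q)
    [SimplyConnectedSpace E] [LocallyPathConnectedSpace E]
    [SimplyConnectedSpace F] [LocallyPathConnectedSpace F]
    (e₀ : E) (f₀ : F) (hbase : p e₀ = q f₀) :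
    ∃! h : E ≃ₜ F, (∀ e, q (h e) = p e) ∧ h e₀ = f₀ := by

  obtain ⟨h, hc, hproj, hb⟩ := UCdev.exists_lift_of_simplyConnected hq hp.continuous e₀ f₀ hbase
  obtain ⟨k, kc, kproj, kb⟩ := UCdev.exists_lift_of_simplyConnected hp hq.continuous f₀ e₀ hbase.symm
  have hPE : PreconnectedSpace E := inferInstance
  have hPF : PreconnectedSpace F := inferInstance
  have hkh : ∀ e, k (h e) = e := by
    have := hp.eq_of_comp_eq (kc.comp hc) continuous_id
      (funext fun e => by simp [Function.comp, kproj, hproj]) e₀ (by simp [hb, kb])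
    exact fun e => congrFun this e
  have hhk : ∀ f, h (k f) = f := by
    have := hq.eq_of_comp_eq (hc.comp kc) continuous_id
      (funext fun f => by simp [Function.comp, hproj, kproj]) f₀ (by simp [hb, kb])
    exact fun f => congrFun this f
  refine ⟨⟨⟨h, k, hkh, hhk⟩, hc, kc⟩, ⟨hproj, hb⟩, ?_⟩
  rintro H' ⟨hproj', hb'⟩
  apply Homeomorph.ext
  intro e
  have := hq.eq_of_comp_eq H'.continuous hc
    (funext fun e => (hproj' e).trans (hproj e).symm) e₀ (hb'.trans hb.symm)
  exact congrFun this e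
end
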